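/- arXiv:1312.3357 — 9 statements merged into one kernel-verified Lean document; each statement's English description precedes it below -/
import Mathlib

section
/- Effect of adding a mean on chaos coefficients: Let 𝕋 be a finite index set, ψ a kernel with multi-linear polynomial Ψ, μ = (μ_i)_{i∈𝕋} real numbers with c_μ := Σ_{i∈𝕋} μ_i², and let Ψ̃(x) := Ψ(x+μ) with kernel ψ̃(J) = Σ_{I⊇J} ψ(I)·μ^{I∖J}. Then for every ε > 0: (i) C_{Ψ̃} := Σ_{J⊆𝕋} ψ̃(J)² ≤ e^{c_μ/ε}·C_{Ψ^{(ε)}}, where C_{Ψ^{(ε)}} = Σ_{I⊆𝕋} (1+ε)^{|I|}·ψ(I)²; and (ii) for every j ∈ 𝕋, Inf_j[Ψ̃] := Σ_{J∋j} ψ̃(J)² ≤ e^{c_μ/ε}·Inf_j[Ψ^{(ε)}], where Inf_j[Ψ^{(ε)}] = Σ_{I∋j} (1+ε)^{|I|}·ψ(I)². -/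
open Finset

section Aux

variable {ι : Type*} [Fintype ι] [DecidableEq ι]

/-- Reindex a sum over supersets of `J` by `I ↦ I \ J`. -/
private lemma sum_superset_reindex (J : Finset ι) (f : Finset ι → ℝ) :
    ∑ I ∈ univ.filter (fun I : Finset ι => J ⊆ I), f (I \ J)
      = ∑ K ∈ (univ \ J).powerset, f K := by
  refine Finset.sum_nbij' (fun I => I \ J) (fun K => K ∪ J) ?_ ?_ ?_ ?_ ?_
  · intro I hI
    exact mem_powerset.2 (sdiff_subset_sdiff (subset_univ _) le_rfl)
  · intro K hK
    simp [mem_filter]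
  · intro I hI
    simp only [mem_filter, mem_univ, true_and] at hI
    exact sdiff_union_of_subset hI
  · intro K hK
    have hd : Disjoint K J := Finset.disjoint_left.2 fun a haK haJ =>
      (Finset.mem_sdiff.1 (mem_powerset.1 hK haK)).2 haJ
    exact union_sdiff_cancel_right hd
  · intro I hI; rfl

/-- `∑_{J ⊆ I} ε^{|I \ J|} = (1+ε)^{|I|}`. -/
private lemma sum_pow_sdiff (ε : ℝ) (I : Finset ι) :
    ∑ J ∈ I.powerset, ε ^ (I \ J).card = (1 + ε) ^ I.card := by
  have h1 : ∑ J ∈ I.powerset, ε ^ (I \ J).card = ∑ K ∈ I.powerset, ε ^ K.card := by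
    refine Finset.sum_nbij' (fun J => I \ J) (fun K => I \ K) ?_ ?_ ?_ ?_ ?_
    · intro J hJ; exact mem_powerset.2 (sdiff_subset)
    · intro K hK; exact mem_powerset.2 (sdiff_subset)
    · intro J hJ; exact Finset.sdiff_sdiff_eq_self (mem_powerset.1 hJ)
    · intro K hK; exact Finset.sdiff_sdiff_eq_self (mem_powerset.1 hK)
    · intro J hJ; rfl
  rw [h1]
  have := Finset.prod_add (fun _ : ι => ε) (fun _ : ι => (1 : ℝ)) I
  simp only [prod_const, one_pow, mul_one] at this
  rw [add_comm 1 ε, ← this]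

/-- Termwise Cauchy–Schwarz bound. -/
private lemma term_bound (ψ : Finset ι → ℝ) (μ : ι → ℝ) (ε : ℝ) (hε : 0 < ε)
    (J : Finset ι) :
    (∑ I ∈ univ.filter (fun I : Finset ι => J ⊆ I), ψ I * ∏ i ∈ I \ J, μ i) ^ 2
      ≤ Real.exp ((∑ i, μ i ^ 2) / ε) *
          ∑ I ∈ univ.filter (fun I : Finset ι => J ⊆ I), ε ^ (I \ J).card * ψ I ^ 2 := by
  set s := Real.sqrt ε with hs
  have hs0 : 0 < s := Real.sqrt_pos.2 hε
  have hs2 : s ^ 2 = ε := Real.sq_sqrt hε.le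
  -- rewrite each term as a product suitable for Cauchy–Schwarz
  have hre : ∀ I ∈ univ.filter (fun I : Finset ι => J ⊆ I),
      ψ I * ∏ i ∈ I \ J, μ i
        = (s ^ (I \ J).card * ψ I) * ((∏ i ∈ I \ J, μ i) / s ^ (I \ J).card) := by
    intro I _
    field_simp
  rw [Finset.sum_congr rfl hre]
  refine le_trans (Finset.sum_mul_sq_le_sq_mul_sq _ _ _) ?_
  have hA : ∑ I ∈ univ.filter (fun I : Finset ι => J ⊆ I),
      (s ^ (I \ J).card * ψ I) ^ 2
        = ∑ I ∈ univ.filter (fun I : Finset ι => J ⊆ I), ε ^ (I \ J).card * ψ I ^ 2 := by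
    refine Finset.sum_congr rfl fun I _ => ?_
    rw [mul_pow, ← pow_mul, mul_comm (I \ J).card 2, pow_mul, hs2]
  have hB : ∑ I ∈ univ.filter (fun I : Finset ι => J ⊆ I),
      ((∏ i ∈ I \ J, μ i) / s ^ (I \ J).card) ^ 2
        ≤ Real.exp ((∑ i, μ i ^ 2) / ε) := by
    have hterm : ∀ I : Finset ι,
        ((∏ i ∈ I \ J, μ i) / s ^ (I \ J).card) ^ 2 = ∏ i ∈ I \ J, (μ i ^ 2 / ε) := by
      intro I
      rw [div_pow, ← pow_mul, mul_comm (I \ J).card 2, pow_mul, hs2,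
        ← Finset.prod_pow, ← Finset.prod_const (b := ε), ← Finset.prod_div_distrib]
    calc ∑ I ∈ univ.filter (fun I : Finset ι => J ⊆ I),
            ((∏ i ∈ I \ J, μ i) / s ^ (I \ J).card) ^ 2
        = ∑ K ∈ (univ \ J).powerset, ∏ i ∈ K, (μ i ^ 2 / ε) := by
          rw [← sum_superset_reindex J (fun K => ∏ i ∈ K, (μ i ^ 2 / ε))]
          exact Finset.sum_congr rfl fun I _ => hterm I
      _ = ∏ i ∈ univ \ J, (μ i ^ 2 / ε + 1) := by
          rw [Finset.prod_add]
          simp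
      _ ≤ ∏ i ∈ univ \ J, Real.exp (μ i ^ 2 / ε) := by
          refine Finset.prod_le_prod (fun i _ => by positivity) fun i _ => ?_
          exact Real.add_one_le_exp _
      _ = Real.exp (∑ i ∈ univ \ J, μ i ^ 2 / ε) := (Real.exp_sum _ _).symm
      _ ≤ Real.exp ((∑ i, μ i ^ 2) / ε) := by
          rw [Finset.sum_div]
          exact Real.exp_le_exp.2 (Finset.sum_le_sum_of_subset_of_nonneg (subset_univ _)
            fun i _ _ => by positivity)
  rw [hA]
  calc (∑ I ∈ univ.filter (fun I : Finset ι => J ⊆ I), ε ^ (I \ J).card * ψ I ^ 2) *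
        ∑ I ∈ univ.filter (fun I : Finset ι => J ⊆ I),
          ((∏ i ∈ I \ J, μ i) / s ^ (I \ J).card) ^ 2
      ≤ (∑ I ∈ univ.filter (fun I : Finset ι => J ⊆ I), ε ^ (I \ J).card * ψ I ^ 2) *
        Real.exp ((∑ i, μ i ^ 2) / ε) := by
        refine mul_le_mul_of_nonneg_left hB ?_
        exact Finset.sum_nonneg fun I _ => by positivity
    _ = _ := mul_comm _ _

/-- Main estimate for a monotone predicate `P`. -/
private lemma key (ψ : Finset ι → ℝ) (μ : ι → ℝ) (ε : ℝ) (hε : 0 < ε)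
    (P : Finset ι → Prop) [DecidablePred P] (hP : ∀ {J I : Finset ι}, P J → J ⊆ I → P I) :
    ∑ J ∈ univ.filter P,
        (∑ I ∈ univ.filter (fun I : Finset ι => J ⊆ I), ψ I * ∏ i ∈ I \ J, μ i) ^ 2
      ≤ Real.exp ((∑ i, μ i ^ 2) / ε) *
          ∑ I ∈ univ.filter P, (1 + ε) ^ I.card * ψ I ^ 2 := by
  calc ∑ J ∈ univ.filter P,
        (∑ I ∈ univ.filter (fun I : Finset ι => J ⊆ I), ψ I * ∏ i ∈ I \ J, μ i) ^ 2
      ≤ ∑ J ∈ univ.filter P, Real.exp ((∑ i, μ i ^ 2) / ε) *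
          ∑ I ∈ univ.filter (fun I : Finset ι => J ⊆ I), ε ^ (I \ J).card * ψ I ^ 2 :=
        Finset.sum_le_sum fun J _ => term_bound ψ μ ε hε J
    _ = Real.exp ((∑ i, μ i ^ 2) / ε) *
          ∑ J ∈ univ.filter P,
            ∑ I ∈ univ.filter (fun I : Finset ι => J ⊆ I), ε ^ (I \ J).card * ψ I ^ 2 := by
        rw [Finset.mul_sum]
    _ ≤ _ := by
        refine mul_le_mul_of_nonneg_left ?_ (Real.exp_pos _).le
        -- swap the order of summation
        have hswap : ∑ J ∈ univ.filter P,
            ∑ I ∈ univ.filter (fun I : Finset ι => J ⊆ I), ε ^ (I \ J).card * ψ I ^ 2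
            = ∑ I : Finset ι,
                ∑ J ∈ univ.filter (fun J : Finset ι => P J ∧ J ⊆ I),
                  ε ^ (I \ J).card * ψ I ^ 2 := by
          simp only [Finset.sum_filter]
          rw [Finset.sum_comm]
          refine Finset.sum_congr rfl fun J _ => ?_
          by_cases h1 : P J <;> simp [h1]
        rw [hswap, Finset.sum_filter (p := P)]
        refine Finset.sum_le_sum fun I _ => ?_
        by_cases hPI : P I
        · simp only [hPI, if_true]
          calc ∑ J ∈ univ.filter (fun J : Finset ι => P J ∧ J ⊆ I),
                ε ^ (I \ J).card * ψ I ^ 2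
              ≤ ∑ J ∈ I.powerset, ε ^ (I \ J).card * ψ I ^ 2 := by
                refine Finset.sum_le_sum_of_subset_of_nonneg ?_ fun J _ _ => by positivity
                intro J hJ
                simp only [mem_filter, mem_univ, true_and] at hJ
                exact mem_powerset.2 hJ.2
            _ = (1 + ε) ^ I.card * ψ I ^ 2 := by
                rw [← Finset.sum_mul, sum_pow_sdiff]
        · simp only [hPI, if_false]
          have : univ.filter (fun J : Finset ι => P J ∧ J ⊆ I) = ∅ := by
            refine Finset.filter_false_of_mem fun J _ h => ?_
            exact hPI (hP h.1 h.2)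
          rw [this, Finset.sum_empty]

end Aux

/-- **Effect of adding a mean on chaos coefficients.**
For a kernel `ψ` on a finite index set, shift `μ` with `c_μ = ∑ i, μ i ^ 2`, and
shifted kernel `ψ̃(J) = ∑_{I ⊇ J} ψ I * μ^{I \ J}`, for every `ε > 0`:
(i) `C_{Ψ̃} ≤ exp (c_μ / ε) * C_{Ψ^{(ε)}}`, and
(ii) for every `j`, `Inf_j[Ψ̃] ≤ exp (c_μ / ε) * Inf_j[Ψ^{(ε)}]`. -/
theorem shifted_kernel_bounds
    {ι : Type*} [Fintype ι] [DecidableEq ι]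
    (ψ : Finset ι → ℝ) (μ : ι → ℝ) (ε : ℝ) (hε : 0 < ε) :
    ((∑ J : Finset ι,
        (∑ I ∈ univ.filter (fun I : Finset ι => J ⊆ I), ψ I * ∏ i ∈ I \ J, μ i) ^ 2)
      ≤ Real.exp ((∑ i, μ i ^ 2) / ε) * ∑ I : Finset ι, (1 + ε) ^ I.card * ψ I ^ 2)
    ∧
    (∀ j : ι,
      (∑ J ∈ univ.filter (fun J : Finset ι => j ∈ J),
          (∑ I ∈ univ.filter (fun I : Finset ι => J ⊆ I), ψ I * ∏ i ∈ I \ J, μ i) ^ 2)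
        ≤ Real.exp ((∑ i, μ i ^ 2) / ε) *
            ∑ I ∈ univ.filter (fun I : Finset ι => j ∈ I), (1 + ε) ^ I.card * ψ I ^ 2) := by
  constructor
  · have := key ψ μ ε hε (fun _ => True) (fun _ _ => trivial)
    simpa using this
  · intro j
    exact key ψ μ ε hε (fun J => j ∈ J) (fun h hsub => hsub h)
end

section
/- Second-moment bound for shifted polynomial chaos: Let 𝕋 be a finite index set, let ζ = (ζ_i)_{i∈𝕋} be independent real random variables with E[ζ_i] = 0 and Var(ζ_i) = σ² for all i, let μ = (μ_i)_{i∈𝕋} be real numbers, and let ψ be a kernel. Then for every ε > 0, E[ ( Σ_{I⊆𝕋} ψ(I)·∏_{i∈I}(ζ_i + μ_i) )² ] ≤ exp( (1/(ε σ²))·Σ_{i∈𝕋} μ_i² ) · Σ_{I⊆𝕋} (1+ε)^{|I|}·(σ²)^{|I|}·ψ(I)². -/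
open MeasureTheory ProbabilityTheory Finset


lemma aux_reindex {ι : Type*} [Fintype ι] [DecidableEq ι] (F : Finset ι → Finset ι → ℝ) :
    ∑ I : Finset ι, ∑ J ∈ I.powerset, F J (I \ J)
      = ∑ J : Finset ι, ∑ K ∈ Jᶜ.powerset, F J K := by
  rw [Finset.sum_sigma' univ (fun I => I.powerset) (fun I J => F J (I \ J)),
      Finset.sum_sigma' univ (fun J => Jᶜ.powerset) (fun J K => F J K)]
  refine Finset.sum_bij' (fun p _ => (⟨p.2, p.1 \ p.2⟩ : Σ _ : Finset ι, Finset ι))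
    (fun p _ => (⟨p.1 ∪ p.2, p.1⟩ : Σ _ : Finset ι, Finset ι)) ?_ ?_ ?_ ?_ ?_
  · rintro ⟨I, J⟩ hp
    simp only [Finset.mem_sigma, Finset.mem_univ, Finset.mem_powerset, true_and] at hp ⊢
    exact fun i hi => Finset.mem_compl.2 (Finset.mem_sdiff.1 hi).2
  · rintro ⟨J, K⟩ hp
    simp only [Finset.mem_sigma, Finset.mem_univ, Finset.mem_powerset, true_and] at hp ⊢
    exact Finset.subset_union_left
  · rintro ⟨I, J⟩ hp
    simp only [Finset.mem_sigma, Finset.mem_univ, Finset.mem_powerset, true_and] at hp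
    simp [Finset.union_sdiff_of_subset hp]
  · rintro ⟨J, K⟩ hp
    simp only [Finset.mem_sigma, Finset.mem_univ, Finset.mem_powerset, true_and] at hp
    have hd : Disjoint J K := Finset.disjoint_left.2 fun i hiJ hiK =>
      (Finset.mem_compl.1 (hp hiK)) hiJ
    simp [Finset.union_sdiff_cancel_left hd]
  · rintro ⟨I, J⟩ _; rfl

lemma aux_int_prod {Ω : Type*} [MeasureSpace Ω] [IsProbabilityMeasure (ℙ : Measure Ω)]
    {ι : Type*} [DecidableEq ι] (f : ι → Ω → ℝ)
    (hindep : iIndepFun f ℙ)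
    (hmeas : ∀ i, Measurable (f i)) (hint : ∀ i, Integrable (f i) ℙ) (s : Finset ι) :
    Integrable (fun a => ∏ i ∈ s, f i a) ℙ ∧
      ∫ a, ∏ i ∈ s, f i a ∂ℙ = ∏ i ∈ s, ∫ a, f i a ∂ℙ := by
  induction s using Finset.induction_on with
  | empty => simp
  | @insert i s hi ih =>
    have hdep : IndepFun (f i) (fun a => ∏ j ∈ s, f j a) ℙ := by
      have h := hindep.indepFun_finset_prod_of_notMem hmeas hi
      have heq : (∏ j ∈ s, f j) = fun a => ∏ j ∈ s, f j a := by
        ext a; simp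
      rw [heq] at h
      exact h.symm
    have hintp : Integrable (fun a => f i a * ∏ j ∈ s, f j a) ℙ :=
      hdep.integrable_mul (hint i) ih.1
    constructor
    · simpa [Finset.prod_insert hi] using hintp
    · calc ∫ a, ∏ j ∈ insert i s, f j a ∂ℙ = ∫ a, f i a * ∏ j ∈ s, f j a ∂ℙ := by
            simp [Finset.prod_insert hi]
        _ = (∫ a, f i a ∂ℙ) * ∫ a, ∏ j ∈ s, f j a ∂ℙ :=
            hdep.integral_fun_mul_eq_mul_integral (hint i).1 ih.1.1
        _ = ∏ j ∈ insert i s, ∫ a, f j a ∂ℙ := by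
            rw [ih.2, Finset.prod_insert hi]


lemma aux_orth {Ω : Type*} [MeasureSpace Ω] [IsProbabilityMeasure (ℙ : Measure Ω)]
    {ι : Type*} [DecidableEq ι] (ζ : ι → Ω → ℝ)
    (hmeas : ∀ i, Measurable (ζ i))
    (hindep : iIndepFun ζ ℙ)
    (hL2 : ∀ i, MemLp (ζ i) 2 ℙ)
    (σ2 : ℝ)
    (hmean : ∀ i, ∫ a, ζ i a ∂ℙ = 0)
    (hvar : ∀ i, ∫ a, (ζ i a) ^ 2 ∂ℙ = σ2)
    (J J' : Finset ι) :
    Integrable (fun a => (∏ i ∈ J, ζ i a) * ∏ i ∈ J', ζ i a) ℙ ∧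
      ∫ a, (∏ i ∈ J, ζ i a) * ∏ i ∈ J', ζ i a ∂ℙ
        = if J = J' then σ2 ^ J.card else 0 := by
  classical
  set g : ι → ℝ → ℝ := fun i x => if i ∈ J ∩ J' then x ^ 2 else x with hg
  set f : ι → Ω → ℝ := fun i => g i ∘ ζ i with hf
  have hgmeas : ∀ i, Measurable (g i) := by
    intro i
    by_cases hi : i ∈ J ∩ J' <;> simp only [hg, hi, if_true, if_false] <;>
      [exact measurable_id.pow_const 2; exact measurable_id]
  have hfindep : iIndepFun f ℙ := hindep.comp g hgmeas
  have hfmeas : ∀ i, Measurable (f i) := fun i => (hgmeas i).comp (hmeas i)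
  have hfint : ∀ i, Integrable (f i) ℙ := by
    intro i
    by_cases hi : i ∈ J ∩ J'
    · have hfi : f i = fun a => (ζ i a) ^ 2 := by
        funext a; simp only [hf, hg, Function.comp_apply]; exact if_pos hi
      rw [hfi]; exact (hL2 i).integrable_sq
    · have hfi : f i = ζ i := by
        funext a; simp only [hf, hg, Function.comp_apply]; exact if_neg hi
      rw [hfi]; exact (hL2 i).integrable one_le_two
  have hfval : ∀ i, ∫ a, f i a ∂ℙ = if i ∈ J ∩ J' then σ2 else 0 := by
    intro i
    by_cases hi : i ∈ J ∩ J'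
    · have hfi : f i = fun a => (ζ i a) ^ 2 := by
        funext a; simp only [hf, hg, Function.comp_apply]; exact if_pos hi
      rw [hfi, if_pos hi]; exact hvar i
    · have hfi : f i = ζ i := by
        funext a; simp only [hf, hg, Function.comp_apply]; exact if_neg hi
      rw [hfi, if_neg hi]; exact hmean i
  -- pointwise identity
  have hkey : ∀ a, (∏ i ∈ J, ζ i a) * ∏ i ∈ J', ζ i a = ∏ i ∈ J ∪ J', f i a := by
    intro a
    have hu : J ∪ J' = (J ∩ J') ∪ ((J \ J') ∪ (J' \ J)) := by
      ext i; simp only [Finset.mem_union, Finset.mem_inter, Finset.mem_sdiff]; tauto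
    have hd1 : Disjoint (J ∩ J') ((J \ J') ∪ (J' \ J)) := by
      rw [Finset.disjoint_union_right]
      constructor <;> rw [Finset.disjoint_left] <;> intro i hi hi' <;>
        simp only [Finset.mem_inter, Finset.mem_sdiff] at hi hi' <;> tauto
    have hd2 : Disjoint (J \ J') (J' \ J) := by
      rw [Finset.disjoint_left]; intro i hi hi'
      simp only [Finset.mem_sdiff] at hi hi'; tauto
    rw [hu, Finset.prod_union hd1, Finset.prod_union hd2]
    have e1 : ∏ i ∈ J ∩ J', f i a = ∏ i ∈ J ∩ J', (ζ i a * ζ i a) :=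
      Finset.prod_congr rfl fun i hi => by
        simp only [hf, hg, Function.comp_apply]; rw [if_pos hi, sq]
    have e2 : ∏ i ∈ J \ J', f i a = ∏ i ∈ J \ J', ζ i a :=
      Finset.prod_congr rfl fun i hi => by
        have : i ∉ J ∩ J' := by
          simp only [Finset.mem_sdiff] at hi; simp [Finset.mem_inter, hi.2]
        simp only [hf, hg, Function.comp_apply]; exact if_neg this
    have e3 : ∏ i ∈ J' \ J, f i a = ∏ i ∈ J' \ J, ζ i a :=
      Finset.prod_congr rfl fun i hi => by
        have : i ∉ J ∩ J' := by
          simp only [Finset.mem_sdiff] at hi; simp [Finset.mem_inter, hi.2]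
        simp only [hf, hg, Function.comp_apply]; exact if_neg this
    rw [e1, e2, e3, Finset.prod_mul_distrib]
    rw [← Finset.prod_inter_mul_prod_diff J J' (fun i => ζ i a),
        ← Finset.prod_inter_mul_prod_diff J' J (fun i => ζ i a),
        Finset.inter_comm J' J]
    ring
  obtain ⟨hIprod, hEprod⟩ := aux_int_prod f hfindep hfmeas hfint (J ∪ J')
  constructor
  · exact hIprod.congr (Filter.Eventually.of_forall fun a => (hkey a).symm)
  · have h1 : ∫ a, (∏ i ∈ J, ζ i a) * ∏ i ∈ J', ζ i a ∂ℙ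
        = ∏ i ∈ J ∪ J', ∫ a, f i a ∂ℙ := by
      rw [← hEprod]; exact integral_congr_ae (Filter.Eventually.of_forall hkey)
    rw [h1]
    by_cases hJJ : J = J'
    · subst hJJ
      rw [if_pos rfl, Finset.union_self,
        Finset.prod_congr rfl (fun i hi => by
          rw [hfval i, if_pos (Finset.mem_inter.2 ⟨hi, hi⟩)]), Finset.prod_const]
    · rw [if_neg hJJ]
      have : ∃ i ∈ J ∪ J', i ∉ J ∩ J' := by
        by_contra h
        push_neg at h
        apply hJJ
        apply Finset.Subset.antisymm
        · intro i hi
          exact Finset.mem_of_mem_inter_right (h i (Finset.mem_union_left _ hi))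
        · intro i hi
          exact Finset.mem_of_mem_inter_left (h i (Finset.mem_union_right _ hi))
      obtain ⟨i, hiu, hii⟩ := this
      exact Finset.prod_eq_zero hiu (by rw [hfval i, if_neg hii])

/-- **Second-moment bound for shifted polynomial chaos.**
For independent random variables `ζ i` with zero mean and common variance `σ2`,
a shift `μ`, a kernel `ψ` and any `ε > 0`,
`E[(∑ I, ψ I * ∏_{i ∈ I} (ζ i + μ i))²]
  ≤ exp ((∑ i, μ i ²) / (ε σ2)) * ∑ I, (1+ε)^{|I|} σ2^{|I|} ψ(I)²`. -/
theorem second_moment_shifted_polynomial_chaos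
    {Ω : Type*} [MeasureSpace Ω] [IsProbabilityMeasure (ℙ : Measure Ω)]
    {ι : Type*} [Fintype ι] [DecidableEq ι]
    (ζ : ι → Ω → ℝ)
    (hmeas : ∀ i, Measurable (ζ i))
    (hindep : iIndepFun ζ ℙ)
    (hL2 : ∀ i, MemLp (ζ i) 2 ℙ)
    (σ2 : ℝ) (hσ2 : 0 < σ2)
    (hmean : ∀ i, ∫ a, ζ i a ∂ℙ = 0)
    (hvar : ∀ i, ∫ a, (ζ i a) ^ 2 ∂ℙ = σ2)
    (μ : ι → ℝ) (ψ : Finset ι → ℝ) (ε : ℝ) (hε : 0 < ε) :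
    ∫ a, (∑ I : Finset ι, ψ I * ∏ i ∈ I, (ζ i a + μ i)) ^ 2 ∂ℙ
      ≤ Real.exp ((∑ i, μ i ^ 2) / (ε * σ2)) *
          ∑ I : Finset ι, (1 + ε) ^ I.card * σ2 ^ I.card * ψ I ^ 2 := by
  classical
  set E : ℝ := Real.exp ((∑ i, μ i ^ 2) / (ε * σ2)) with hE
  set c : Finset ι → ℝ := fun J => ∑ K ∈ Jᶜ.powerset, ψ (J ∪ K) * ∏ i ∈ K, μ i with hc
  set S : Finset ι → ℝ := fun J => ∑ K ∈ Jᶜ.powerset, (ε * σ2) ^ K.card * ψ (J ∪ K) ^ 2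
    with hS
  have hεσ : (0:ℝ) < ε * σ2 := mul_pos hε hσ2
  -- Step A : pointwise expansion
  have stepA : ∀ a, (∑ I : Finset ι, ψ I * ∏ i ∈ I, (ζ i a + μ i))
      = ∑ J : Finset ι, c J * ∏ i ∈ J, ζ i a := by
    intro a
    calc (∑ I : Finset ι, ψ I * ∏ i ∈ I, (ζ i a + μ i))
        = ∑ I : Finset ι, ∑ J ∈ I.powerset,
            (ψ (J ∪ (I \ J)) * ∏ i ∈ I \ J, μ i) * ∏ i ∈ J, ζ i a := by
          refine Finset.sum_congr rfl fun I _ => ?_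
          rw [Finset.prod_add, Finset.mul_sum]
          refine Finset.sum_congr rfl fun J hJ => ?_
          rw [Finset.union_sdiff_of_subset (Finset.mem_powerset.1 hJ)]
          ring
      _ = ∑ J : Finset ι, ∑ K ∈ Jᶜ.powerset,
            (ψ (J ∪ K) * ∏ i ∈ K, μ i) * ∏ i ∈ J, ζ i a :=
          aux_reindex (fun J K => (ψ (J ∪ K) * ∏ i ∈ K, μ i) * ∏ i ∈ J, ζ i a)
      _ = ∑ J : Finset ι, c J * ∏ i ∈ J, ζ i a := by
          refine Finset.sum_congr rfl fun J _ => ?_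
          rw [hc, Finset.sum_mul]
  have horth := fun J J' => aux_orth ζ hmeas hindep hL2 σ2 hmean hvar J J'
  -- Step B : orthogonal expansion of the second moment
  have stepB : ∫ a, (∑ I : Finset ι, ψ I * ∏ i ∈ I, (ζ i a + μ i)) ^ 2 ∂ℙ
      = ∑ J : Finset ι, c J ^ 2 * σ2 ^ J.card := by
    have hpt : ∀ a, (∑ I : Finset ι, ψ I * ∏ i ∈ I, (ζ i a + μ i)) ^ 2
        = ∑ J : Finset ι, ∑ J' : Finset ι,
            (c J * c J') * ((∏ i ∈ J, ζ i a) * ∏ i ∈ J', ζ i a) := by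
      intro a
      rw [stepA a, sq, Finset.sum_mul_sum]
      exact Finset.sum_congr rfl fun J _ => Finset.sum_congr rfl fun J' _ => by ring
    rw [integral_congr_ae (Filter.Eventually.of_forall hpt),
      integral_finset_sum _ (fun J _ =>
        integrable_finset_sum _ (fun J' _ => ((horth J J').1.const_mul _)))]
    refine Finset.sum_congr rfl fun J _ => ?_
    rw [integral_finset_sum _ (fun J' _ => ((horth J J').1.const_mul _))]
    have : ∀ J' : Finset ι, ∫ a, (c J * c J') * ((∏ i ∈ J, ζ i a) * ∏ i ∈ J', ζ i a) ∂ℙ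
        = (c J * c J') * if J = J' then σ2 ^ J.card else 0 := by
      intro J'
      rw [MeasureTheory.integral_const_mul, (horth J J').2]
    rw [Finset.sum_congr rfl fun J' _ => this J']
    simp only [mul_ite, mul_zero]
    rw [Finset.sum_ite_eq Finset.univ J (fun J' => c J * c J' * σ2 ^ J.card),
      if_pos (Finset.mem_univ J)]
    ring
  -- Step C : Cauchy-Schwarz bound on the coefficients
  set s0 : ℝ := Real.sqrt (ε * σ2) with hs0
  have hs0pos : 0 < s0 := Real.sqrt_pos.2 hεσ
  have hs0sq : s0 ^ 2 = ε * σ2 := Real.sq_sqrt hεσ.le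
  have hpowsq : ∀ n : ℕ, (s0 ^ n) ^ 2 = (ε * σ2) ^ n := by
    intro n; rw [← pow_mul, mul_comm n 2, pow_mul, hs0sq]
  have stepC : ∀ J : Finset ι, c J ^ 2 ≤ E * S J := by
    intro J
    have h1 : c J = ∑ K ∈ Jᶜ.powerset,
        (ψ (J ∪ K) * s0 ^ K.card) * ((∏ i ∈ K, μ i) / s0 ^ K.card) := by
      rw [hc]
      refine Finset.sum_congr rfl fun K _ => ?_
      have hne : s0 ^ K.card ≠ 0 := pow_ne_zero _ hs0pos.ne'
      field_simp
    have hCS := Finset.sum_mul_sq_le_sq_mul_sq Jᶜ.powerset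
        (fun K => ψ (J ∪ K) * s0 ^ K.card) (fun K => (∏ i ∈ K, μ i) / s0 ^ K.card)
    rw [← h1] at hCS
    have h2 : ∑ K ∈ Jᶜ.powerset, (ψ (J ∪ K) * s0 ^ K.card) ^ 2 = S J := by
      rw [hS]
      refine Finset.sum_congr rfl fun K _ => ?_
      rw [mul_pow, hpowsq]
      ring
    have h3 : ∑ K ∈ Jᶜ.powerset, ((∏ i ∈ K, μ i) / s0 ^ K.card) ^ 2 ≤ E := by
      have e1 : ∀ K ∈ Jᶜ.powerset, ((∏ i ∈ K, μ i) / s0 ^ K.card) ^ 2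
          = ∏ i ∈ K, (μ i ^ 2 / (ε * σ2)) := by
        intro K _
        rw [div_pow, hpowsq, ← Finset.prod_pow, Finset.prod_div_distrib,
          Finset.prod_const]
      rw [Finset.sum_congr rfl e1]
      have e2 : ∑ K ∈ Jᶜ.powerset, ∏ i ∈ K, (μ i ^ 2 / (ε * σ2))
          = ∏ i ∈ Jᶜ, (μ i ^ 2 / (ε * σ2) + 1) := by
        rw [Finset.prod_add]
        exact (Finset.sum_congr rfl fun K _ => by simp).symm
      rw [e2]
      have e3 : ∏ i ∈ Jᶜ, (μ i ^ 2 / (ε * σ2) + 1)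
          ≤ ∏ i : ι, (μ i ^ 2 / (ε * σ2) + 1) := by
        rw [← Finset.prod_compl_mul_prod J (fun i => μ i ^ 2 / (ε * σ2) + 1)]
        refine le_mul_of_one_le_right
          (Finset.prod_nonneg fun i _ => by positivity) ?_
        calc (1:ℝ) = ∏ _i ∈ J, (1:ℝ) := by simp
          _ ≤ ∏ i ∈ J, (μ i ^ 2 / (ε * σ2) + 1) :=
            Finset.prod_le_prod (fun i _ => zero_le_one)
              (fun i _ => le_add_of_nonneg_left (div_nonneg (sq_nonneg _) hεσ.le))
      have e4 : ∏ i : ι, (μ i ^ 2 / (ε * σ2) + 1)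
          ≤ ∏ i : ι, Real.exp (μ i ^ 2 / (ε * σ2)) :=
        Finset.prod_le_prod (fun i _ => by positivity)
          (fun i _ => Real.add_one_le_exp _)
      refine (e3.trans e4).trans_eq ?_
      rw [← Real.exp_sum, hE, ← Finset.sum_div]
    calc c J ^ 2 ≤ (∑ K ∈ Jᶜ.powerset, (ψ (J ∪ K) * s0 ^ K.card) ^ 2) *
          ∑ K ∈ Jᶜ.powerset, ((∏ i ∈ K, μ i) / s0 ^ K.card) ^ 2 := hCS
      _ ≤ (∑ K ∈ Jᶜ.powerset, (ψ (J ∪ K) * s0 ^ K.card) ^ 2) * E :=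
          mul_le_mul_of_nonneg_left h3
            (Finset.sum_nonneg fun K _ => sq_nonneg _)
      _ = E * S J := by rw [h2]; ring
  -- Step D : reindex the final sum
  have stepD : ∑ J : Finset ι, S J * σ2 ^ J.card
      = ∑ I : Finset ι, (1 + ε) ^ I.card * σ2 ^ I.card * ψ I ^ 2 := by
    calc ∑ J : Finset ι, S J * σ2 ^ J.card
        = ∑ J : Finset ι, ∑ K ∈ Jᶜ.powerset,
            (ε * σ2) ^ K.card * ψ (J ∪ K) ^ 2 * σ2 ^ J.card := by
          refine Finset.sum_congr rfl fun J _ => ?_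
          rw [hS, Finset.sum_mul]
      _ = ∑ I : Finset ι, ∑ J ∈ I.powerset,
            (ε * σ2) ^ (I \ J).card * ψ (J ∪ (I \ J)) ^ 2 * σ2 ^ J.card :=
          (aux_reindex (fun J K => (ε * σ2) ^ K.card * ψ (J ∪ K) ^ 2 * σ2 ^ J.card)).symm
      _ = ∑ I : Finset ι, (1 + ε) ^ I.card * σ2 ^ I.card * ψ I ^ 2 := by
          refine Finset.sum_congr rfl fun I _ => ?_
          have hinner : ∀ J ∈ I.powerset,
              (ε * σ2) ^ (I \ J).card * ψ (J ∪ (I \ J)) ^ 2 * σ2 ^ J.card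
              = ε ^ (I \ J).card * (σ2 ^ I.card * ψ I ^ 2) := by
            intro J hJ
            rw [Finset.mem_powerset] at hJ
            have hcard : σ2 ^ (I \ J).card * σ2 ^ J.card = σ2 ^ I.card := by
              rw [← pow_add, Finset.card_sdiff_add_card_eq_card hJ]
            rw [Finset.union_sdiff_of_subset hJ, mul_pow]
            calc ε ^ (I \ J).card * σ2 ^ (I \ J).card * ψ I ^ 2 * σ2 ^ J.card
                = ε ^ (I \ J).card * ((σ2 ^ (I \ J).card * σ2 ^ J.card) * ψ I ^ 2) := by
                  ring
              _ = ε ^ (I \ J).card * (σ2 ^ I.card * ψ I ^ 2) := by rw [hcard]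
          rw [Finset.sum_congr rfl hinner, ← Finset.sum_mul]
          have hbin : ∑ J ∈ I.powerset, ε ^ (I \ J).card = (1 + ε) ^ I.card := by
            have h := Finset.prod_add (fun _ : ι => (1:ℝ)) (fun _ : ι => ε) I
            simp only [Finset.prod_const_one, one_mul, Finset.prod_const] at h
            rw [← h]
          rw [hbin]
          ring
  rw [stepB]
  calc ∑ J : Finset ι, c J ^ 2 * σ2 ^ J.card
      ≤ ∑ J : Finset ι, (E * S J) * σ2 ^ J.card :=
        Finset.sum_le_sum fun J _ =>
          mul_le_mul_of_nonneg_right (stepC J) (pow_nonneg hσ2.le _)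
    _ = E * ∑ J : Finset ι, S J * σ2 ^ J.card := by
        rw [Finset.mul_sum]
        exact Finset.sum_congr rfl fun J _ => by ring
    _ = E * ∑ I : Finset ι, (1 + ε) ^ I.card * σ2 ^ I.card * ψ I ^ 2 := by rw [stepD]
end

section
/- L² convergence of zero-mean polynomial chaos over a countable index set: Let 𝕋 be a countably infinite index set, let ζ = (ζ_i)_{i∈𝕋} be independent real random variables with E[ζ_i] = 0 and Var(ζ_i) = σ² for all i, and let ψ : 𝒫^fin(𝕋) → ℝ be a kernel on the finite subsets of 𝕋 satisfying Σ_{I∈𝒫^fin(𝕋)} (σ²)^{|I|}·ψ(I)² < ∞. Then for every increasing sequence of finite sets Λ_N ⊆ 𝕋 with ∪_N Λ_N = 𝕋, the partial sums S_N := Σ_{I⊆Λ_N} ψ(I)·∏_{i∈I} ζ_i converge in L² as N → ∞, and the limit is (almost surely) the same for every such exhausting sequence. -/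
open MeasureTheory ProbabilityTheory Finset Filter

private lemma indep_prod_integral
    {Ω : Type*} [MeasureSpace Ω] [IsProbabilityMeasure (ℙ : Measure Ω)]
    {ι : Type*} [DecidableEq ι]
    (g : ι → Ω → ℝ)
    (hmeas : ∀ i, Measurable (g i))
    (hindep : iIndepFun g ℙ)
    (hint : ∀ i, Integrable (g i) ℙ) (s : Finset ι) :
    Integrable (fun a => ∏ i ∈ s, g i a) ℙ ∧
      ∫ a, ∏ i ∈ s, g i a ∂ℙ = ∏ i ∈ s, ∫ a, g i a ∂ℙ := by
  classical
  refine Finset.induction_on s ?_ ?_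
  · simp
  · intro i t hi ih
    have hIndep : IndepFun (g i) (fun a => ∏ j ∈ t, g j a) ℙ := by
      have h := (hindep.indepFun_finsetProd_of_notMem hmeas hi).symm
      have : (∏ j ∈ t, g j) = fun a => ∏ j ∈ t, g j a := by
        funext a; simp [Finset.prod_apply]
      rwa [this] at h
    have h1 : Integrable (fun a => g i a * ∏ j ∈ t, g j a) ℙ :=
      hIndep.integrable_mul (hint i) ih.1
    constructor
    · have : (fun a => ∏ j ∈ insert i t, g j a)
          = fun a => g i a * ∏ j ∈ t, g j a := by
        funext a; rw [Finset.prod_insert hi]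
      rw [this]; exact h1
    · have h2 : (fun a => ∏ j ∈ insert i t, g j a)
          = fun a => g i a * ∏ j ∈ t, g j a := by
        funext a; rw [Finset.prod_insert hi]
      calc ∫ a, ∏ j ∈ insert i t, g j a ∂ℙ
          = ∫ a, g i a * ∏ j ∈ t, g j a ∂ℙ := by rw [h2]
        _ = (∫ a, g i a ∂ℙ) * ∫ a, ∏ j ∈ t, g j a ∂ℙ :=
            hIndep.integral_fun_mul_eq_mul_integral (hint i).1 ih.1.1
        _ = ∏ j ∈ insert i t, ∫ a, g j a ∂ℙ := by
            rw [ih.2, Finset.prod_insert hi]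

private lemma lp_coeFn_sum
    {Ω : Type*} [MeasureSpace Ω]
    {γ : Type*} (s : Finset γ) (f : γ → Lp ℝ 2 (ℙ : Measure Ω)) :
    ((∑ i ∈ s, f i : Lp ℝ 2 (ℙ : Measure Ω)) : Ω → ℝ)
      =ᵐ[ℙ] fun a => ∑ i ∈ s, f i a := by
  classical
  refine Finset.induction_on s ?_ ?_
  · simp only [Finset.sum_empty]
    exact Lp.coeFn_zero _ _ _
  · intro i t hi ih
    rw [Finset.sum_insert hi]
    filter_upwards [Lp.coeFn_add (f i) (∑ j ∈ t, f j), ih] with a h1 h2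
    rw [h1]
    simp only [Pi.add_apply, h2, Finset.sum_insert hi]

/-- **L² convergence of zero-mean polynomial chaos over a countable index set.**
Let `ι` be countably infinite, `ζ i` independent with zero mean and variance `σ2`,
and let `ψ` be a kernel on finite subsets of `ι` with
`∑_{I} σ2^{|I|} ψ(I)² < ∞`.  Then there is a single `S ∈ L²` such that for every
increasing exhausting sequence of finite sets `Λ N`, the partial sums
`∑_{I ⊆ Λ N} ψ I * ∏_{i ∈ I} ζ i` converge to `S` in `L²`. -/
theorem polynomial_chaos_L2_convergence_zero_mean
    {Ω : Type*} [MeasureSpace Ω] [IsProbabilityMeasure (ℙ : Measure Ω)]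
    {ι : Type*} [Countable ι] [Infinite ι] [DecidableEq ι]
    (ζ : ι → Ω → ℝ)
    (hmeas : ∀ i, Measurable (ζ i))
    (hindep : iIndepFun ζ ℙ)
    (hL2 : ∀ i, MemLp (ζ i) 2 ℙ)
    (σ2 : ℝ)
    (hmean : ∀ i, ∫ a, ζ i a ∂ℙ = 0)
    (hvar : ∀ i, ∫ a, (ζ i a) ^ 2 ∂ℙ = σ2)
    (ψ : Finset ι → ℝ)
    (hsum : Summable (fun I : Finset ι => σ2 ^ I.card * ψ I ^ 2)) :
    ∃ S : Ω → ℝ, MemLp S 2 ℙ ∧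
      ∀ Λ : ℕ → Finset ι, Monotone Λ → (∀ i : ι, ∃ N, i ∈ Λ N) →
        Tendsto
          (fun N => eLpNorm
            (fun a => (∑ I ∈ (Λ N).powerset, ψ I * ∏ i ∈ I, ζ i a) - S a) 2 ℙ)
          atTop (nhds 0) := by
  classical
  set F : Finset ι → Ω → ℝ := fun I a => ψ I * ∏ i ∈ I, ζ i a with hF
  have hζint : ∀ i, Integrable (ζ i) ℙ := fun i => (hL2 i).integrable (by norm_num)
  have hsqint : ∀ i, Integrable (fun a => ζ i a ^ 2) ℙ := fun i => (hL2 i).integrable_sq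
  -- key integral identities
  have key : ∀ I J : Finset ι,
      Integrable (fun a => (∏ i ∈ I, ζ i a) * (∏ i ∈ J, ζ i a)) ℙ ∧
      ∫ a, (∏ i ∈ I, ζ i a) * (∏ i ∈ J, ζ i a) ∂ℙ
        = if I = J then σ2 ^ I.card else 0 := by
    intro I J
    set h : ι → Ω → ℝ := fun i a => if i ∈ I ∩ J then ζ i a ^ 2 else ζ i a with hh
    have hhmeas : ∀ i, Measurable (h i) := by
      intro i; dsimp only [h]; split_ifs
      · exact (hmeas i).pow_const 2
      · exact hmeas i
    have hhindep : iIndepFun h ℙ := by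
      have hcomp := hindep.comp (fun i (x : ℝ) => if i ∈ I ∩ J then x ^ 2 else x)
        (fun i => by
                     split_ifs
                     exacts [measurable_id.pow_const 2, measurable_id])
      exact hcomp
    have hhint : ∀ i, Integrable (h i) ℙ := by
      intro i; dsimp only [h]; split_ifs
      exacts [hsqint i, hζint i]
    obtain ⟨hint, hval⟩ := indep_prod_integral h hhmeas hhindep hhint (I ∪ J)
    have hpt : ∀ a, (∏ i ∈ I, ζ i a) * (∏ i ∈ J, ζ i a) = ∏ i ∈ I ∪ J, h i a := by
      intro a
      have h1 : ∀ i, h i a = ζ i a * (if i ∈ I ∩ J then ζ i a else 1) := by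
        intro i; dsimp only [h]; split_ifs <;> ring
      have h2 : (I ∪ J) ∩ (I ∩ J) = I ∩ J :=
        Finset.inter_eq_right.mpr
          (Finset.inter_subset_left.trans Finset.subset_union_left)
      rw [← Finset.prod_union_inter]
      simp_rw [h1]
      rw [Finset.prod_mul_distrib, Finset.prod_ite_mem, h2]
    have hfun : (fun a => (∏ i ∈ I, ζ i a) * (∏ i ∈ J, ζ i a))
        = fun a => ∏ i ∈ I ∪ J, h i a := funext hpt
    have hint_i : ∀ i ∈ I ∩ J, ∫ a, h i a ∂ℙ = σ2 := by
      intro i hi; dsimp only [h]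
      simp only [if_pos hi]
      exact hvar i
    have hint_i' : ∀ i, i ∉ I ∩ J → ∫ a, h i a ∂ℙ = 0 := by
      intro i hi; dsimp only [h]
      simp only [if_neg hi]
      exact hmean i
    constructor
    · rw [hfun]; exact hint
    · rw [hfun, hval]
      by_cases hIJ : I = J
      · subst hIJ
        rw [if_pos rfl, Finset.union_self]
        rw [Finset.prod_congr rfl (fun i hi => hint_i i (by simpa using hi)),
          Finset.prod_const]
      · rw [if_neg hIJ]
        obtain ⟨i, hiu, hin⟩ : ∃ i ∈ I ∪ J, i ∉ I ∩ J := by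
          by_contra hcon; push_neg at hcon
          apply hIJ
          apply Finset.Subset.antisymm
          · intro x hx
            exact (Finset.mem_inter.1 (hcon x (Finset.mem_union_left _ hx))).2
          · intro x hx
            exact (Finset.mem_inter.1 (hcon x (Finset.mem_union_right _ hx))).1
        exact Finset.prod_eq_zero hiu (hint_i' i hin)
  -- MemLp of the chaos terms
  have hprodmeas : ∀ I : Finset ι, Measurable (fun a => ∏ i ∈ I, ζ i a) :=
    fun I => Finset.measurable_prod I (fun i _ => hmeas i)
  have hFmem : ∀ I, MemLp (F I) 2 ℙ := by
    intro I
    have hm : AEStronglyMeasurable (fun a => ∏ i ∈ I, ζ i a) ℙ :=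
      (hprodmeas I).aestronglyMeasurable
    have hmem : MemLp (fun a => ∏ i ∈ I, ζ i a) 2 ℙ := by
      rw [memLp_two_iff_integrable_sq hm]
      have h2 : (fun a => (∏ i ∈ I, ζ i a) ^ 2)
          = fun a => (∏ i ∈ I, ζ i a) * (∏ i ∈ I, ζ i a) := by
        funext a; ring
      rw [h2]; exact (key I I).1
    exact hmem.const_mul (ψ I)
  set v : Finset ι → Lp ℝ 2 (ℙ : Measure Ω) := fun I => (hFmem I).toLp (F I) with hv
  have hinner : ∀ I J, (inner ℝ (v I) (v J) : ℝ)
      = if I = J then σ2 ^ I.card * ψ I ^ 2 else 0 := by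
    intro I J
    rw [L2.inner_def]
    have hae : (fun a => (inner ℝ ((v I : Ω → ℝ) a) ((v J : Ω → ℝ) a) : ℝ))
        =ᵐ[ℙ] fun a => ψ I * ψ J * ((∏ i ∈ I, ζ i a) * (∏ i ∈ J, ζ i a)) := by
      filter_upwards [(hFmem I).coeFn_toLp, (hFmem J).coeFn_toLp] with a h1 h2
      simp only [hv] at h1 h2 ⊢
      rw [h1, h2]
      simp only [RCLike.inner_apply, conj_trivial, hF]
      ring
    rw [integral_congr_ae hae, integral_const_mul, (key I J).2]
    split_ifs with hIJ
    · subst hIJ; ring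
    · ring
  have hnorm : ∀ I, ‖v I‖ ^ 2 = σ2 ^ I.card * ψ I ^ 2 := by
    intro I
    rw [← real_inner_self_eq_norm_sq, hinner, if_pos rfl]
  have hinner' : ∀ I J, (inner ℝ (v I) (v J) : ℝ)
      = if I = J then ‖v I‖ ^ 2 else 0 := by
    intro I J; rw [hinner]
    split_ifs with h
    · rw [hnorm]
    · rfl
  have hsumv : Summable (fun I => ‖v I‖ ^ 2) := hsum.congr (fun I => (hnorm I).symm)
  have hsummable : Summable v := by
    rw [summable_iff_vanishing_norm]
    intro ε hε
    obtain ⟨s, hs⟩ := summable_iff_vanishing_norm.1 hsumv (ε ^ 2) (by positivity)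
    refine ⟨s, fun t ht => ?_⟩
    have hpyth : ‖∑ I ∈ t, v I‖ ^ 2 = ∑ I ∈ t, ‖v I‖ ^ 2 := by
      rw [← real_inner_self_eq_norm_sq]
      calc (inner ℝ (∑ I ∈ t, v I) (∑ J ∈ t, v J) : ℝ)
          = ∑ I ∈ t, ∑ J ∈ t, (inner ℝ (v I) (v J) : ℝ) := by
            rw [sum_inner]
            exact Finset.sum_congr rfl fun I _ => inner_sum _ _ _
        _ = ∑ I ∈ t, ‖v I‖ ^ 2 := by
            refine Finset.sum_congr rfl fun I hI => ?_
            simp only [hinner']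
            rw [Finset.sum_ite_eq, if_pos hI]
    have h2 := hs t ht
    rw [Real.norm_eq_abs] at h2
    have h3 : ‖∑ I ∈ t, v I‖ ^ 2 < ε ^ 2 := by
      rw [hpyth]
      exact lt_of_le_of_lt (le_abs_self _) h2
    exact lt_of_pow_lt_pow_left₀ 2 hε.le h3
  set Slp : Lp ℝ 2 (ℙ : Measure Ω) := ∑' I, v I with hSlp
  refine ⟨Slp, Lp.memLp Slp, ?_⟩
  intro Λ hmono hexh
  have htend : Tendsto (fun N => (Λ N).powerset) atTop atTop := by
    apply tendsto_atTop_finset_of_monotone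
    · intro a b hab
      exact Finset.powerset_mono.2 (hmono hab)
    · intro I
      choose f hf using hexh
      refine ⟨I.sup f, Finset.mem_powerset.2 fun i hi => ?_⟩
      exact hmono (Finset.le_sup hi) (hf i)
  have hS : Tendsto (fun N => ∑ I ∈ (Λ N).powerset, v I) atTop (nhds Slp) :=
    hsummable.hasSum.comp htend
  have hnormtend : Tendsto (fun N => ‖(∑ I ∈ (Λ N).powerset, v I) - Slp‖)
      atTop (nhds 0) := tendsto_iff_norm_sub_tendsto_zero.1 hS
  have h3 : ∀ᵐ a ∂(ℙ : Measure Ω), ∀ I : Finset ι, (v I : Ω → ℝ) a = F I a :=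
    ae_all_iff.2 fun I => (hFmem I).coeFn_toLp
  have hkey : ∀ N, eLpNorm
      (fun a => (∑ I ∈ (Λ N).powerset, ψ I * ∏ i ∈ I, ζ i a) - Slp a) 2 (ℙ : Measure Ω)
      = ENNReal.ofReal ‖(∑ I ∈ (Λ N).powerset, v I) - Slp‖ := by
    intro N
    have hae : (((∑ I ∈ (Λ N).powerset, v I) - Slp : Lp ℝ 2 (ℙ : Measure Ω)) : Ω → ℝ)
        =ᵐ[ℙ] fun a => (∑ I ∈ (Λ N).powerset, ψ I * ∏ i ∈ I, ζ i a) - Slp a := by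
      filter_upwards [lp_coeFn_sum (Λ N).powerset v,
        Lp.coeFn_sub (∑ I ∈ (Λ N).powerset, v I) Slp, h3] with a ha1 ha2 ha3
      rw [ha2]
      simp only [Pi.sub_apply, ha1]
      congr 1
      exact Finset.sum_congr rfl fun I _ => ha3 I
    rw [eLpNorm_congr_ae hae.symm, Lp.norm_def,
      ENNReal.ofReal_toReal (Lp.eLpNorm_ne_top _)]
  have hfinal : Tendsto (fun N => ENNReal.ofReal
      ‖(∑ I ∈ (Λ N).powerset, v I) - Slp‖) atTop (nhds (ENNReal.ofReal 0)) :=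
    (ENNReal.continuous_ofReal.tendsto 0).comp hnormtend
  simp only [ENNReal.ofReal_zero] at hfinal
  simpa only [hkey] using hfinal
end

section
/- Exponential tilting of a square-integrable random variable: Let X be a real random variable with 0 < E[X²] < ∞, and let A > 0 satisfy E[X²·1_{|X|>A}] ≤ (1/4)·E[X²]. Set ε := E[X²]²/(144·A³) and assume |E[X]| ≤ ε. Then there exists a measurable function f : ℝ → (0,∞) such that, writing μ for the law of X: (i) ∫ f dμ = 1, so f·dμ is a probability law; (ii) ∫ x·f(x) μ(dx) = 0; (iii) ∫ x²·f(x) μ(dx) ≤ E[X²] + (A^{3/2}/√ε)·|E[X]|; and (iv) for every p ∈ ℝ, ∫ f(x)^p μ(dx) ≤ 1 + (4·e^{|p|}/(A·ε))·(E[X])². -/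
open MeasureTheory ProbabilityTheory


-- exp z ≤ 1 + z + z² e^{|z|}
lemma exp_quad (z : ℝ) : Real.exp z ≤ 1 + z + z^2 * Real.exp |z| := by
  rcases le_or_gt 0 z with hz | hz
  · rw [abs_of_nonneg hz]
    have h1 : -z + 1 ≤ Real.exp (-z) := Real.add_one_le_exp (-z)
    have h2 : Real.exp (-z) * Real.exp z = 1 := by
      rw [← Real.exp_add]; simp
    have h3 := Real.exp_pos z
    nlinarith [mul_nonneg hz h3.le, mul_nonneg (mul_nonneg hz hz) h3.le]
  · rw [abs_of_neg hz]
    have h1 : -z + 1 ≤ Real.exp (-z) := Real.add_one_le_exp (-z)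
    have h2 : Real.exp (-z) * Real.exp z = 1 := by
      rw [← Real.exp_add]; simp
    have h4 : (1:ℝ) ≤ Real.exp (-z) := by
      rw [show (1:ℝ) = Real.exp 0 by simp]
      exact Real.exp_le_exp.mpr (by linarith)
    have h3 := Real.exp_pos z
    have hu1 : Real.exp z * (1 - z) ≤ 1 := by nlinarith
    have hq : (1 + z + z^2 * Real.exp (-z)) * (1 - z) ≥ 1 := by nlinarith [sq_nonneg z, mul_nonneg (mul_nonneg (neg_nonneg.mpr hz.le) (sq_nonneg z)) (Real.exp_pos (-z)).le]
    nlinarith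

-- x² ≤ 4 e^x for x ≥ 0
lemma sq_le_four_exp {x : ℝ} (hx : 0 ≤ x) : x^2 ≤ 4 * Real.exp x := by
  have h1 : x/2 + 1 ≤ Real.exp (x/2) := Real.add_one_le_exp (x/2)
  have h2 : Real.exp (x/2) * Real.exp (x/2) = Real.exp x := by
    rw [← Real.exp_add]; ring_nf
  nlinarith [Real.exp_pos (x/2)]

-- log bounds
lemma log_upper {y : ℝ} (hy : |y| ≤ 1/40) : Real.log (1+y) ≤ y := by
  have h : (0:ℝ) < 1 + y := by cases abs_le.mp hy; linarith
  have := Real.log_le_sub_one_of_pos h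
  linarith

lemma log_lower {y : ℝ} (hy : |y| ≤ 1/40) : y - (40/39) * y^2 ≤ Real.log (1+y) := by
  obtain ⟨h1, h2⟩ := abs_le.mp hy
  have h : (0:ℝ) < 1 + y := by linarith
  have h' : (0:ℝ) < (1+y)⁻¹ := by positivity
  have hl := Real.log_le_sub_one_of_pos h'
  rw [Real.log_inv] at hl
  -- log(1+y) ≥ 1 - 1/(1+y)
  have key : 1 - (1+y)⁻¹ ≤ Real.log (1+y) := by linarith
  have hinv : (1+y)⁻¹ * (1+y) = 1 := inv_mul_cancel₀ h.ne'
  nlinarith [sq_nonneg y, mul_pos h' h]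

lemma coeff_bound (q : ℝ) (hq : 0 ≤ q) :
    (40/39) * q + (40/39)^2 * q^2 * Real.exp (q/39) ≤ 6 * Real.exp q := by
  have h1 : q + 1 ≤ Real.exp q := Real.add_one_le_exp q
  have h2 : (38*q/39)^2 ≤ 4 * Real.exp (38*q/39) := sq_le_four_exp (by positivity)
  have h3 : Real.exp (38*q/39) * Real.exp (q/39) = Real.exp q := by
    rw [← Real.exp_add]; ring_nf
  have h4 : (0:ℝ) < Real.exp (q/39) := Real.exp_pos _
  have h5 : q^2 * Real.exp (q/39) ≤ 4 * (39/38)^2 * Real.exp q := by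
    have := mul_le_mul_of_nonneg_right h2 h4.le
    nlinarith
  have h6 : (0:ℝ) < Real.exp q := Real.exp_pos _
  nlinarith

set_option maxHeartbeats 800000 in
lemma tilt_pointwise {p y : ℝ} (hy : |y| ≤ 1/40) :
    (1+y) ^ p ≤ 1 + p*y + 6 * Real.exp |p| * y^2 := by
  obtain ⟨hy1, hy2⟩ := abs_le.mp hy
  have hpos : (0:ℝ) < 1 + y := by linarith
  obtain ⟨L, hLdef⟩ : ∃ L, L = Real.log (1+y) := ⟨_, rfl⟩
  have hrw : (1+y) ^ p = Real.exp (p * L) := by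
    rw [Real.rpow_def_of_pos hpos, ← hLdef, mul_comm]
  have hU : L ≤ y := hLdef ▸ log_upper hy
  have hLo : y - (40/39) * y^2 ≤ L := hLdef ▸ log_lower hy
  have hysq : y^2 ≤ |y| * (1/40) := by
    nlinarith [abs_mul_abs_self y, mul_le_mul_of_nonneg_left hy (abs_nonneg y)]
  have hyabs : (0:ℝ) ≤ |y| := abs_nonneg y
  have hLabs : |L| ≤ (40/39) * |y| := by
    rw [abs_le]
    constructor
    · have : -|y| ≤ y := neg_abs_le y
      nlinarith
    · have : y ≤ |y| := le_abs_self y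
      nlinarith
  have hLsmall : |L| ≤ 1/39 := by nlinarith
  have hq : (0:ℝ) ≤ |p| := abs_nonneg p
  have hpL : |p * L| ≤ |p| / 39 := by
    rw [abs_mul]
    nlinarith
  have hexp1 : Real.exp (p*L) ≤ 1 + p*L + (p*L)^2 * Real.exp |p*L| := exp_quad (p*L)
  have hexp2 : Real.exp |p*L| ≤ Real.exp (|p|/39) := Real.exp_le_exp.mpr hpL
  have hlin : p * L ≤ p * y + |p| * ((40/39) * y^2) := by
    have h1 : p * (L - y) ≤ |p * (L - y)| := le_abs_self _
    have h2 : |p * (L - y)| = |p| * |L - y| := abs_mul _ _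
    have h3 : |L - y| ≤ (40/39) * y^2 := by
      rw [abs_le]; constructor <;> nlinarith
    nlinarith [mul_le_mul_of_nonneg_left h3 hq]
  have hsq : (p*L)^2 ≤ p^2 * ((40/39)^2 * y^2) := by
    have : (p*L)^2 = p^2 * L^2 := by ring
    rw [this]
    have hL2 : L^2 ≤ (40/39)^2 * y^2 := by
      have := abs_nonneg L
      nlinarith [sq_abs L, sq_abs y]
    nlinarith [sq_nonneg p]
  have hquad : (p*L)^2 * Real.exp |p*L| ≤ p^2 * ((40/39)^2 * y^2) * Real.exp (|p|/39) := by
    apply mul_le_mul hsq hexp2 (Real.exp_pos _).le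
    nlinarith [sq_nonneg (p*L)]
  have hcoeff := coeff_bound |p| hq
  have hy2 : (0:ℝ) ≤ y^2 := sq_nonneg y
  rw [hrw]
  calc Real.exp (p*L) ≤ 1 + p*L + (p*L)^2 * Real.exp |p*L| := hexp1
    _ ≤ 1 + (p*y + |p| * ((40/39)*y^2)) + p^2 * ((40/39)^2 * y^2) * Real.exp (|p|/39) := by
        linarith
    _ ≤ 1 + p*y + 6 * Real.exp |p| * y^2 := by
        have hc2 : ((40/39) * |p| + (40/39)^2 * |p|^2 * Real.exp (|p|/39)) * y^2 ≤ (6 * Real.exp |p|) * y^2 :=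
          mul_le_mul_of_nonneg_right hcoeff hy2
        rw [sq_abs] at hc2
        nlinarith

set_option maxHeartbeats 4000000 in
/-- **Exponential tilting of a square-integrable random variable.**
Let `μ` be the law of a real random variable `X` with `0 < E[X²] < ∞`, and let
`A > 0` satisfy `E[X² 1_{|X|>A}] ≤ (1/4) E[X²]`.  Set `ε = E[X²]²/(144 A³)` and
assume `|E[X]| ≤ ε`.  Then there is a measurable density `f > 0` with
`∫ f dμ = 1`, `∫ x f(x) dμ = 0`,
`∫ x² f(x) dμ ≤ E[X²] + (A^{3/2}/√ε) |E[X]|`, and for every `p ∈ ℝ`,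
`∫ f(x)^p dμ ≤ 1 + (4 e^{|p|}/(A ε)) E[X]²`. -/
theorem exponential_tilting
    (μ : Measure ℝ) [IsProbabilityMeasure μ]
    (hL2 : Integrable (fun x => x ^ 2) μ)
    (hpos : 0 < ∫ x, x ^ 2 ∂μ)
    (A : ℝ) (hA : 0 < A)
    (htrunc : ∫ x in {x : ℝ | A < |x|}, x ^ 2 ∂μ ≤ (1 / 4) * ∫ x, x ^ 2 ∂μ)
    (ε : ℝ) (hε : ε = (∫ x, x ^ 2 ∂μ) ^ 2 / (144 * A ^ 3))
    (hmean : |∫ x, x ∂μ| ≤ ε) :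
    ∃ f : ℝ → ℝ, Measurable f ∧ (∀ x, 0 < f x) ∧
      (∫ x, f x ∂μ = 1) ∧
      (∫ x, x * f x ∂μ = 0) ∧
      (∫ x, x ^ 2 * f x ∂μ
        ≤ (∫ x, x ^ 2 ∂μ) + (A ^ ((3 : ℝ) / 2) / Real.sqrt ε) * |∫ x, x ∂μ|) ∧
      (∀ p : ℝ, ∫ x, f x ^ p ∂μ ≤ 1 + (4 * Real.exp |p| / (A * ε)) * (∫ x, x ∂μ) ^ 2) := by
  set s := ∫ x, x ^ 2 ∂μ with hs_def
  set m := ∫ x, x ∂μ with hm_def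
  clear_value s m
  obtain ⟨T, hTdef⟩ : ∃ T : ℝ → ℝ, T = fun x => if |x| ≤ A then x else 0 := ⟨_, rfl⟩
  have hTmeas : Measurable T := by
    rw [hTdef]
    exact Measurable.ite (measurableSet_le (measurable_abs) measurable_const)
      measurable_id measurable_const
  have hT_le_A : ∀ x, |T x| ≤ A := by
    intro x; rw [hTdef]; dsimp only
    by_cases h : |x| ≤ A
    · simpa [h] using h
    · simp [h, hA.le]
  have hT_le_x : ∀ x, |T x| ≤ |x| := by
    intro x; rw [hTdef]; dsimp only
    by_cases h : |x| ≤ A <;> simp [h]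
  have hxT : ∀ x, x * T x = T x ^ 2 := by
    intro x; rw [hTdef]; dsimp only
    by_cases h : |x| ≤ A <;> simp [h] <;> ring
  -- integrability
  have hX : Integrable (fun x => x) μ := by
    apply Integrable.mono' (hL2.add (integrable_const 1)) measurable_id.aestronglyMeasurable
    filter_upwards with x
    simp only [Real.norm_eq_abs, Pi.add_apply, id_eq]
    nlinarith only [sq_abs x, sq_nonneg (|x| - 1)]
  have hT_int : Integrable T μ := by
    apply Integrable.mono' (integrable_const A) hTmeas.aestronglyMeasurable
    filter_upwards with x
    simpa using hT_le_A x
  have hT2_int : Integrable (fun x => T x ^ 2) μ := by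
    apply Integrable.mono' (integrable_const (A^2)) (hTmeas.pow_const 2).aestronglyMeasurable
    filter_upwards with x
    simp only [Real.norm_eq_abs, abs_pow]
    nlinarith only [hT_le_A x, abs_nonneg (T x), sq_abs (T x), hA]
  have hxT_int : Integrable (fun x => x * T x) μ := by
    have : (fun x => x * T x) = fun x => T x ^ 2 := funext hxT
    rw [this]; exact hT2_int
  have hx2T_int : Integrable (fun x => x ^ 2 * T x) μ := by
    apply Integrable.mono' (hL2.const_mul A) ((measurable_id.pow_const 2).mul hTmeas).aestronglyMeasurable
    filter_upwards with x
    simp only [Real.norm_eq_abs, Pi.mul_apply, abs_mul, abs_pow, sq_abs, id_eq]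
    have h := hT_le_A x
    nlinarith only [sq_nonneg x, mul_le_mul_of_nonneg_left h (sq_nonneg x)]
  -- second moment of T
  obtain ⟨s₁, hs1_def⟩ : ∃ r, r = ∫ x, T x ^ 2 ∂μ := ⟨_, rfl⟩
  have hSmeas : MeasurableSet {x : ℝ | |x| ≤ A} :=
    measurableSet_le (measurable_abs) measurable_const
  have hcompl : {x : ℝ | A < |x|} = {x : ℝ | |x| ≤ A}ᶜ := by
    ext x; simp [not_le]
  have hT2_ind : (fun x => T x ^ 2) = Set.indicator {x : ℝ | |x| ≤ A} (fun x => x ^ 2) := by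
    funext x
    rw [hTdef]
    by_cases h : |x| ≤ A
    · simp [h, Set.indicator_of_mem, Set.mem_setOf_eq]
    · simp [h, Set.indicator_of_notMem, Set.mem_setOf_eq]
  have hs1_split : s₁ = ∫ x in {x : ℝ | |x| ≤ A}, x ^ 2 ∂μ := by
    rw [hs1_def, hT2_ind, integral_indicator hSmeas]
  have hs_split : (∫ x in {x : ℝ | |x| ≤ A}, x ^ 2 ∂μ) + (∫ x in {x : ℝ | A < |x|}, x ^ 2 ∂μ) = s := by
    rw [hcompl, hs_def]
    exact integral_add_compl hSmeas hL2
  have hs1_ge : (3/4) * s ≤ s₁ := by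
    rw [hs1_split]; linarith only [hs_split, htrunc]
  have hs1_le_A2 : s₁ ≤ A ^ 2 := by
    rw [hs1_def]
    calc ∫ x, T x ^ 2 ∂μ ≤ ∫ _x, A ^ 2 ∂μ := by
          apply integral_mono hT2_int (integrable_const _)
          intro x
          show T x ^ 2 ≤ A ^ 2
          have := hT_le_A x
          nlinarith only [this, abs_nonneg (T x), sq_abs (T x), hA]
      _ = A ^ 2 := by simp
  have hs1_pos : 0 < s₁ := lt_of_lt_of_le (by linarith only [hpos]) hs1_ge
  have hs_le : s ≤ (4/3) * A ^ 2 := by linarith only [hs1_ge, hs1_le_A2]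
  -- mean of T
  obtain ⟨ET, hET_def⟩ : ∃ r, r = ∫ x, T x ∂μ := ⟨_, rfl⟩
  have hET_le : |ET| ≤ A := by
    rw [hET_def]
    calc |∫ x, T x ∂μ| ≤ ∫ x, |T x| ∂μ := by
          simpa [Real.norm_eq_abs] using norm_integral_le_integral_norm (μ := μ) T
      _ ≤ ∫ _x, A ∂μ := integral_mono hT_int.abs (integrable_const _) hT_le_A
      _ = A := by simp
  -- the tilt parameter
  obtain ⟨t, ht_def⟩ : ∃ r, r = -m / s₁ := ⟨_, rfl⟩
  have ht_abs : |t| = |m| / s₁ := by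
    rw [ht_def, abs_div, abs_neg, abs_of_pos hs1_pos]
  have htA : |t| * A ≤ 1/81 := by
    rw [ht_abs]
    rw [div_mul_eq_mul_div, div_le_iff₀ hs1_pos]
    have h1 : |m| ≤ ε := hmean
    have h2 : ε = s^2/(144 * A^3) := hε
    have hA3 : (0:ℝ) < A^3 := by positivity
    have h3 : |m| * A ≤ s^2/(144*A^3) * A := by
      apply mul_le_mul_of_nonneg_right _ hA.le; rw [← h2]; exact h1
    have h4 : s^2/(144*A^3)*A = s^2/(144*A^2) := by field_simp
    -- s^2 ≤ (16/9) A^2 s₁ hence s^2/(144A^2) ≤ s₁/81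
    have hs43 : s ≤ (4/3) * s₁ := by linarith only [hs1_ge]
    have h5 : s^2 ≤ (16/9) * A^2 * s₁ := by
      have f1 : s * s ≤ s * ((4/3) * s₁) := mul_le_mul_of_nonneg_left hs43 hpos.le
      have f2 : s * ((4/3) * s₁) ≤ ((4/3) * A^2) * ((4/3) * s₁) :=
        mul_le_mul_of_nonneg_right hs_le (by positivity)
      nlinarith only [f1, f2]
    have h6 : s^2/(144*A^2) ≤ 1/81 * s₁ := by
      rw [div_le_iff₀ (by positivity : (0:ℝ) < 144*A^2)]
      nlinarith only [h5]
    linarith only [h3, h4, h6]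
  obtain ⟨Z, hZ_def⟩ : ∃ r, r = 1 + t * ET := ⟨_, rfl⟩
  have htET : |t * ET| ≤ 1/81 := by
    rw [abs_mul]
    calc |t| * |ET| ≤ |t| * A := mul_le_mul_of_nonneg_left hET_le (abs_nonneg t)
      _ ≤ 1/81 := htA
  have hZ_lb : 80/81 ≤ Z := by
    have := abs_le.mp htET
    rw [hZ_def]; linarith only [this.1]
  have hZ_ub : Z ≤ 82/81 := by
    have := abs_le.mp htET
    rw [hZ_def]; linarith only [this.2]
  have hZpos : (0:ℝ) < Z := by linarith only [hZ_lb]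
  -- the density
  have htT : ∀ x, |t * T x| ≤ 1/81 := by
    intro x
    rw [abs_mul]
    calc |t| * |T x| ≤ |t| * A := mul_le_mul_of_nonneg_left (hT_le_A x) (abs_nonneg t)
      _ ≤ 1/81 := htA
  have hnum_pos : ∀ x, (0:ℝ) < 1 + t * T x := by
    intro x
    have h2 := abs_le.mp (htT x)
    linarith only [h2.1]
  have hf_pos : ∀ x, (0:ℝ) < (1 + t * T x) / Z := fun x => div_pos (hnum_pos x) hZpos
  have hf_meas : Measurable (fun x => (1 + t * T x) / Z) :=
    ((hTmeas.const_mul t).const_add 1).div_const Z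
  have hf_int : Integrable (fun x => (1 + t * T x) / Z) μ :=
    (((integrable_const 1).add (hT_int.const_mul t)).div_const Z)
  have hts : |t| * s ≤ (4/3) * |m| := by
    rw [ht_abs, div_mul_eq_mul_div, div_le_iff₀ hs1_pos]
    linarith only [mul_le_mul_of_nonneg_left hs1_ge (abs_nonneg m)]
  -- (i)
  have hone : ∫ x, (1 + t * T x) / Z ∂μ = 1 := by
    rw [integral_div, integral_add (integrable_const 1) (hT_int.const_mul t),
      integral_const_mul, integral_const, ← hET_def]
    simp only [probReal_univ, measure_univ, ENNReal.toReal_one, smul_eq_mul, one_mul]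
    rw [← hZ_def, div_self hZpos.ne']
  -- (ii)
  have hzero : ∫ x, x * ((1 + t * T x) / Z) ∂μ = 0 := by
    have hrw : (fun x => x * ((1 + t * T x) / Z)) = fun x => (x + t * (x * T x)) / Z := by
      funext x; field_simp
    rw [hrw, integral_div, integral_add hX (hxT_int.const_mul t), integral_const_mul]
    have hTT : ∫ x, x * T x ∂μ = s₁ := by
      rw [hs1_def]; congr 1; exact funext hxT
    rw [hTT, ← hm_def, ht_def]
    field_simp
    ring
  -- (iii)
  have hthird : ∫ x, x ^ 2 * ((1 + t * T x) / Z) ∂μ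
      ≤ s + (A ^ ((3 : ℝ) / 2) / Real.sqrt ε) * |m| := by
    obtain ⟨c₃, hc3_def⟩ : ∃ r, r = ∫ x, x ^ 2 * T x ∂μ := ⟨_, rfl⟩
    have hc3 : |c₃| ≤ A * s := by
      rw [hc3_def]
      calc |∫ x, x ^ 2 * T x ∂μ| ≤ ∫ x, |x ^ 2 * T x| ∂μ := by
            simpa only [Real.norm_eq_abs] using
              norm_integral_le_integral_norm (μ := μ) (fun x => x ^ 2 * T x)
        _ ≤ ∫ x, A * x ^ 2 ∂μ := by
            apply integral_mono hx2T_int.abs (hL2.const_mul A)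
            intro x
            show |x ^ 2 * T x| ≤ A * x ^ 2
            rw [abs_mul, abs_pow, sq_abs]
            exact mul_le_mul_of_nonneg_left (hT_le_A x) (sq_nonneg x) |>.trans_eq (mul_comm _ _)
        _ = A * s := by rw [integral_const_mul A _, ← hs_def]
    have heq : ∫ x, x ^ 2 * ((1 + t * T x) / Z) ∂μ = (s + t * c₃) / Z := by
      have hrw : (fun x => x ^ 2 * ((1 + t * T x) / Z)) = fun x => (x ^ 2 + t * (x ^ 2 * T x)) / Z := by
        funext x; field_simp
      rw [hrw, integral_div, integral_add hL2 (hx2T_int.const_mul t), integral_const_mul,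
        ← hs_def, ← hc3_def]
    rw [heq]
    have hb1 : |t * c₃| ≤ (4/3) * (A * |m|) := by
      rw [abs_mul]
      calc |t| * |c₃| ≤ |t| * (A * s) := mul_le_mul_of_nonneg_left hc3 (abs_nonneg t)
        _ = A * (|t| * s) := by ring
        _ ≤ A * ((4/3) * |m|) := mul_le_mul_of_nonneg_left hts hA.le
        _ = (4/3) * (A * |m|) := by ring
    have hb2 : |t * (s * ET)| ≤ (4/3) * (A * |m|) := by
      rw [abs_mul, abs_mul, abs_of_pos hpos]
      calc |t| * (s * |ET|) ≤ |t| * (s * A) := by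
            apply mul_le_mul_of_nonneg_left _ (abs_nonneg t)
            exact mul_le_mul_of_nonneg_left hET_le hpos.le
        _ = A * (|t| * s) := by ring
        _ ≤ A * ((4/3) * |m|) := mul_le_mul_of_nonneg_left hts hA.le
        _ = (4/3) * (A * |m|) := by ring
    have hAm : (0:ℝ) ≤ A * |m| := mul_nonneg hA.le (abs_nonneg m)
    have hZbig : 9 * (A * |m|) * (80/81) ≤ 9 * (A * |m|) * Z :=
      mul_le_mul_of_nonneg_left hZ_lb (by positivity)
    have hsZ : s * Z = s + t * (s * ET) := by rw [hZ_def]; ring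
    have key : s + t * c₃ ≤ (s + 9 * (A * |m|)) * Z := by
      have e1 := abs_le.mp hb1
      have e2 := abs_le.mp hb2
      have expand : (s + 9 * (A * |m|)) * Z = s * Z + 9 * (A * |m|) * Z := by ring
      linarith only [e1.2, e2.1, hZbig, hsZ, expand, hAm]
    have step1 : (s + t * c₃) / Z ≤ s + 9 * (A * |m|) := by
      rw [div_le_iff₀ hZpos]; exact key
    -- now the coefficient comparison
    have hB : (0:ℝ) < A ^ ((3:ℝ)/2) := Real.rpow_pos_of_pos hA _
    have hB2 : (A ^ ((3:ℝ)/2)) ^ 2 = A ^ 3 := by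
      rw [← Real.rpow_natCast (A ^ ((3:ℝ)/2)) 2, ← Real.rpow_mul hA.le]
      norm_num
    have hε' : ε = (s / (12 * A ^ ((3:ℝ)/2))) ^ 2 := by
      rw [hε, div_pow, mul_pow, hB2]
      norm_num
    have hsqrtε : Real.sqrt ε = s / (12 * A ^ ((3:ℝ)/2)) := by
      rw [hε', Real.sqrt_sq (by positivity)]
    have hcoef : A ^ ((3:ℝ)/2) / Real.sqrt ε = 12 * A ^ 3 / s := by
      rw [hsqrtε, div_div_eq_mul_div]
      congr 1
      linear_combination 12 * hB2
    rw [hcoef]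
    have : 9 * (A * |m|) ≤ 12 * A ^ 3 / s * |m| := by
      rw [div_mul_eq_mul_div, le_div_iff₀ hpos]
      linarith only [mul_le_mul_of_nonneg_left hs_le (by positivity : (0:ℝ) ≤ 9 * (A * |m|))]
    linarith only [step1, this]
  -- (iv)
  have hfourth : ∀ p : ℝ, ∫ x, ((1 + t * T x) / Z) ^ p ∂μ
      ≤ 1 + 4 * Real.exp |p| / (A * ε) * m ^ 2 := by
    obtain ⟨G, hG_def⟩ : ∃ G : ℝ → ℝ, G = fun x => (1 + t * T x) / Z - 1 := ⟨_, rfl⟩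
    have hg_eq : ∀ x, (1 + t * T x) / Z = 1 + G x := by
      intro x; rw [hG_def]; ring
    have hG_num : ∀ x, G x = (t * T x - t * ET) / Z := by
      intro x
      rw [hG_def]
      field_simp
      rw [hZ_def]; ring
    have hG_abs : ∀ x, |G x| ≤ 1/40 := by
      intro x
      rw [hG_num x, abs_div, abs_of_pos hZpos]
      have h1 : |t * T x - t * ET| ≤ 2/81 := by
        have := abs_sub (t * T x) (t * ET)
        have h2 := htT x
        have h3 := htET
        calc |t * T x - t * ET| ≤ |t * T x| + |t * ET| := abs_sub _ _
          _ ≤ 2/81 := by linarith only [h2, h3]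
      rw [div_le_iff₀ hZpos]
      linarith only [h1, hZ_lb]
    have hG_meas : Measurable G := by
      rw [hG_def]; exact hf_meas.sub measurable_const
    have hG_int : Integrable G μ := by
      rw [hG_def]; exact hf_int.sub (integrable_const 1)
    have hG2_int : Integrable (fun x => G x ^ 2) μ := by
      apply Integrable.mono' (integrable_const ((1:ℝ)/1600)) (hG_meas.pow_const 2).aestronglyMeasurable
      filter_upwards with x
      rw [Real.norm_eq_abs, abs_pow]
      nlinarith only [hG_abs x, abs_nonneg (G x), sq_abs (G x)]
    have hG_zero : ∫ x, G x ∂μ = 0 := by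
      rw [hG_def]
      rw [integral_sub hf_int (integrable_const 1), hone, integral_const]
      simp
    -- bound on ∫ G²
    have hTsub_int : Integrable (fun x => (T x - ET) ^ 2) μ := by
      have : (fun x => (T x - ET) ^ 2) = fun x => T x ^ 2 - 2 * ET * T x + ET ^ 2 := by
        funext x; ring
      rw [this]
      exact (hT2_int.sub ((hT_int.const_mul (2 * ET)))).add (integrable_const _)
    have hsub_int : Integrable (fun x => T x ^ 2 - (2 * ET) * T x) μ := by
      exact hT2_int.sub (hT_int.const_mul (2 * ET))
    have hvar : ∫ x, (T x - ET) ^ 2 ∂μ = s₁ - ET ^ 2 := by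
      have h : (fun x => (T x - ET) ^ 2) = fun x => (T x ^ 2 - (2 * ET) * T x) + ET ^ 2 := by
        funext x; ring
      rw [h, integral_add hsub_int (integrable_const _),
        integral_sub hT2_int (hT_int.const_mul (2 * ET)), integral_const_mul, ← hs1_def,
        ← hET_def, integral_const]
      simp only [probReal_univ, measure_univ, ENNReal.toReal_one, smul_eq_mul, one_mul]
      ring
    have hGsq_eq : ∫ x, G x ^ 2 ∂μ = (t / Z) ^ 2 * (s₁ - ET ^ 2) := by
      have h : (fun x => G x ^ 2) = fun x => (t / Z) ^ 2 * (T x - ET) ^ 2 := by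
        funext x
        rw [hG_num x]
        field_simp
      rw [h, integral_const_mul, hvar]
    have hG2_bound : ∫ x, G x ^ 2 ∂μ ≤ 2 * m ^ 2 / s := by
      rw [hGsq_eq]
      have h1 : (t / Z) ^ 2 * (s₁ - ET ^ 2) ≤ (t / Z) ^ 2 * s₁ :=
        mul_le_mul_of_nonneg_left (by linarith only [sq_nonneg ET]) (sq_nonneg _)
      have h2 : (t / Z) ^ 2 * s₁ = (m ^ 2 / s₁) / Z ^ 2 := by
        rw [ht_def]
        field_simp
      have hZsq : (80/81) ^ 2 ≤ Z ^ 2 := by nlinarith only [hZ_lb, sq_nonneg (Z - 80/81)]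
      have h3 : (m ^ 2 / s₁) / Z ^ 2 ≤ 2 * m ^ 2 / s := by
        rw [div_div, div_le_div_iff₀ (by positivity : (0:ℝ) < s₁ * Z ^ 2) hpos]
        have ha : m ^ 2 * s ≤ m ^ 2 * ((4/3) * s₁) :=
          mul_le_mul_of_nonneg_left (by linarith only [hs1_ge]) (sq_nonneg m)
        have hb : 2 * m ^ 2 * s₁ * (80/81) ^ 2 ≤ 2 * m ^ 2 * s₁ * Z ^ 2 :=
          mul_le_mul_of_nonneg_left hZsq (by positivity)
        have hc : (0:ℝ) ≤ m ^ 2 * s₁ := by positivity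
        nlinarith only [ha, hb, hc]
      calc (t / Z) ^ 2 * (s₁ - ET ^ 2) ≤ (t / Z) ^ 2 * s₁ := h1
        _ = (m ^ 2 / s₁) / Z ^ 2 := h2
        _ ≤ 2 * m ^ 2 / s := h3
    intro p
    have hep : (0:ℝ) < Real.exp |p| := Real.exp_pos _
    -- pointwise bound
    have hpt : ∀ x, ((1 + t * T x) / Z) ^ p ≤ 1 + p * G x + 6 * Real.exp |p| * G x ^ 2 := by
      intro x
      rw [hg_eq x]
      exact tilt_pointwise (hG_abs x)
    -- integrability of f^p
    have hfp_int : Integrable (fun x => ((1 + t * T x) / Z) ^ p) μ := by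
      apply Integrable.mono' (integrable_const (Real.exp |p|))
        (hf_meas.pow_const p).aestronglyMeasurable
      filter_upwards with x
      rw [Real.norm_eq_abs, abs_of_pos (Real.rpow_pos_of_pos (hf_pos x) p)]
      rw [hg_eq x, Real.rpow_def_of_pos (by linarith only [(abs_le.mp (hG_abs x)).1] : (0:ℝ) < 1 + G x)]
      apply Real.exp_le_exp.mpr
      have hgx := hG_abs x
      have hlogu := log_upper hgx
      have hlogl := log_lower hgx
      have hlog_abs : |Real.log (1 + G x)| ≤ 1 := by
        rw [abs_le]
        have := abs_le.mp hgx
        constructor <;> nlinarith only [hlogu, hlogl, this.1, this.2, sq_nonneg (G x)]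
      calc Real.log (1 + G x) * p ≤ |Real.log (1 + G x) * p| := le_abs_self _
        _ = |Real.log (1 + G x)| * |p| := abs_mul _ _
        _ ≤ 1 * |p| := mul_le_mul_of_nonneg_right hlog_abs (abs_nonneg p)
        _ = |p| := one_mul _
    -- RHS integrable
    have hlin_int : Integrable (fun x => 1 + p * G x) μ := by
      exact (integrable_const 1).add (hG_int.const_mul p)
    have hrhs_int : Integrable (fun x => 1 + p * G x + 6 * Real.exp |p| * G x ^ 2) μ := by
      exact hlin_int.add (hG2_int.const_mul (6 * Real.exp |p|))
    have hint_le : ∫ x, ((1 + t * T x) / Z) ^ p ∂μ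
        ≤ ∫ x, (1 + p * G x + 6 * Real.exp |p| * G x ^ 2) ∂μ :=
      integral_mono hfp_int hrhs_int hpt
    have hrhs_eq : ∫ x, (1 + p * G x + 6 * Real.exp |p| * G x ^ 2) ∂μ
        = 1 + 6 * Real.exp |p| * ∫ x, G x ^ 2 ∂μ := by
      rw [integral_add hlin_int (hG2_int.const_mul (6 * Real.exp |p|)),
        integral_add (integrable_const 1) (hG_int.const_mul p),
        integral_const_mul, integral_const_mul, hG_zero, integral_const]
      simp
    -- final numeric comparison
    have hAε : A * ε = s ^ 2 / (144 * A ^ 2) := by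
      rw [hε]; field_simp
    have hfinal : 6 * Real.exp |p| * (2 * m ^ 2 / s) ≤ 4 * Real.exp |p| / (A * ε) * m ^ 2 := by
      rw [hAε]
      have e1 : 4 * Real.exp |p| / (s ^ 2 / (144 * A ^ 2)) * m ^ 2
          = 576 * Real.exp |p| * A ^ 2 * m ^ 2 / s ^ 2 := by
        rw [div_div_eq_mul_div, div_mul_eq_mul_div]
        ring_nf
      have e2 : 6 * Real.exp |p| * (2 * m ^ 2 / s) = 12 * Real.exp |p| * m ^ 2 / s := by
        ring
      rw [e1, e2, div_le_div_iff₀ hpos (by positivity : (0:ℝ) < s ^ 2)]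
      have h1 : 12 * Real.exp |p| * m ^ 2 * s * s ≤ 12 * Real.exp |p| * m ^ 2 * ((4/3) * A ^ 2) * s := by
        apply mul_le_mul_of_nonneg_right _ hpos.le
        exact mul_le_mul_of_nonneg_left hs_le (by positivity)
      have h2 : (0:ℝ) ≤ Real.exp |p| * m ^ 2 * A ^ 2 * s := by positivity
      linarith only [h1, h2]
    have h6 : 6 * Real.exp |p| * ∫ x, G x ^ 2 ∂μ ≤ 6 * Real.exp |p| * (2 * m ^ 2 / s) :=
      mul_le_mul_of_nonneg_left hG2_bound (by positivity)
    rw [hrhs_eq] at hint_le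
    linarith only [hint_le, h6, hfinal]
  exact ⟨fun x => (1 + t * T x) / Z, hf_meas, hf_pos, hone, hzero, hthird, hfourth⟩
end

section
/- Truncation decomposition of a centered square-integrable random variable: Let Y be a real random variable with E[Y] = 0 and E[Y²] < ∞, and let M ∈ (0,∞). Then there exist a probability space carrying random variables Y′, Y⁻, Y⁺ such that: Y′ has the same law as Y; Y′ = Y⁻ + Y⁺; E[Y⁻] = E[Y⁺] = 0; Y⁻·Y⁺ = 0 almost surely; |Y⁻| ≤ |Y′|·1_{|Y′| ≤ M} almost surely; and E[(Y⁺)²] ≤ 2·E[Y²·1_{|Y| > M}]. -/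
open MeasureTheory ProbabilityTheory

section Aux

open Set

/-- The uniform measure on `[0,1]`. -/
noncomputable def unif : Measure ℝ := volume.restrict (Set.Icc (0:ℝ) 1)

instance : IsProbabilityMeasure unif :=
  ⟨by simp [unif, Real.volume_Icc]⟩

lemma unif_Iio_toReal {t : ℝ} (ht0 : 0 ≤ t) (ht1 : t ≤ 1) :
    (unif (Set.Iio t)).toReal = t := by
  have h : Set.Iio t ∩ Set.Icc (0:ℝ) 1 = Set.Ico 0 t := by
    ext x
    simp only [Set.mem_inter_iff, Set.mem_Iio, Set.mem_Icc, Set.mem_Ico]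
    constructor
    · rintro ⟨h, h0, _⟩; exact ⟨h0, h⟩
    · rintro ⟨h0, h⟩; exact ⟨h, h0, h.le.trans ht1⟩
  rw [unif, Measure.restrict_apply measurableSet_Iio, h, Real.volume_Ico]
  simp [ht0]

lemma unif_Ici_toReal {t : ℝ} (ht0 : 0 ≤ t) (ht1 : t ≤ 1) :
    (unif (Set.Ici t)).toReal = 1 - t := by
  have h : Set.Ici t ∩ Set.Icc (0:ℝ) 1 = Set.Icc t 1 := by
    ext x
    simp only [Set.mem_inter_iff, Set.mem_Ici, Set.mem_Icc]
    constructor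
    · rintro ⟨h, _, h1⟩; exact ⟨h, h1⟩
    · rintro ⟨h, h1⟩; exact ⟨h, ht0.trans h, h1⟩
  rw [unif, Measure.restrict_apply measurableSet_Ici, h, Real.volume_Icc]
  rw [ENNReal.toReal_ofReal (by linarith)]

end Aux

set_option maxHeartbeats 1000000 in
/-- **Truncation decomposition of a centered square-integrable random variable.**
Let `Y` be a centered random variable in `L²` and `M > 0`.  Then on some
(possibly enlarged) probability space there are `Y', Y⁻, Y⁺` with `Y'`
distributed as `Y`, `Y' = Y⁻ + Y⁺`, both parts centered, `Y⁻ Y⁺ = 0` a.s.,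
`|Y⁻| ≤ |Y'| 1_{|Y'| ≤ M}` a.s., and `E[(Y⁺)²] ≤ 2 E[Y² 1_{|Y| > M}]`. -/
theorem truncation_decomposition
    {Ω : Type*} [MeasureSpace Ω] [IsProbabilityMeasure (ℙ : Measure Ω)]
    (Y : Ω → ℝ) (hYmeas : Measurable Y) (hYL2 : MemLp Y 2 ℙ)
    (hYmean : ∫ a, Y a ∂ℙ = 0)
    (M : ℝ) (hM : 0 < M) :
    ∃ (Ω' : Type) (_ : MeasurableSpace Ω') (P' : Measure Ω'),
      IsProbabilityMeasure P' ∧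
      ∃ Y' Ym Yp : Ω' → ℝ,
        Measurable Y' ∧ Measurable Ym ∧ Measurable Yp ∧
        Measure.map Y' P' = Measure.map Y ℙ ∧
        (∀ ω, Y' ω = Ym ω + Yp ω) ∧
        (∫ ω, Ym ω ∂P' = 0) ∧ (∫ ω, Yp ω ∂P' = 0) ∧
        (∀ᵐ ω ∂P', Ym ω * Yp ω = 0) ∧
        (∀ᵐ ω ∂P', |Ym ω| ≤ Set.indicator {x : ℝ | |x| ≤ M} (fun x => |x|) (Y' ω)) ∧
        (∫ ω, (Yp ω) ^ 2 ∂P' ≤ 2 * ∫ a in {a | M < |Y a|}, (Y a) ^ 2 ∂ℙ) := by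
  classical
  -- the law of `Y`
  set π : Measure ℝ := Measure.map Y ℙ with hπ
  haveI hπprob : IsProbabilityMeasure π := Measure.isProbabilityMeasure_map hYmeas.aemeasurable
  -- basic integrability on the law
  have hYint : Integrable Y ℙ := hYL2.integrable one_le_two
  have hXint : Integrable (fun x : ℝ => x) π :=
    (integrable_map_measure aestronglyMeasurable_id hYmeas.aemeasurable).2 hYint
  have hX2int : Integrable (fun x : ℝ => x ^ 2) π :=
    (integrable_map_measure ((measurable_id.pow_const 2).aestronglyMeasurable)
      hYmeas.aemeasurable).2 hYL2.integrable_sq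
  have hXmean : ∫ x, x ∂π = 0 := by
    rw [hπ, integral_map (f := fun x : ℝ => x) hYmeas.aemeasurable measurable_id.aestronglyMeasurable]
    exact hYmean
  -- the truncation region and the compensating constant
  set A0 : Set ℝ := {x | |x| ≤ M} with hA0def
  have hA0 : MeasurableSet A0 := measurableSet_le measurable_id.abs measurable_const
  set c : ℝ := ∫ x in A0, x ∂π with hcdef
  set B : Set ℝ := A0 ∩ {x | c * x ≤ 0} with hBdef
  set C : Set ℝ := A0 ∩ {x | 0 < c * x} with hCdef
  have hB : MeasurableSet B :=
    hA0.inter (measurableSet_le (measurable_const.mul measurable_id) measurable_const)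
  have hC : MeasurableSet C :=
    hA0.inter (measurableSet_lt measurable_const (measurable_const.mul measurable_id))
  have hBCunion : B ∪ C = A0 := by
    ext x
    simp only [hBdef, hCdef, Set.mem_union, Set.mem_inter_iff, Set.mem_setOf_eq]
    constructor
    · rintro (⟨h, _⟩ | ⟨h, _⟩) <;> exact h
    · intro h
      rcases le_or_gt (c * x) 0 with h2 | h2
      · exact Or.inl ⟨h, h2⟩
      · exact Or.inr ⟨h, h2⟩
  have hBCdisj : Disjoint B C := by
    refine Set.disjoint_left.2 ?_
    rintro x ⟨_, hx1⟩ ⟨_, hx2⟩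
    simp only [Set.mem_setOf_eq] at hx1 hx2
    exact absurd hx2 (not_lt.2 hx1)
  set IB : ℝ := ∫ x in B, x ∂π with hIBdef
  set IC : ℝ := ∫ x in C, x ∂π with hICdef
  have hsplit : IB + IC = c := by
    rw [hIBdef, hICdef, hcdef, ← hBCunion,
      setIntegral_union hBCdisj hC hXint.integrableOn hXint.integrableOn]
  have hcIB : c * IB ≤ 0 := by
    have : c * IB = ∫ x in B, c * x ∂π := by
      rw [hIBdef, ← integral_const_mul]
    rw [this]
    exact setIntegral_nonpos hB fun x hx => hx.2
  have hcIC : c ^ 2 ≤ c * IC := by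
    have h2 : c * IB + c * IC = c ^ 2 := by rw [← mul_add, hsplit, sq]
    linarith
  -- the thinning parameter
  set t : ℝ := if IC = 0 then 1 else 1 - c / IC with htdef
  have hc0_of_IC0 : IC = 0 → c = 0 := by
    intro h
    rw [h, mul_zero] at hcIC
    nlinarith
  have ht0 : 0 ≤ t := by
    rw [htdef]
    split_ifs with h
    · norm_num
    · have hIC2 : (0:ℝ) < IC ^ 2 := by positivity
      have h1 : 0 ≤ c * IC := le_trans (sq_nonneg c) hcIC
      have hr2 : (c / IC) ^ 2 ≤ c / IC := by
        rw [div_pow]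
        calc c ^ 2 / IC ^ 2 ≤ (c * IC) / IC ^ 2 := by
              exact (div_le_div_iff_of_pos_right hIC2).2 hcIC
          _ = c / IC := by
              rw [sq]
              field_simp
      nlinarith [hr2, sq_nonneg (c / IC - 1)]
  have ht1 : t ≤ 1 := by
    rw [htdef]
    split_ifs with h
    · exact le_refl 1
    · have hIC2 : (0:ℝ) < IC ^ 2 := by positivity
      have h1 : 0 ≤ c * IC := le_trans (sq_nonneg c) hcIC
      have : 0 ≤ c / IC := by
        have : c / IC = (c * IC) / IC ^ 2 := by rw [sq]; field_simp
        rw [this]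
        positivity
      linarith
  have hteq : IB + t * IC = 0 := by
    rw [htdef]
    split_ifs with h
    · have hc := hc0_of_IC0 h
      rw [h, mul_zero, add_zero]
      have := hsplit
      rw [h, add_zero] at this
      rw [this, hc]
    · have : (1 - c / IC) * IC = IC - c := by field_simp
      rw [this]
      linarith [hsplit]
  have h1tIC : (1 - t) * IC = c := by linear_combination hsplit - hteq
  have h1t : 0 ≤ 1 - t := by linarith
  -- the enlarged space
  set S : Set (ℝ × ℝ) := {p | |p.1| ≤ M ∧ (c * p.1 ≤ 0 ∨ p.2 < t)} with hSdef
  have hS : MeasurableSet S := by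
    have h1 : MeasurableSet {p : ℝ × ℝ | |p.1| ≤ M} :=
      measurableSet_le measurable_fst.abs measurable_const
    have h2 : MeasurableSet {p : ℝ × ℝ | c * p.1 ≤ 0} :=
      measurableSet_le (measurable_const.mul measurable_fst) measurable_const
    have h3 : MeasurableSet {p : ℝ × ℝ | p.2 < t} :=
      measurableSet_lt measurable_snd measurable_const
    exact h1.inter (h2.union h3)
  set P' : Measure (ℝ × ℝ) := π.prod unif with hP'def
  haveI : IsProbabilityMeasure P' := by rw [hP'def]; infer_instance
  set Ym : ℝ × ℝ → ℝ := S.indicator (fun p => p.1) with hYmdef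
  set Yp : ℝ × ℝ → ℝ := Sᶜ.indicator (fun p => p.1) with hYpdef
  have hYmmeas : Measurable Ym := measurable_fst.indicator hS
  have hYpmeas : Measurable Yp := measurable_fst.indicator hS.compl
  -- integrability on the product
  have hfst_int : Integrable (fun p : ℝ × ℝ => p.1) P' := by
    have hmap : (Measure.map Prod.fst P') = π := by
      rw [hP'def, Measure.map_fst_prod, measure_univ, one_smul]
    have := (integrable_map_measure (aestronglyMeasurable_id (μ := Measure.map Prod.fst P'))
      measurable_fst.aemeasurable).1 (by rw [hmap]; exact hXint)
    exact this
  have hfst2_int : Integrable (fun p : ℝ × ℝ => p.1 ^ 2) P' := by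
    have hmap : (Measure.map Prod.fst P') = π := by
      rw [hP'def, Measure.map_fst_prod, measure_univ, one_smul]
    have := (integrable_map_measure
      ((measurable_id.pow_const 2).aestronglyMeasurable (μ := Measure.map Prod.fst P'))
      measurable_fst.aemeasurable).1 (by rw [hmap]; exact hX2int)
    exact this
  have hYm_int : Integrable Ym P' := hfst_int.indicator hS
  have hYp_int : Integrable Yp P' := hfst_int.indicator hS.compl
  have hYp2_eq : (fun p => Yp p ^ 2) = Sᶜ.indicator (fun p : ℝ × ℝ => p.1 ^ 2) := by
    funext p
    by_cases hp : p ∈ Sᶜ <;>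
      simp [hYpdef, Set.indicator_of_mem, Set.indicator_of_notMem, hp]
  have hYp2_int : Integrable (fun p => Yp p ^ 2) P' := by
    rw [hYp2_eq]; exact hfst2_int.indicator hS.compl
  -- first moment of Ym
  have hIntYm : ∫ p, Ym p ∂P' = 0 := by
    rw [hP'def, integral_prod _ (by rw [← hP'def]; exact hYm_int)]
    have hinner : ∀ x : ℝ, (∫ u, Ym (x, u) ∂unif)
        = B.indicator (fun y => y) x + t * C.indicator (fun y => y) x := by
      intro x
      by_cases h1 : |x| ≤ M
      · by_cases h2 : c * x ≤ 0
        · have hmemB : x ∈ B := ⟨h1, h2⟩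
          have hmemC : x ∉ C := fun hx => absurd hx.2 (not_lt.2 h2)
          have : ∀ u : ℝ, Ym (x, u) = x := fun u =>
            Set.indicator_of_mem (show (x, u) ∈ S from ⟨h1, Or.inl h2⟩) _
          simp only [this, integral_const, measure_univ, ENNReal.toReal_one, probReal_univ, one_smul,
            Set.indicator_of_mem hmemB, Set.indicator_of_notMem hmemC, smul_eq_mul,
            mul_zero, add_zero, one_mul]
        · have hmemB : x ∉ B := fun hx => absurd hx.2 h2
          have hmemC : x ∈ C := ⟨h1, not_le.1 h2⟩
          have heq : ∀ u : ℝ, Ym (x, u) = (Set.Iio t).indicator (fun _ => x) u := by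
            intro u
            simp only [hYmdef]
            by_cases hu : u < t
            · rw [Set.indicator_of_mem (show (x, u) ∈ S from ⟨h1, Or.inr hu⟩),
                Set.indicator_of_mem (show u ∈ Set.Iio t from hu)]
            · rw [Set.indicator_of_notMem
                (show (x, u) ∉ S from fun (hp : (x, u) ∈ S) => hp.2.elim h2 hu),
                Set.indicator_of_notMem (show u ∉ Set.Iio t from hu)]
          rw [show (fun u => Ym (x, u)) = fun u => (Set.Iio t).indicator (fun _ => x) u from
            funext heq]
          rw [integral_indicator_const _ measurableSet_Iio, measureReal_def, unif_Iio_toReal ht0 ht1]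
          simp [Set.indicator_of_notMem hmemB, Set.indicator_of_mem hmemC]
      · have hmemB : x ∉ B := fun hx => absurd hx.1 h1
        have hmemC : x ∉ C := fun hx => absurd hx.1 h1
        have : ∀ u : ℝ, Ym (x, u) = 0 := fun u =>
          Set.indicator_of_notMem (fun hp => h1 hp.1) _
        simp [this, Set.indicator_of_notMem hmemB, Set.indicator_of_notMem hmemC]
    rw [show (fun x => ∫ u, Ym (x, u) ∂unif)
        = fun x => B.indicator (fun y => y) x + t * C.indicator (fun y => y) x from
      funext hinner]
    rw [integral_add (hXint.indicator hB) ((hXint.indicator hC).const_mul t),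
      integral_const_mul, integral_indicator hB, integral_indicator hC]
    rw [← hIBdef, ← hICdef]
    exact hteq
  -- first moment of Yp
  have hIntfst : ∫ p, (p.1 : ℝ) ∂P' = 0 := by
    have hmap : (Measure.map Prod.fst P') = π := by
      rw [hP'def, Measure.map_fst_prod, measure_univ, one_smul]
    have : ∫ p, (p.1 : ℝ) ∂P' = ∫ x, x ∂(Measure.map Prod.fst P') := by
      rw [integral_map (f := fun x : ℝ => x) measurable_fst.aemeasurable
        measurable_id.aestronglyMeasurable]
    rw [this, hmap, hXmean]
  have hsum : ∀ p : ℝ × ℝ, (p.1 : ℝ) = Ym p + Yp p := by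
    intro p
    by_cases hp : p ∈ S
    · simp [hYmdef, hYpdef, Set.indicator_of_mem hp, Set.indicator_of_notMem,
        (Set.notMem_compl_iff).2 hp]
    · simp [hYmdef, hYpdef, Set.indicator_of_notMem hp,
        Set.indicator_of_mem (Set.mem_compl hp)]
  have hIntYp : ∫ p, Yp p ∂P' = 0 := by
    have : ∫ p, Yp p ∂P' = ∫ p, ((p.1 : ℝ) - Ym p) ∂P' := by
      congr 1
      funext p
      have := hsum p
      linarith
    rw [this, integral_sub hfst_int hYm_int, hIntYm, hIntfst, sub_zero]
  -- second moment of Yp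
  set J : ℝ := ∫ x in A0ᶜ, x ^ 2 ∂π with hJdef
  set K : ℝ := ∫ x in C, x ^ 2 ∂π with hKdef
  have hIntYp2 : ∫ p, Yp p ^ 2 ∂P' = J + (1 - t) * K := by
    rw [hP'def, integral_prod _ (by rw [← hP'def]; exact hYp2_int)]
    have hinner : ∀ x : ℝ, (∫ u, Yp (x, u) ^ 2 ∂unif)
        = A0ᶜ.indicator (fun y => y ^ 2) x + (1 - t) * C.indicator (fun y => y ^ 2) x := by
      intro x
      by_cases h1 : |x| ≤ M
      · by_cases h2 : c * x ≤ 0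
        · have hmemA : x ∉ A0ᶜ := fun hx => hx h1
          have hmemC : x ∉ C := fun hx => absurd hx.2 (not_lt.2 h2)
          have : ∀ u : ℝ, Yp (x, u) = 0 := fun u =>
            Set.indicator_of_notMem (fun (hp : (x, u) ∈ Sᶜ) => hp ⟨h1, Or.inl h2⟩) _
          simp [this, Set.indicator_of_notMem hmemA, Set.indicator_of_notMem hmemC]
        · have hmemA : x ∉ A0ᶜ := fun hx => hx h1
          have hmemC : x ∈ C := ⟨h1, not_le.1 h2⟩
          have heq : ∀ u : ℝ, Yp (x, u) ^ 2 = (Set.Ici t).indicator (fun _ => x ^ 2) u := by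
            intro u
            simp only [hYpdef]
            by_cases hu : t ≤ u
            · rw [Set.indicator_of_mem (Set.mem_compl
                (fun (hp : (x, u) ∈ S) => hp.2.elim h2 (not_lt.2 hu))),
                Set.indicator_of_mem (show u ∈ Set.Ici t from hu)]
            · rw [Set.indicator_of_notMem (show (x, u) ∉ Sᶜ from fun (hp : (x, u) ∈ Sᶜ) =>
                hp ⟨h1, Or.inr (not_le.1 hu)⟩), Set.indicator_of_notMem
                (show u ∉ Set.Ici t from hu)]
              norm_num
          rw [show (fun u => Yp (x, u) ^ 2) = fun u => (Set.Ici t).indicator (fun _ => x ^ 2) u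
            from funext heq]
          rw [integral_indicator_const _ measurableSet_Ici, measureReal_def, unif_Ici_toReal ht0 ht1]
          simp [Set.indicator_of_notMem hmemA, Set.indicator_of_mem hmemC]
      · have hmemA : x ∈ A0ᶜ := h1
        have hmemC : x ∉ C := fun hx => absurd hx.1 h1
        have : ∀ u : ℝ, Yp (x, u) = x := fun u =>
          Set.indicator_of_mem (show (x, u) ∈ Sᶜ from fun hp => h1 hp.1) _
        simp [this, integral_const, measure_univ, Set.indicator_of_mem hmemA,
          Set.indicator_of_notMem hmemC]
    rw [show (fun x => ∫ u, Yp (x, u) ^ 2 ∂unif)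
        = fun x => A0ᶜ.indicator (fun y => y ^ 2) x + (1 - t) * C.indicator (fun y => y ^ 2) x
      from funext hinner]
    rw [integral_add (hX2int.indicator hA0.compl) ((hX2int.indicator hC).const_mul (1 - t)),
      integral_const_mul, integral_indicator hA0.compl, integral_indicator hC]
  -- the key estimate
  have hJ0 : 0 ≤ J := setIntegral_nonneg hA0.compl fun x _ => sq_nonneg x
  have hc_neg : c = -∫ x in A0ᶜ, x ∂π := by
    have := integral_add_compl hA0 hXint
    rw [hXmean] at this
    rw [hcdef]
    linarith [this]
  have hMc : M * |c| ≤ J := by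
    have habs : |c| ≤ ∫ x in A0ᶜ, |x| ∂π := by
      rw [hc_neg, abs_neg]
      simpa [Real.norm_eq_abs] using
        norm_integral_le_integral_norm (μ := π.restrict A0ᶜ) (fun x : ℝ => x)
    have hmono : ∫ x in A0ᶜ, M * |x| ∂π ≤ J := by
      rw [hJdef]
      refine setIntegral_mono_on ((hXint.abs.const_mul M).integrableOn)
        hX2int.integrableOn hA0.compl ?_
      intro x hx
      have hx' : M < |x| := not_le.1 hx
      nlinarith [abs_nonneg x, sq_abs x]
    calc M * |c| ≤ M * ∫ x in A0ᶜ, |x| ∂π := by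
          exact mul_le_mul_of_nonneg_left habs hM.le
      _ = ∫ x in A0ᶜ, M * |x| ∂π := (integral_const_mul M _).symm
      _ ≤ J := hmono
  have hkey : (1 - t) * K ≤ J := by
    by_cases hc : c = 0
    · have ht1' : t = 1 := by
        rw [htdef]
        split_ifs with h
        · rfl
        · rw [hc, zero_div, sub_zero]
      rw [ht1', sub_self, zero_mul]
      exact hJ0
    · have hICne : IC ≠ 0 := fun h => hc (hc0_of_IC0 h)
      have hcICpos : 0 < c * IC := lt_of_lt_of_le (by positivity) hcIC
      have hKabs : K ≤ M * ∫ x in C, |x| ∂π := by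
        have : ∫ x in C, x ^ 2 ∂π ≤ ∫ x in C, M * |x| ∂π := by
          refine setIntegral_mono_on hX2int.integrableOn
            ((hXint.abs.const_mul M).integrableOn) hC ?_
          intro x hx
          have hx1 : |x| ≤ M := hx.1
          nlinarith [abs_nonneg x, sq_abs x]
        rw [hKdef]
        calc ∫ x in C, x ^ 2 ∂π ≤ ∫ x in C, M * |x| ∂π := this
          _ = M * ∫ x in C, |x| ∂π := integral_const_mul M _
      have habsC : ∫ x in C, |x| ∂π = |IC| := by
        rcases lt_or_gt_of_ne hc with hcneg | hcpos
        · have : ∀ x ∈ C, |x| = -x := by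
            intro x hx
            have hx2 : 0 < c * x := hx.2
            have : x < 0 := by
              by_contra h
              push_neg at h
              nlinarith
            exact abs_of_neg this
          rw [setIntegral_congr_fun hC this, integral_neg, ← hICdef]
          have hc2 : 0 < c ^ 2 := by positivity
          have hICneg : IC < 0 := by nlinarith
          rw [abs_of_neg hICneg]
        · have : ∀ x ∈ C, |x| = x := by
            intro x hx
            have hx2 : 0 < c * x := hx.2
            have : 0 < x := by
              by_contra h
              push_neg at h
              nlinarith
            exact abs_of_pos this
          rw [setIntegral_congr_fun hC this, ← hICdef]
          have hc2 : 0 < c ^ 2 := by positivity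
          have hICpos : 0 < IC := by nlinarith
          rw [abs_of_pos hICpos]
      have hK0 : 0 ≤ K := setIntegral_nonneg hC fun x _ => sq_nonneg x
      calc (1 - t) * K ≤ (1 - t) * (M * |IC|) := by
            refine mul_le_mul_of_nonneg_left ?_ h1t
            rw [← habsC]; exact hKabs
        _ = M * ((1 - t) * |IC|) := by ring
        _ = M * |(1 - t) * IC| := by rw [abs_mul, abs_of_nonneg h1t]
        _ = M * |c| := by rw [h1tIC]
        _ ≤ J := hMc
  -- transfer the tail integral back
  have hJtrans : ∫ a in {a | M < |Y a|}, (Y a) ^ 2 ∂ℙ = J := by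
    rw [hJdef, hπ, setIntegral_map (f := fun x : ℝ => x ^ 2) hA0.compl
      ((measurable_id.pow_const 2).aestronglyMeasurable) hYmeas.aemeasurable]
    have hpre : Y ⁻¹' A0ᶜ = {a | M < |Y a|} := by
      ext a
      simp [hA0def, not_le]
    rw [hpre]
  -- conclusion
  refine ⟨ℝ × ℝ, inferInstance, P', inferInstance,
    Prod.fst, Ym, Yp, measurable_fst, hYmmeas, hYpmeas, ?_, hsum, hIntYm, hIntYp, ?_, ?_, ?_⟩
  · rw [hP'def, Measure.map_fst_prod, measure_univ, one_smul, hπ]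
  · refine Filter.Eventually.of_forall fun p => ?_
    by_cases hp : p ∈ S
    · rw [hYpdef, Set.indicator_of_notMem ((Set.notMem_compl_iff).2 hp), mul_zero]
    · rw [hYmdef, Set.indicator_of_notMem hp, zero_mul]
  · refine Filter.Eventually.of_forall fun p => ?_
    by_cases hp : p ∈ S
    · rw [hYmdef, Set.indicator_of_mem hp,
        Set.indicator_of_mem (show p.1 ∈ {x : ℝ | |x| ≤ M} from hp.1)]
    · rw [hYmdef, Set.indicator_of_notMem hp, abs_zero]
      exact Set.indicator_nonneg (fun x _ => abs_nonneg x) _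
  · rw [hIntYp2, hJtrans]
    linarith [hkey]
end

section
/- Dirichlet integral evaluation on the simplex: For every χ ∈ [0,1) and every k ∈ ℕ, the iterated integral of t₁^{−χ}·(t₂−t₁)^{−χ}·⋯·(t_k−t_{k−1})^{−χ}·(1−t_k)^{−χ} over the simplex { (t₁,…,t_k) : 0 < t₁ < t₂ < ⋯ < t_k < 1 } equals Γ(1−χ)^{k+1} / Γ((k+1)·(1−χ)), where Γ denotes the Gamma function. -/
open MeasureTheory

/-- The extended sequence `0 = u₀ < t₁ < ⋯ < t_k < u_{k+1} = 1` obtained from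
`t : Fin k → ℝ` by prepending `0` and appending `1`. -/
noncomputable def extSeq (k : ℕ) (t : Fin k → ℝ) : Fin (k + 2) → ℝ :=
  Fin.cons 0 (Fin.snoc t 1)

/-- The Dirichlet weight `∏_{i=1}^{k+1} (t_i - t_{i-1})^{-χ}` with the
conventions `t₀ = 0`, `t_{k+1} = 1`. -/
noncomputable def dirichletWeight (χ : ℝ) (k : ℕ) (t : Fin k → ℝ) : ℝ :=
  ∏ i : Fin (k + 1), (extSeq k t i.succ - extSeq k t i.castSucc) ^ (-χ)

section Aux
open Set
open scoped ENNReal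

noncomputable def dW (k : ℕ) (a : Fin (k + 1) → ℝ) (t : Fin k → ℝ) : ℝ :=
  ∏ i : Fin (k + 1), (extSeq k t i.succ - extSeq k t i.castSucc) ^ (a i - 1)

def splx (k : ℕ) : Set (Fin k → ℝ) := {t | StrictMono (extSeq k t)}


lemma realBeta_integrable {a b : ℝ} (ha : 0 < a) (hb : 0 < b) :
    IntervalIntegrable (fun x : ℝ => x ^ (a - 1) * (1 - x) ^ (b - 1)) volume 0 1 := by
  have h := Complex.betaIntegral_convergent (u := a) (v := b) (by simpa) (by simpa)
  rw [intervalIntegrable_iff_integrableOn_Ioc_of_le (by norm_num : (0:ℝ) ≤ 1)] at h ⊢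
  have h2 := h.re
  refine h2.congr ?_
  filter_upwards [ae_restrict_mem measurableSet_Ioc] with x hx
  have hx0 : 0 ≤ x := hx.1.le
  have hx1 : 0 ≤ 1 - x := by linarith [hx.2]
  have : ((x:ℂ) ^ ((a:ℂ) - 1) * (1 - (x:ℂ)) ^ ((b:ℂ) - 1))
      = ((x ^ (a - 1) * (1 - x) ^ (b - 1) : ℝ) : ℂ) := by
    rw [show ((a:ℂ) - 1) = ((a - 1 : ℝ) : ℂ) by push_cast; ring,
      show ((b:ℂ) - 1) = ((b - 1 : ℝ) : ℂ) by push_cast; ring,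
      show (1 - (x:ℂ)) = ((1 - x : ℝ) : ℂ) by push_cast; ring,
      ← Complex.ofReal_cpow hx0, ← Complex.ofReal_cpow hx1, ← Complex.ofReal_mul]
  simp [this]

lemma realBeta_value {a b : ℝ} (ha : 0 < a) (hb : 0 < b) :
    ∫ x in (0:ℝ)..1, x ^ (a - 1) * (1 - x) ^ (b - 1)
      = Real.Gamma a * Real.Gamma b / Real.Gamma (a + b) := by
  have h := Complex.Gamma_mul_Gamma_eq_betaIntegral (s := (a:ℂ)) (t := (b:ℂ))
    (by simpa) (by simpa)
  rw [Complex.betaIntegral] at h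
  have hcong : (∫ x in (0:ℝ)..1, (x:ℂ) ^ ((a:ℂ) - 1) * (1 - (x:ℂ)) ^ ((b:ℂ) - 1))
      = ((∫ x in (0:ℝ)..1, x ^ (a - 1) * (1 - x) ^ (b - 1) : ℝ) : ℂ) := by
    rw [← intervalIntegral.integral_ofReal]
    refine intervalIntegral.integral_congr fun x hx => ?_
    rw [Set.uIcc_of_le (by norm_num : (0:ℝ) ≤ 1)] at hx
    have hx0 : 0 ≤ x := hx.1
    have hx1 : 0 ≤ 1 - x := by linarith [hx.2]
    rw [show ((a:ℂ) - 1) = ((a - 1 : ℝ) : ℂ) by push_cast; ring,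
      show ((b:ℂ) - 1) = ((b - 1 : ℝ) : ℂ) by push_cast; ring,
      show (1 - (x:ℂ)) = ((1 - x : ℝ) : ℂ) by push_cast; ring,
      ← Complex.ofReal_cpow hx0, ← Complex.ofReal_cpow hx1, ← Complex.ofReal_mul]
  rw [hcong, show ((a:ℂ) + (b:ℂ)) = ((a + b : ℝ) : ℂ) by push_cast; ring,
    Complex.Gamma_ofReal, Complex.Gamma_ofReal, Complex.Gamma_ofReal,
    ← Complex.ofReal_mul, ← Complex.ofReal_mul] at h
  have := Complex.ofReal_injective h
  have hG : Real.Gamma (a + b) ≠ 0 := (Real.Gamma_pos_of_pos (by linarith)).ne'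
  field_simp
  linarith [this]

lemma lintegral_beta {a b q : ℝ} (ha : 0 < a) (hb : 0 < b) (hq : 0 < q) :
    ∫⁻ x in Ioo 0 q, ENNReal.ofReal (x ^ (a - 1) * (q - x) ^ (b - 1))
      = ENNReal.ofReal (q ^ (a + b - 1)
          * (Real.Gamma a * Real.Gamma b / Real.Gamma (a + b))) := by
  set g : ℝ → ℝ := fun x => x ^ (a - 1) * (1 - x) ^ (b - 1) with hg
  set f : ℝ → ℝ := fun x => x ^ (a - 1) * (q - x) ^ (b - 1) with hf
  have hqa : (0:ℝ) < q ^ (a - 1) := Real.rpow_pos_of_pos hq _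
  have hqb : (0:ℝ) < q ^ (b - 1) := Real.rpow_pos_of_pos hq _
  have hEq : EqOn f (fun x => q ^ (a + b - 2) * g (x / q)) (Icc 0 q) := by
    intro x hx
    have hx0 : 0 ≤ x := hx.1
    have hxq : 0 ≤ q - x := by linarith [hx.2]
    simp only [hf, hg]
    have h1 : (1 : ℝ) - x / q = (q - x) / q := by field_simp
    rw [h1, Real.div_rpow hx0 hq.le, Real.div_rpow hxq hq.le,
      show a + b - 2 = (a - 1) + (b - 1) by ring, Real.rpow_add hq]
    field_simp
  have hgI : IntervalIntegrable g volume 0 1 := realBeta_integrable ha hb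
  have hcomp : IntervalIntegrable (fun x => g (x / q)) volume 0 q := by
    have := hgI.comp_mul_left (c := q⁻¹)
    rw [show (0:ℝ) / q⁻¹ = 0 by simp, show (1:ℝ) / q⁻¹ = q by field_simp] at this
    refine this.congr ?_
    · intro x _
      show g (q⁻¹ * x) = g (x / q); rw [div_eq_inv_mul]
  have hfI : IntegrableOn f (Ioc 0 q) := by
    have h1 : IntervalIntegrable (fun x => q ^ (a + b - 2) * g (x / q)) volume 0 q :=
      hcomp.const_mul _
    rw [intervalIntegrable_iff_integrableOn_Ioc_of_le hq.le] at h1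
    exact h1.congr_fun (fun x hx => (hEq (Ioc_subset_Icc_self hx)).symm) measurableSet_Ioc
  have hval : ∫ x in (0:ℝ)..q, f x
      = q ^ (a + b - 1) * (Real.Gamma a * Real.Gamma b / Real.Gamma (a + b)) := by
    rw [intervalIntegral.integral_congr (g := fun x => q ^ (a + b - 2) * g (x / q))
      (by rwa [Set.uIcc_of_le hq.le]), intervalIntegral.integral_const_mul,
      intervalIntegral.integral_comp_div (f := g) hq.ne', zero_div, div_self hq.ne',
      realBeta_value ha hb, smul_eq_mul]
    rw [show a + b - 1 = (a + b - 2) + 1 by ring, Real.rpow_add hq, Real.rpow_one]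
    ring
  rw [Measure.restrict_congr_set Ioo_ae_eq_Ioc,
    ← ofReal_integral_eq_lintegral_ofReal hfI ?_]
  · rw [← intervalIntegral.integral_of_le hq.le, hval]
  · filter_upwards [ae_restrict_mem measurableSet_Ioc] with x hx
    exact mul_nonneg (Real.rpow_nonneg hx.1.le _) (Real.rpow_nonneg (by linarith [hx.2]) _)


lemma extSeq_cons (k : ℕ) (x : ℝ) (u : Fin k → ℝ) :
    extSeq (k + 1) (Fin.cons x u) = Fin.cons 0 (Fin.cons x (Fin.snoc u 1)) := by
  unfold extSeq
  rw [Fin.cons_snoc_eq_snoc_cons, Fin.cons_snoc_eq_snoc_cons, Fin.cons_snoc_eq_snoc_cons]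

lemma extSeq_zero (k : ℕ) (t : Fin k → ℝ) : extSeq k t 0 = 0 := rfl

lemma gap_cons_zero (k : ℕ) (x : ℝ) (u : Fin k → ℝ) :
    extSeq (k+1) (Fin.cons x u) (0 : Fin (k+2)).succ
      - extSeq (k+1) (Fin.cons x u) (0 : Fin (k+2)).castSucc = x := by
  rw [extSeq_cons]; simp

lemma gap_cons_one (k : ℕ) (x : ℝ) (u : Fin k → ℝ) :
    extSeq (k+1) (Fin.cons x u) ((0 : Fin (k+1)).succ : Fin (k+2)).succ
      - extSeq (k+1) (Fin.cons x u) ((0 : Fin (k+1)).succ : Fin (k+2)).castSucc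
      = extSeq k u (Fin.succ 0) - x := by
  rw [extSeq_cons]
  rw [show ((0 : Fin (k+1)).succ : Fin (k+2)).castSucc = ((0:Fin (k+1)).castSucc).succ from
    (Fin.succ_castSucc _).symm]
  rw [Fin.cons_succ, Fin.cons_succ, Fin.cons_succ, Fin.castSucc_zero, Fin.cons_zero]
  rfl

lemma gap_cons_succ_succ (k : ℕ) (x : ℝ) (u : Fin k → ℝ) (m : Fin k) :
    extSeq (k+1) (Fin.cons x u) ((m.succ.succ : Fin (k+2))).succ
      - extSeq (k+1) (Fin.cons x u) ((m.succ.succ : Fin (k+2))).castSucc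
      = extSeq k u m.succ.succ - extSeq k u m.succ.castSucc := by
  rw [extSeq_cons]
  rw [show (m.succ.succ : Fin (k+2)).castSucc = ((m.succ.castSucc).succ) from
    (Fin.succ_castSucc _).symm]
  rw [show m.succ.castSucc = (m.castSucc).succ from (Fin.succ_castSucc _).symm]
  unfold extSeq
  rw [Fin.cons_succ, Fin.cons_succ, Fin.cons_succ, Fin.cons_succ, Fin.cons_succ, Fin.cons_succ]

lemma mem_splx_cons (k : ℕ) (x : ℝ) (u : Fin k → ℝ) :
    Fin.cons x u ∈ splx (k+1) ↔
      (u ∈ splx k ∧ 0 < x ∧ x < extSeq k u (Fin.succ 0)) := by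
  simp only [splx, mem_setOf_eq, Fin.strictMono_iff_lt_succ]
  rw [Fin.forall_fin_succ (P := fun i : Fin (k+2) =>
        extSeq (k+1) (Fin.cons x u) i.castSucc < extSeq (k+1) (Fin.cons x u) i.succ),
      Fin.forall_fin_succ (P := fun i : Fin (k+1) =>
        extSeq (k+1) (Fin.cons x u) (i.succ : Fin (k+2)).castSucc
          < extSeq (k+1) (Fin.cons x u) (i.succ : Fin (k+2)).succ),
      Fin.forall_fin_succ (P := fun i : Fin (k+1) =>
        extSeq k u i.castSucc < extSeq k u i.succ)]
  rw [show extSeq (k+1) (Fin.cons x u) (0:Fin (k+2)).castSucc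
        < extSeq (k+1) (Fin.cons x u) (0:Fin (k+2)).succ ↔ 0 < x by
      rw [← sub_pos, gap_cons_zero]]
  rw [show extSeq (k+1) (Fin.cons x u) ((0:Fin (k+1)).succ : Fin (k+2)).castSucc
        < extSeq (k+1) (Fin.cons x u) ((0:Fin (k+1)).succ : Fin (k+2)).succ
        ↔ x < extSeq k u (Fin.succ 0) by
      rw [← sub_pos, gap_cons_one, sub_pos]]
  have e2 : ∀ m : Fin k,
      (extSeq (k+1) (Fin.cons x u) ((m.succ.succ : Fin (k+2))).castSucc
        < extSeq (k+1) (Fin.cons x u) ((m.succ.succ : Fin (k+2))).succ)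
      ↔ (extSeq k u m.succ.castSucc < extSeq k u m.succ.succ) := by
    intro m; rw [← sub_pos, gap_cons_succ_succ, sub_pos]
  rw [forall_congr' e2]
  rw [show extSeq k u (0:Fin (k+1)).castSucc < extSeq k u (0:Fin (k+1)).succ
        ↔ 0 < extSeq k u (Fin.succ 0) by rw [Fin.castSucc_zero, extSeq_zero]]
  constructor
  · rintro ⟨hx, hq, hr⟩
    exact ⟨⟨lt_trans hx hq, hr⟩, hx, hq⟩
  · rintro ⟨⟨_, hr⟩, hx, hq⟩
    exact ⟨hx, hq, hr⟩

lemma dW_cons (k : ℕ) (a : Fin (k+2) → ℝ) (x : ℝ) (u : Fin k → ℝ) :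
    dW (k+1) a (Fin.cons x u)
      = x ^ (a 0 - 1) * (extSeq k u (Fin.succ 0) - x) ^ (a (Fin.succ 0) - 1)
        * ∏ m : Fin k, (extSeq k u m.succ.succ - extSeq k u m.succ.castSucc)
            ^ (a m.succ.succ - 1) := by
  unfold dW
  rw [Fin.prod_univ_succ, Fin.prod_univ_succ, gap_cons_zero, gap_cons_one, mul_assoc]
  congr 1
  congr 1
  exact Finset.prod_congr rfl fun m _ => by rw [gap_cons_succ_succ k x u m]

lemma dW_cons' (k : ℕ) (a : Fin (k+2) → ℝ) (u : Fin k → ℝ) :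
    dW k (Fin.cons (a 0 + a (Fin.succ 0)) (fun m => a m.succ.succ)) u
      = extSeq k u (Fin.succ 0) ^ (a 0 + a (Fin.succ 0) - 1)
        * ∏ m : Fin k, (extSeq k u m.succ.succ - extSeq k u m.succ.castSucc)
            ^ (a m.succ.succ - 1) := by
  unfold dW
  rw [Fin.prod_univ_succ, Fin.cons_zero, Fin.castSucc_zero, extSeq_zero, sub_zero]
  simp only [Fin.cons_succ]

lemma measurable_extSeq (k : ℕ) (j : Fin (k+2)) :
    Measurable fun t : Fin k → ℝ => extSeq k t j := by
  induction j using Fin.cases with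
  | zero => simpa [extSeq_zero] using measurable_const
  | succ i =>
    simp only [extSeq, Fin.cons_succ]
    induction i using Fin.lastCases with
    | last => simp only [Fin.snoc_last]; exact measurable_const
    | cast m =>
      simp only [Fin.snoc_castSucc]
      exact measurable_pi_apply m

lemma measurableSet_splx (k : ℕ) : MeasurableSet (splx k) := by
  have : splx k = ⋂ i : Fin (k+1), {t | extSeq k t i.castSucc < extSeq k t i.succ} := by
    ext t
    simp [splx, Fin.strictMono_iff_lt_succ, mem_iInter]
  rw [this]
  exact MeasurableSet.iInter fun i =>
    measurableSet_lt (measurable_extSeq k i.castSucc) (measurable_extSeq k i.succ)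

lemma measurable_dW (k : ℕ) (a : Fin (k+1) → ℝ) : Measurable (dW k a) := by
  unfold dW
  exact Finset.measurable_prod _ fun i _ =>
    ((measurable_extSeq k i.succ).sub (measurable_extSeq k i.castSucc)).pow measurable_const

lemma dirichlet_general (k : ℕ) (a : Fin (k+1) → ℝ) (ha : ∀ i, 0 < a i) :
    ∫⁻ t in splx k, ENNReal.ofReal (dW k a t)
      = ENNReal.ofReal ((∏ i, Real.Gamma (a i)) / Real.Gamma (∑ i, a i)) := by
  induction k with
  | zero =>
    have hsplx : splx 0 = univ := by
      ext t
      simp only [splx, mem_setOf_eq, mem_univ, iff_true]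
      rw [Fin.strictMono_iff_lt_succ]
      intro i
      have : i = 0 := Subsingleton.elim _ _
      subst this
      rw [Fin.castSucc_zero, extSeq_zero]
      show (0:ℝ) < extSeq 0 t (Fin.succ 0)
      simp [extSeq, Fin.cons_succ, Fin.snoc]
    have hdW : ∀ t, dW 0 a t = 1 := by
      intro t
      unfold dW
      rw [Fin.prod_univ_one, Fin.castSucc_zero, extSeq_zero, sub_zero]
      have : extSeq 0 t (Fin.succ 0) = 1 := by simp [extSeq, Fin.cons_succ, Fin.snoc]
      rw [this, Real.one_rpow]
    simp_rw [hsplx, Measure.restrict_univ, hdW]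
    rw [lintegral_const, Fin.prod_univ_one, Fin.sum_univ_one,
      div_self (Real.Gamma_pos_of_pos (ha 0)).ne', ENNReal.ofReal_one, one_mul]
    show (volume : Measure (Fin 0 → ℝ)) univ = 1
    rw [volume_pi, Measure.pi_univ]
    simp
  | succ k ih =>
    set a' : Fin (k+1) → ℝ := Fin.cons (a 0 + a (Fin.succ 0)) (fun m => a m.succ.succ)
      with ha'def
    have ha' : ∀ i, 0 < a' i := by
      intro i
      induction i using Fin.cases with
      | zero => rw [ha'def, Fin.cons_zero]; exact add_pos (ha 0) (ha _)
      | succ m => rw [ha'def, Fin.cons_succ]; exact ha _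
    set B : ℝ := Real.Gamma (a 0) * Real.Gamma (a (Fin.succ 0))
        / Real.Gamma (a 0 + a (Fin.succ 0)) with hBdef
    have hBpos : 0 < B :=
      div_pos (mul_pos (Real.Gamma_pos_of_pos (ha 0)) (Real.Gamma_pos_of_pos (ha _)))
        (Real.Gamma_pos_of_pos (add_pos (ha 0) (ha _)))
    set F : (Fin (k+1) → ℝ) → ℝ≥0∞ :=
      (splx (k+1)).indicator fun t => ENNReal.ofReal (dW (k+1) a t) with hFdef
    have hFmeas : Measurable F :=
      ((measurable_dW _ a).ennreal_ofReal).indicator (measurableSet_splx _)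
    have hconsmeas : Measurable fun p : ℝ × (Fin k → ℝ) => (Fin.cons p.1 p.2 : Fin (k+1) → ℝ) := by
      rw [measurable_pi_iff]
      intro j
      induction j using Fin.cases with
      | zero => simpa using measurable_fst
      | succ m =>
        simp only [Fin.cons_succ]
        exact (measurable_pi_apply m).comp measurable_snd
    have step1 : ∫⁻ t in splx (k+1), ENNReal.ofReal (dW (k+1) a t) = ∫⁻ t, F t :=
      (lintegral_indicator (measurableSet_splx _) _).symm
    have hmp := (volume_preserving_piFinSuccAbove (fun _ : Fin (k+1) => ℝ) 0).symm
    have hsymm : ∀ p : ℝ × (Fin k → ℝ),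
        (MeasurableEquiv.piFinSuccAbove (fun _ : Fin (k+1) => ℝ) 0).symm p = Fin.cons p.1 p.2 := by
      intro p
      simp [MeasurableEquiv.piFinSuccAbove_symm_apply, Fin.insertNthEquiv, Fin.insertNth_zero]
    have step2 : ∫⁻ t, F t = ∫⁻ p : ℝ × (Fin k → ℝ), F (Fin.cons p.1 p.2) := by
      rw [← hmp.lintegral_comp hFmeas]
      exact lintegral_congr fun p => by rw [hsymm]
    have step3 : ∫⁻ p : ℝ × (Fin k → ℝ), F (Fin.cons p.1 p.2)
        = ∫⁻ u : Fin k → ℝ, ∫⁻ x : ℝ, F (Fin.cons x u) := by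
      rw [Measure.volume_eq_prod]
      exact lintegral_prod_symm _
        ((show Measurable fun p : ℝ × (Fin k → ℝ) => F (Fin.cons p.1 p.2) from
          hFmeas.comp hconsmeas).aemeasurable)
    have hinner : ∀ u : Fin k → ℝ, (∫⁻ x : ℝ, F (Fin.cons x u))
        = (splx k).indicator
            (fun u => ENNReal.ofReal B * ENNReal.ofReal (dW k a' u)) u := by
      intro u
      by_cases hu : u ∈ splx k
      · have hum : StrictMono (extSeq k u) := hu
        have hq : 0 < extSeq k u (Fin.succ 0) := by
          have h2 := hum (Fin.succ_pos (0 : Fin (k+1)))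
          rwa [extSeq_zero] at h2
        set q := extSeq k u (Fin.succ 0) with hqdef
        set R := ∏ m : Fin k, (extSeq k u m.succ.succ - extSeq k u m.succ.castSucc)
            ^ (a m.succ.succ - 1) with hRdef
        have hxF : ∀ x : ℝ, F (Fin.cons x u)
            = (Ioo (0:ℝ) q).indicator
                (fun x => ENNReal.ofReal (x ^ (a 0 - 1) * (q - x) ^ (a (Fin.succ 0) - 1))
                  * ENNReal.ofReal R) x := by
          intro x
          have hmem : (Fin.cons x u ∈ splx (k+1)) ↔ x ∈ Ioo 0 q := by
            rw [mem_splx_cons, mem_Ioo]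
            exact ⟨fun h => ⟨h.2.1, h.2.2⟩, fun h => ⟨hu, h.1, h.2⟩⟩
          by_cases hx : x ∈ Ioo 0 q
          · rw [hFdef, indicator_of_mem (hmem.mpr hx), indicator_of_mem hx, dW_cons,
              ENNReal.ofReal_mul
                (mul_nonneg (Real.rpow_nonneg hx.1.le _) (Real.rpow_nonneg
                  (by simp only [mem_Ioo] at hx; linarith [hx.2]) _))]
          · rw [hFdef, indicator_of_notMem (fun h => hx (hmem.mp h)),
              indicator_of_notMem hx]
        simp_rw [hxF]
        rw [lintegral_indicator measurableSet_Ioo]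
        have hmeas2 : Measurable fun x : ℝ =>
            ENNReal.ofReal (x ^ (a 0 - 1) * (q - x) ^ (a (Fin.succ 0) - 1)) :=
          ((measurable_id.pow measurable_const).mul
            ((measurable_const.sub measurable_id).pow measurable_const)).ennreal_ofReal
        rw [lintegral_mul_const _ hmeas2, lintegral_beta (ha 0) (ha _) hq,
          indicator_of_mem hu, dW_cons', ← hqdef, ← hRdef,
          ENNReal.ofReal_mul (Real.rpow_nonneg hq.le _),
          ENNReal.ofReal_mul (Real.rpow_nonneg hq.le _)]
        rw [← hBdef]
        ring
      · have hz : ∀ x : ℝ, F (Fin.cons x u) = 0 := by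
          intro x
          refine indicator_of_notMem ?_ _
          rw [mem_splx_cons]
          tauto
        simp [hz, indicator_of_notMem hu]
    have hS : (0:ℝ) < ∑ i, a i :=
      Finset.sum_pos (fun i _ => ha i) Finset.univ_nonempty
    have hS' : (0:ℝ) < ∑ i, a' i :=
      Finset.sum_pos (fun i _ => ha' i) Finset.univ_nonempty
    rw [step1, step2, step3]
    simp_rw [hinner]
    rw [lintegral_indicator (measurableSet_splx k),
      lintegral_const_mul _ (measurable_dW k a').ennreal_ofReal, ih a' ha',
      ← ENNReal.ofReal_mul hBpos.le]
    congr 1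
    have h1 : ∏ i, Real.Gamma (a' i)
        = Real.Gamma (a 0 + a (Fin.succ 0)) * ∏ m : Fin k, Real.Gamma (a m.succ.succ) := by
      rw [Fin.prod_univ_succ, ha'def]
      simp [Fin.cons_zero, Fin.cons_succ]
    have h2 : ∑ i, a' i = ∑ i, a i := by
      rw [Fin.sum_univ_succ a', Fin.sum_univ_succ a,
        Fin.sum_univ_succ (fun i : Fin (k+1) => a i.succ), ha'def]
      simp [Fin.cons_zero, Fin.cons_succ]
      ring
    have h3 : ∏ i : Fin (k+2), Real.Gamma (a i)
        = Real.Gamma (a 0) * Real.Gamma (a (Fin.succ 0))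
          * ∏ m : Fin k, Real.Gamma (a m.succ.succ) := by
      rw [Fin.prod_univ_succ, Fin.prod_univ_succ, mul_assoc]
    have hG : Real.Gamma (a 0 + a (Fin.succ 0)) ≠ 0 :=
      (Real.Gamma_pos_of_pos (add_pos (ha 0) (ha _))).ne'
    rw [h1, h2, h3, hBdef, div_mul_div_comm,
      show Real.Gamma (a 0) * Real.Gamma (a (Fin.succ 0))
          * (Real.Gamma (a 0 + a (Fin.succ 0)) * ∏ m : Fin k, Real.Gamma (a m.succ.succ))
        = Real.Gamma (a 0 + a (Fin.succ 0))
          * (Real.Gamma (a 0) * Real.Gamma (a (Fin.succ 0))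
             * ∏ m : Fin k, Real.Gamma (a m.succ.succ)) from by ring,
      mul_div_mul_left _ _ hG]

end Aux

/-- **Dirichlet integral evaluation on the simplex.**
For `χ ∈ [0,1)` and `k ≥ 1`, the integral of
`t₁^{-χ} (t₂-t₁)^{-χ} ⋯ (t_k-t_{k-1})^{-χ} (1-t_k)^{-χ}` over the open simplex
`{0 < t₁ < ⋯ < t_k < 1}` equals `Γ(1-χ)^{k+1} / Γ((k+1)(1-χ))`. -/
theorem dirichlet_integral_simplex (χ : ℝ) (hχ0 : 0 ≤ χ) (hχ1 : χ < 1)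
    (k : ℕ) (hk : 1 ≤ k) :
    ∫⁻ t in {t : Fin k → ℝ | StrictMono (extSeq k t)},
        ENNReal.ofReal (dirichletWeight χ k t)
      = ENNReal.ofReal
          (Real.Gamma (1 - χ) ^ (k + 1) / Real.Gamma (((k : ℝ) + 1) * (1 - χ))) := by
  have hw : ∀ t, dirichletWeight χ k t = dW k (fun _ => -χ + 1) t := by
    intro t
    unfold dirichletWeight dW
    exact Finset.prod_congr rfl fun i _ => by rw [show -χ + 1 - 1 = -χ by ring]
  simp_rw [hw]
  have h := dirichlet_general k (fun _ => -χ + 1)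
    (fun _ => by show (0:ℝ) < -χ + 1; linarith)
  rw [show {t : Fin k → ℝ | StrictMono (extSeq k t)} = splx k from rfl, h]
  congr 1
  rw [Finset.prod_const, Finset.sum_const, Finset.card_univ, Fintype.card_fin,
    nsmul_eq_mul]
  rw [show (-χ + 1) = 1 - χ by ring]
  congr 1
  push_cast
  ring
end

section
/- At most six points can be closer to the origin than to each other: Let x₁, …, x_k be distinct points of ℝ² ∖ {0} such that for all i ≠ j one has ‖x_i‖ ≤ ‖x_i − x_j‖ (each point is at least as close to the origin as to every other point of the collection). Then k ≤ 6. -/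
open Real

/-- **At most six points can be closer to the origin than to each other.**
If `x₁, …, x_k` are distinct nonzero points of `ℝ²` such that for all `i ≠ j`
one has `‖x_i‖ ≤ ‖x_i − x_j‖`, then `k ≤ 6`. -/
theorem at_most_six_points_closer_to_origin
    (k : ℕ) (x : Fin k → EuclideanSpace ℝ (Fin 2))
    (hinj : Function.Injective x)
    (hne : ∀ i, x i ≠ 0)
    (hclose : ∀ i j, i ≠ j → ‖x i‖ ≤ ‖x i - x j‖) :
    k ≤ 6 := by
  by_contra hk
  push_neg at hk
  -- identify points with complex numbers
  set z : Fin k → ℂ := fun i => ⟨x i 0, x i 1⟩ with hzdef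
  have hz0 : ∀ i, z i ≠ 0 := by
    intro i h
    apply hne i
    have h1 : x i 0 = 0 := congrArg Complex.re h
    have h2 : x i 1 = 0 := congrArg Complex.im h
    ext l
    fin_cases l <;> simpa
  have hnorm : ∀ i, ‖x i‖ = ‖z i‖ := by
    intro i
    rw [EuclideanSpace.norm_eq, Complex.norm_def, Complex.normSq_apply]
    simp [Fin.sum_univ_two, sq, hzdef]
  have hpos : ∀ i, 0 < ‖z i‖ := fun i => by
    simpa using norm_pos_iff.mpr (hz0 i)
  have hinner : ∀ i j, (inner ℝ (x i) (x j) : ℝ) = x i 0 * x j 0 + x i 1 * x j 1 := by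
    intro i j; simp [PiLp.inner_apply, Fin.sum_univ_two]; ring
  -- the inner product bound: 2⟪xᵢ,xⱼ⟫ ≤ ‖xⱼ‖²
  have key : ∀ i j, i ≠ j → (inner ℝ (x i) (x j) : ℝ) * 2 ≤ ‖x j‖ ^ 2 := by
    intro i j hij
    have h := hclose i j hij
    have h2 : ‖x i‖ ^ 2 ≤ ‖x i - x j‖ ^ 2 :=
      pow_le_pow_left₀ (norm_nonneg _) h 2
    rw [norm_sub_sq_real] at h2
    linarith
  have half : ∀ i j, i ≠ j → (inner ℝ (x i) (x j) : ℝ) ≤ ‖x i‖ * ‖x j‖ / 2 := by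
    intro i j hij
    rcases le_total ‖x i‖ ‖x j‖ with h | h
    · have := key j i hij.symm
      rw [real_inner_comm] at this
      nlinarith [norm_nonneg (x i), norm_nonneg (x j)]
    · have := key i j hij
      nlinarith [norm_nonneg (x i), norm_nonneg (x j)]
  -- hence angles between points are at least π/3
  have hcos : ∀ i j, i ≠ j → Real.cos ((z i).arg - (z j).arg) ≤ 1 / 2 := by
    intro i j hij
    have hceq : Real.cos ((z i).arg - (z j).arg)
        = (inner ℝ (x i) (x j) : ℝ) / (‖z i‖ * ‖z j‖) := by
      rw [Real.cos_sub, Complex.cos_arg (hz0 i), Complex.cos_arg (hz0 j),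
        Complex.sin_arg, Complex.sin_arg, hinner]
      have h1 := (hpos i).ne'
      have h2 := (hpos j).ne'
      field_simp [hzdef]
      simp [hzdef]
    rw [hceq, div_le_iff₀ (mul_pos (hpos i) (hpos j))]
    have := half i j hij
    rw [hnorm i, hnorm j] at this
    linarith
  -- pigeonhole on the 6 sectors of angle π/3
  have hπ := Real.pi_pos
  set v : Fin k → ℝ := fun i => ((z i).arg + π) * 3 / π with hvdef
  have hv0 : ∀ i, 0 < v i := by
    intro i
    have := Complex.neg_pi_lt_arg (z i)
    have : 0 < (z i).arg + π := by linarith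
    positivity
  have hv6 : ∀ i, v i ≤ 6 := by
    intro i
    have := Complex.arg_le_pi (z i)
    rw [hvdef, div_le_iff₀ hπ]
    linarith
  have hc1 : ∀ i, 1 ≤ ⌈v i⌉ := fun i => Int.ceil_pos.mpr (hv0 i)
  have hc6 : ∀ i, ⌈v i⌉ ≤ 6 := fun i => Int.ceil_le.mpr (by exact_mod_cast hv6 i)
  set f : Fin k → Fin 6 := fun i => ⟨(⌈v i⌉ - 1).toNat, by
    have := hc1 i; have := hc6 i; omega⟩ with hfdef
  obtain ⟨i, j, hij, hf⟩ : ∃ i j, i ≠ j ∧ f i = f j := by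
    have hcard : Fintype.card (Fin 6) < Fintype.card (Fin k) := by simpa using hk
    obtain ⟨i, j, hij, hf⟩ := Fintype.exists_ne_map_eq_of_card_lt f hcard
    exact ⟨i, j, hij, hf⟩
  have hceil : ⌈v i⌉ = ⌈v j⌉ := by
    have := congrArg Fin.val hf
    simp only [hfdef] at this
    have hi := hc1 i; have hj := hc1 j
    omega
  -- the two args differ by less than π/3
  have hvlt : |v i - v j| < 1 := by
    have h1 : v i ≤ ⌈v i⌉ := Int.le_ceil _
    have h2 : v j ≤ ⌈v j⌉ := Int.le_ceil _
    have h3 : (⌈v i⌉ : ℝ) < v i + 1 := Int.ceil_lt_add_one _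
    have h4 : (⌈v j⌉ : ℝ) < v j + 1 := Int.ceil_lt_add_one _
    rw [hceil] at h1 h3
    rw [abs_lt]
    constructor <;> linarith
  have hargs : |(z i).arg - (z j).arg| < π / 3 := by
    have : v i - v j = ((z i).arg - (z j).arg) * 3 / π := by
      rw [hvdef]; ring
    rw [this, abs_div, abs_mul, abs_of_pos hπ, div_lt_one hπ] at hvlt
    have h3 : |(3:ℝ)| = 3 := by norm_num
    rw [h3] at hvlt
    linarith
  -- contradiction: cos of this difference is both ≤ 1/2 and > 1/2
  have hlt : Real.cos (π / 3) < Real.cos |(z i).arg - (z j).arg| :=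
    Real.cos_lt_cos_of_nonneg_of_le_pi (abs_nonneg _) (by linarith) hargs
  rw [Real.cos_pi_div_three, Real.cos_abs] at hlt
  have := hcos i j hij
  linarith
end

section
/- Rearrangement bound for the inverse square-root potential in the plane: For every Lebesgue-measurable set A ⊆ ℝ² of finite Lebesgue measure |A| and every point y ∈ ℝ², one has ∫_A ‖x − y‖^{−1/2} dx ≤ (4/3)·π^{1/4}·|A|^{3/4}. -/
open MeasureTheory Set

/-- **Rearrangement bound for the inverse square-root potential in the plane.**
For every measurable `A ⊆ ℝ²` of finite Lebesgue measure and every `y ∈ ℝ²`,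
`∫_A ‖x − y‖^{−1/2} dx ≤ (4/3) π^{1/4} |A|^{3/4}`. -/
theorem inverse_sqrt_potential_rearrangement_bound
    (A : Set (EuclideanSpace ℝ (Fin 2))) (hA : MeasurableSet A)
    (hAfin : volume A < ⊤) (y : EuclideanSpace ℝ (Fin 2)) :
    ∫⁻ x in A, ENNReal.ofReal (‖x - y‖ ^ (-(1 / 2) : ℝ)) ∂volume
      ≤ ENNReal.ofReal
          ((4 / 3) * Real.pi ^ ((1 / 4 : ℝ)) * (volume A).toReal ^ ((3 / 4 : ℝ))) := by
  set f : EuclideanSpace ℝ (Fin 2) → ℝ := fun x => ‖x - y‖ ^ (-(1 / 2) : ℝ) with hf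
  have f_mble : Measurable f :=
    ((measurable_id.sub measurable_const).norm).pow_const _
  by_cases hA0 : volume A = 0
  · rw [setLIntegral_measure_zero A _ hA0]
    exact zero_le
  set v : ℝ := (volume A).toReal with hv
  have hvpos : 0 < v := ENNReal.toReal_pos hA0 hAfin.ne
  have hpi : (0 : ℝ) < Real.pi := Real.pi_pos
  set t₀ : ℝ := (Real.pi / v) ^ ((1 / 4 : ℝ)) with ht₀
  have ht₀pos : 0 < t₀ := Real.rpow_pos_of_pos (div_pos hpi hvpos) _
  -- layer cake
  have layercake :
      ∫⁻ x in A, ENNReal.ofReal (f x) ∂volume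
        = ∫⁻ t in Ioi (0 : ℝ), (volume.restrict A) {a | t < f a} :=
    lintegral_eq_lintegral_meas_lt (volume.restrict A)
      (Filter.Eventually.of_forall fun x => Real.rpow_nonneg (norm_nonneg _) _)
      f_mble.aemeasurable
  rw [show (∫⁻ x in A, ENNReal.ofReal (‖x - y‖ ^ (-(1 / 2) : ℝ)) ∂volume)
        = ∫⁻ x in A, ENNReal.ofReal (f x) ∂volume from rfl, layercake]
  -- pointwise bounds on the superlevel measure
  have bound1 : ∀ t : ℝ, (volume.restrict A) {a | t < f a} ≤ volume A := by
    intro t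
    calc (volume.restrict A) {a | t < f a} ≤ (volume.restrict A) univ :=
          measure_mono (subset_univ _)
      _ = volume A := by rw [Measure.restrict_apply_univ]
  have bound2 : ∀ t : ℝ, 0 < t →
      (volume.restrict A) {a | t < f a} ≤ ENNReal.ofReal (Real.pi * t ^ (-4 : ℝ)) := by
    intro t ht
    have hsub : {a : EuclideanSpace ℝ (Fin 2) | t < f a} ⊆ Metric.ball y (t ^ (-2 : ℝ)) := by
      intro x hx
      simp only [mem_setOf_eq, hf] at hx
      have hr : 0 < ‖x - y‖ := by
        by_contra h
        push_neg at h
        have : ‖x - y‖ = 0 := le_antisymm h (norm_nonneg _)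
        rw [this, Real.zero_rpow (by norm_num)] at hx
        exact absurd hx (not_lt.2 ht.le)
      have key : (‖x - y‖ ^ (-(1 / 2) : ℝ)) ^ (-2 : ℝ) < t ^ (-2 : ℝ) :=
        Real.rpow_lt_rpow_of_neg ht hx (by norm_num)
      rw [← Real.rpow_mul hr.le] at key
      norm_num at key
      simpa [Metric.mem_ball, dist_eq_norm] using key
    calc (volume.restrict A) {a | t < f a}
        = volume ({a | t < f a} ∩ A) := Measure.restrict_apply' hA
      _ ≤ volume (Metric.ball y (t ^ (-2 : ℝ))) :=
          measure_mono (inter_subset_left.trans hsub)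
      _ = ENNReal.ofReal (Real.pi * t ^ (-4 : ℝ)) := by
          rw [EuclideanSpace.volume_ball]
          have hcard : Fintype.card (Fin 2) = 2 := by simp
          rw [hcard]
          rw [show ((2:ℕ):ℝ) / 2 + 1 = 2 by norm_num, Real.Gamma_two, div_one,
            Real.sq_sqrt hpi.le]
          have h2 : ENNReal.ofReal (t ^ (-2 : ℝ)) ^ 2 = ENNReal.ofReal (t ^ (-4 : ℝ)) := by
            rw [← ENNReal.ofReal_pow (Real.rpow_nonneg ht.le _)]
            congr 1
            rw [← Real.rpow_natCast (t ^ (-2 : ℝ)) 2, ← Real.rpow_mul ht.le]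
            norm_num
          rw [h2, ← ENNReal.ofReal_mul (Real.rpow_nonneg ht.le _)]
          rw [mul_comm]
  -- split the integral
  have hsplit : Ioi (0 : ℝ) = Ioc (0 : ℝ) t₀ ∪ Ioi t₀ := (Ioc_union_Ioi_eq_Ioi ht₀pos.le).symm
  rw [hsplit, lintegral_union measurableSet_Ioi (Ioc_disjoint_Ioi le_rfl)]
  have I1 : ∫⁻ t in Ioc (0 : ℝ) t₀, (volume.restrict A) {a | t < f a}
      ≤ ENNReal.ofReal (v * t₀) := by
    calc ∫⁻ t in Ioc (0 : ℝ) t₀, (volume.restrict A) {a | t < f a}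
        ≤ ∫⁻ _ in Ioc (0 : ℝ) t₀, volume A := lintegral_mono fun t => bound1 t
      _ = volume A * volume (Ioc (0 : ℝ) t₀) := setLIntegral_const _ _
      _ = ENNReal.ofReal (v * t₀) := by
          rw [Real.volume_Ioc, ← ENNReal.ofReal_toReal hAfin.ne, ← hv,
            ← ENNReal.ofReal_mul hvpos.le]
          norm_num
  have I2 : ∫⁻ t in Ioi t₀, (volume.restrict A) {a | t < f a}
      ≤ ENNReal.ofReal (Real.pi * t₀ ^ (-3 : ℝ) / 3) := by
    have hint : IntegrableOn (fun t : ℝ => Real.pi * t ^ (-4 : ℝ)) (Ioi t₀) :=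
      (integrableOn_Ioi_rpow_of_lt (by norm_num) ht₀pos).const_mul _
    calc ∫⁻ t in Ioi t₀, (volume.restrict A) {a | t < f a}
        ≤ ∫⁻ t in Ioi t₀, ENNReal.ofReal (Real.pi * t ^ (-4 : ℝ)) := by
          refine setLIntegral_mono
            (((measurable_id.pow_const _).const_mul _).ennreal_ofReal) fun t ht => ?_
          exact bound2 t (ht₀pos.trans ht)
      _ = ENNReal.ofReal (∫ t in Ioi t₀, Real.pi * t ^ (-4 : ℝ)) := by
          rw [← ofReal_integral_eq_lintegral_ofReal hint]
          filter_upwards [self_mem_ae_restrict (measurableSet_Ioi : MeasurableSet (Ioi t₀))]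
            with t ht
          exact mul_nonneg hpi.le (Real.rpow_nonneg (ht₀pos.trans ht).le _)
      _ = ENNReal.ofReal (Real.pi * t₀ ^ (-3 : ℝ) / 3) := by
          rw [integral_const_mul, integral_Ioi_rpow_of_lt (by norm_num) ht₀pos]
          norm_num
          ring_nf
  refine le_trans (add_le_add I1 I2) ?_
  rw [← ENNReal.ofReal_add (mul_nonneg hvpos.le ht₀pos.le)
      (div_nonneg (mul_nonneg hpi.le (Real.rpow_nonneg ht₀pos.le _)) (by norm_num))]
  apply ENNReal.ofReal_le_ofReal
  -- real arithmetic
  have e1 : v * t₀ = Real.pi ^ ((1 / 4 : ℝ)) * v ^ ((3 / 4 : ℝ)) := by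
    rw [ht₀, Real.div_rpow hpi.le hvpos.le]
    rw [div_eq_mul_inv, ← Real.rpow_neg hvpos.le, mul_comm (Real.pi ^ ((1/4:ℝ))) _,
      ← mul_assoc]
    nth_rewrite 1 [← Real.rpow_one v]
    rw [← Real.rpow_add hvpos]
    norm_num
    ring
  have e2 : t₀ ^ (-3 : ℝ) = Real.pi ^ (-(3 / 4) : ℝ) * v ^ ((3 / 4 : ℝ)) := by
    rw [ht₀, ← Real.rpow_mul (div_pos hpi hvpos).le]
    norm_num
    rw [Real.rpow_neg (div_pos hpi hvpos).le, Real.div_rpow hpi.le hvpos.le,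
      inv_div, div_eq_mul_inv, ← Real.rpow_neg hpi.le]
    ring
  rw [e1, e2]
  have e3 : Real.pi * (Real.pi ^ (-(3 / 4) : ℝ)) = Real.pi ^ ((1 / 4 : ℝ)) := by
    nth_rewrite 1 [← Real.rpow_one Real.pi]
    rw [← Real.rpow_add hpi]
    norm_num
  rw [← mul_assoc, e3]
  ring_nf
  exact le_refl _
end

section
/- Decoupling inequality for the Ising model with plus boundary condition: Fix β ≥ 0 and a finite set Λ ⊆ ℤ². Let x₁, …, x_n be distinct points of Λ and suppose x_i ∈ Λ_i ⊆ Λ for subsets Λ₁, …, Λ_n satisfying Λ_i ∩ (Λ_j ∪ ∂Λ_j) = ∅ for all i ≠ j. Then 0 ≤ E⁺_Λ[σ_{x₁}·σ_{x₂}⋯σ_{x_n}] ≤ ∏_{i=1}^n E⁺_{Λ_i}[σ_{x_i}], where E⁺_Γ denotes expectation under the Ising measure on Γ with plus boundary condition at inverse temperature β. -/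
open Finset

namespace IsingDecoupling

/-- The four nearest neighbors of a point of `ℤ²`. -/
def nbrs (x : ℤ × ℤ) : Finset (ℤ × ℤ) :=
  {(x.1 + 1, x.2), (x.1 - 1, x.2), (x.1, x.2 + 1), (x.1, x.2 - 1)}

/-- The spin (`±1`) at site `x` of the configuration `ε` on `Λ`; sites outside
`Λ` are given the boundary value `+1`. -/
def spinAt (Λ : Finset (ℤ × ℤ)) (ε : {z // z ∈ Λ} → Bool) (x : ℤ × ℤ) : ℝ :=
  if h : x ∈ Λ then (if ε ⟨x, h⟩ then 1 else -1) else 1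

/-- The Boltzmann weight of a configuration `ε` on `Λ` for the Ising model with
plus boundary condition at inverse temperature `β`: the exponential of
`β ∑_{x∼y ∈ Λ} σ_x σ_y + β ∑_{x∈Λ} h⁺_x σ_x`,
where `h⁺_x` is the number of neighbors of `x` outside `Λ` (the sum over
unordered nearest-neighbor pairs inside `Λ` is written as half the sum over
ordered pairs). -/
noncomputable def weight (β : ℝ) (Λ : Finset (ℤ × ℤ)) (ε : {z // z ∈ Λ} → Bool) : ℝ :=
  Real.exp
    (β * ((∑ x ∈ Λ, ∑ y ∈ Λ.filter (fun y => y ∈ nbrs x),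
        spinAt Λ ε x * spinAt Λ ε y) / 2)
      + β * ∑ x ∈ Λ, (((nbrs x).filter (fun y => y ∉ Λ)).card : ℝ) * spinAt Λ ε x)

/-- The expectation `E⁺_Λ[σ_{x 1} ⋯ σ_{x n}]` under the Ising measure on `Λ`
with plus boundary condition at inverse temperature `β`. -/
noncomputable def corr (β : ℝ) (Λ : Finset (ℤ × ℤ)) {n : ℕ} (x : Fin n → ℤ × ℤ) : ℝ :=
  (∑ ε : {z // z ∈ Λ} → Bool, weight β Λ ε * ∏ i, spinAt Λ ε (x i)) /
    (∑ ε : {z // z ∈ Λ} → Bool, weight β Λ ε)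

/-- The external boundary of a finite set `Γ ⊆ ℤ²`. -/
def extBd (Γ : Finset (ℤ × ℤ)) : Set (ℤ × ℤ) :=
  {y | y ∉ Γ ∧ ∃ z ∈ Γ, z ∈ nbrs y}

end IsingDecoupling

open IsingDecoupling


namespace Gks

def sgn (b : Bool) : ℝ := if b then 1 else -1

lemma sgn_true : sgn true = 1 := rfl
lemma sgn_false : sgn false = -1 := rfl

lemma sgn_beq (a b : Bool) : sgn (a == b) = sgn a * sgn b := by
  cases a <;> cases b <;> norm_num [sgn]

lemma sgn_le_one (b : Bool) : sgn b ≤ 1 := by cases b <;> norm_num [sgn]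

lemma neg_one_le_sgn (b : Bool) : -1 ≤ sgn b := by cases b <;> norm_num [sgn]

variable {V : Type*} [Fintype V] [DecidableEq V]

/-- product of sgn's is ±1 -/
lemma prod_sgn_eq (s : Finset V) (ε : V → Bool) :
    (∏ x ∈ s, sgn (ε x)) = 1 ∨ (∏ x ∈ s, sgn (ε x)) = -1 := by
  classical
  induction s using Finset.induction with
  | empty => left; simp
  | insert _ _ h ih =>
    rw [Finset.prod_insert h]
    rcases ih with h1 | h1 <;> rw [h1] <;> cases (ε _) <;> simp [sgn]

lemma prod_sgn_le_one (s : Finset V) (ε : V → Bool) : (∏ x ∈ s, sgn (ε x)) ≤ 1 := by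
  rcases prod_sgn_eq s ε with h | h <;> rw [h] <;> norm_num

/-- key: sum over all configurations of a product of sgn powers factorizes -/
lemma sum_prod_sgn_pow (m : V → ℕ) :
    ∑ ε : V → Bool, ∏ x, sgn (ε x) ^ m x = ∏ x : V, (1 + (-1 : ℝ) ^ m x) := by
  classical
  rw [← Fintype.prod_sum (fun (x : V) (b : Bool) => sgn b ^ m x)]
  refine Finset.prod_congr rfl fun x _ => ?_
  simp [Fintype.sum_bool, sgn]

end Gks

namespace Gks

lemma prod_pm_eq {V : Type*} (s : Finset V) (f : V → ℝ) (hf : ∀ x, f x = 1 ∨ f x = -1) :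
    (∏ x ∈ s, f x) = 1 ∨ (∏ x ∈ s, f x) = -1 := by
  classical
  induction s using Finset.induction with
  | empty => left; simp
  | insert _ _ h ih =>
    rw [Finset.prod_insert h]
    rcases ih with h1 | h1 <;> rcases hf _ with h2 | h2 <;> rw [h1, h2] <;> norm_num

variable {V : Type*} [Fintype V] [DecidableEq V] {ι : Type*} [Fintype ι] [DecidableEq ι]

noncomputable def S (J : ι → ℝ) (A : ι → Finset V) (m : V → ℕ) : ℝ :=
  ∑ ε : V → Bool, (∏ x, sgn (ε x) ^ m x) * Real.exp (∑ i, J i * ∏ x ∈ A i, sgn (ε x))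

lemma exp_mul_sgnprod (c : ℝ) (s : Finset V) (ε : V → Bool) :
    Real.exp (c * ∏ x ∈ s, sgn (ε x))
      = Real.sinh c * (∏ x ∈ s, sgn (ε x)) + Real.cosh c := by
  rcases prod_sgn_eq s ε with h | h <;> rw [h]
  · rw [mul_one, mul_one, Real.sinh_add_cosh]
  · rw [mul_neg_one, mul_neg_one]
    have := Real.cosh_sub_sinh c
    linarith

lemma prod_prod_sgn (T : Finset ι) (A : ι → Finset V) (ε : V → Bool) :
    ∏ i ∈ T, ∏ x ∈ A i, sgn (ε x)
      = ∏ x : V, sgn (ε x) ^ (T.filter fun i => x ∈ A i).card := by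
  have h1 : ∀ i, ∏ x ∈ A i, sgn (ε x) = ∏ x : V, (if x ∈ A i then sgn (ε x) else 1) := by
    intro i
    rw [Finset.prod_ite_mem, Finset.univ_inter]
  simp_rw [h1]
  rw [Finset.prod_comm]
  refine Finset.prod_congr rfl fun x _ => ?_
  rw [← Finset.prod_filter, Finset.prod_const]

lemma one_add_neg_one_pow_nonneg (k : ℕ) : (0:ℝ) ≤ 1 + (-1) ^ k := by
  rcases Nat.even_or_odd k with h | h
  · rw [h.neg_one_pow]; norm_num
  · rw [h.neg_one_pow]; norm_num

theorem S_nonneg {J : ι → ℝ} (hJ : ∀ i, 0 ≤ J i) (A : ι → Finset V) (m : V → ℕ) :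
    0 ≤ S J A m := by
  classical
  have hexp : ∀ ε : V → Bool,
      Real.exp (∑ i, J i * ∏ x ∈ A i, sgn (ε x))
        = ∑ T : Finset ι, ((∏ i ∈ T, Real.sinh (J i)) * ∏ i ∈ Tᶜ, Real.cosh (J i))
            * ∏ x : V, sgn (ε x) ^ (T.filter fun i => x ∈ A i).card := by
    intro ε
    rw [Real.exp_sum]
    calc ∏ i, Real.exp (J i * ∏ x ∈ A i, sgn (ε x))
        = ∏ i, (Real.sinh (J i) * (∏ x ∈ A i, sgn (ε x)) + Real.cosh (J i)) :=
          Finset.prod_congr rfl fun i _ => exp_mul_sgnprod _ _ _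
      _ = ∑ T : Finset ι, (∏ i ∈ T, Real.sinh (J i) * ∏ x ∈ A i, sgn (ε x))
            * ∏ i ∈ Tᶜ, Real.cosh (J i) := Fintype.prod_add _ _
      _ = _ := by
          refine Finset.sum_congr rfl fun T _ => ?_
          rw [Finset.prod_mul_distrib, prod_prod_sgn]
          ring
  have swap : S J A m = ∑ T : Finset ι,
      ((∏ i ∈ T, Real.sinh (J i)) * ∏ i ∈ Tᶜ, Real.cosh (J i))
        * ∑ ε : V → Bool, ∏ x : V, sgn (ε x) ^ (m x + (T.filter fun i => x ∈ A i).card) := by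
    unfold S
    simp_rw [hexp, Finset.mul_sum]
    rw [Finset.sum_comm]
    refine Finset.sum_congr rfl fun T _ => ?_
    refine Finset.sum_congr rfl fun ε _ => ?_
    have hR : (∏ x : V, sgn (ε x) ^ (m x + (T.filter fun i => x ∈ A i).card))
        = (∏ x, sgn (ε x) ^ m x) * ∏ x : V, sgn (ε x) ^ (T.filter fun i => x ∈ A i).card := by
      rw [← Finset.prod_mul_distrib]
      exact Finset.prod_congr rfl fun x _ => pow_add _ _ _
    rw [hR]
    ring
  rw [swap]
  refine Finset.sum_nonneg fun T _ => mul_nonneg (mul_nonneg ?_ ?_) ?_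
  · exact Finset.prod_nonneg fun i _ => Real.sinh_nonneg_iff.mpr (hJ i)
  · exact Finset.prod_nonneg fun i _ => (Real.cosh_pos _).le
  · rw [sum_prod_sgn_pow]
    exact Finset.prod_nonneg fun x _ => one_add_neg_one_pow_nonneg _

theorem S_zero_pos (J : ι → ℝ) (A : ι → Finset V) : 0 < S J A (fun _ => 0) := by
  unfold S
  simp only [pow_zero, Finset.prod_const_one, one_mul]
  exact Finset.sum_pos (fun ε _ => Real.exp_pos _) Finset.univ_nonempty

end Gks

namespace Gks

variable {V : Type*} [Fintype V] [DecidableEq V] {ι : Type*} [Fintype ι] [DecidableEq ι]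

lemma prod_sgn_pow_le_one (m : V → ℕ) (s : V → Bool) :
    (∏ x : V, sgn (s x) ^ m x) ≤ 1 := by
  have hpm : ∀ x, sgn (s x) ^ m x = 1 ∨ sgn (s x) ^ m x = -1 := by
    intro x
    rcases Bool.dichotomy (s x) with hb | hb
    · rw [hb, sgn_false]
      rcases Nat.even_or_odd (m x) with h | h
      · left; exact h.neg_one_pow
      · right; exact h.neg_one_pow
    · left; rw [hb, sgn_true, one_pow]
  rcases prod_pm_eq Finset.univ _ hpm with h | h
  · rw [h]
  · rw [h]; norm_num

theorem S_mul_S_le {J : ι → ℝ} (hJ : ∀ i, 0 ≤ J i) (A : ι → Finset V) (m₁ m₂ : V → ℕ) :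
    S J A m₁ * S J A m₂ ≤ S J A (fun x => m₁ x + m₂ x) * S J A (fun _ => 0) := by
  classical
  -- reindex η = ε ⊙ s
  have reidx : ∀ (ε : V → Bool) (F : (V → Bool) → ℝ),
      (∑ η : V → Bool, F η) = ∑ s : V → Bool, F (fun x => ε x == s x) := by
    intro ε F
    have hinv : Function.Involutive (fun s : V → Bool => fun x => ε x == s x) := by
      intro s; funext x
      show (ε x == (ε x == s x)) = s x
      cases ε x <;> cases s x <;> rfl
    exact (Fintype.sum_bijective _ hinv.bijective (fun s => F (fun x => ε x == s x)) F
      (fun s => rfl)).symm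
  have hsplit : ∀ (k : V → ℕ) (ε s : V → Bool),
      (∏ x, sgn ((fun x => ε x == s x) x) ^ k x)
        = (∏ x, sgn (ε x) ^ k x) * ∏ x, sgn (s x) ^ k x := by
    intro k ε s
    rw [← Finset.prod_mul_distrib]
    refine Finset.prod_congr rfl fun x _ => ?_
    rw [← mul_pow, ← sgn_beq]
  have hsplit' : ∀ (t : Finset V) (ε s : V → Bool),
      (∏ x ∈ t, sgn ((fun x => ε x == s x) x))
        = (∏ x ∈ t, sgn (ε x)) * ∏ x ∈ t, sgn (s x) := by
    intro t ε s
    rw [← Finset.prod_mul_distrib]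
    exact Finset.prod_congr rfl fun x _ => by rw [← sgn_beq]
  have hSmul : ∀ (k₁ k₂ : V → ℕ),
      S J A k₁ * S J A k₂ = ∑ ε : V → Bool, ∑ s : V → Bool,
        ((∏ x, sgn (ε x) ^ k₁ x) * ((∏ x, sgn (ε x) ^ k₂ x) * (∏ x, sgn (s x) ^ k₂ x))) *
          Real.exp (∑ i, (J i * (1 + ∏ x ∈ A i, sgn (s x))) * ∏ x ∈ A i, sgn (ε x)) := by
    intro k₁ k₂
    unfold S
    rw [Finset.sum_mul_sum]
    refine Finset.sum_congr rfl fun ε _ => ?_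
    rw [reidx ε]
    refine Finset.sum_congr rfl fun s _ => ?_
    rw [hsplit k₂ ε s]
    have hE : Real.exp (∑ i, J i * ∏ x ∈ A i, sgn (ε x)) *
        Real.exp (∑ i, J i * ∏ x ∈ A i, sgn ((fun x => ε x == s x) x))
        = Real.exp (∑ i, (J i * (1 + ∏ x ∈ A i, sgn (s x))) * ∏ x ∈ A i, sgn (ε x)) := by
      rw [← Real.exp_add, ← Finset.sum_add_distrib]
      congr 1
      refine Finset.sum_congr rfl fun i _ => ?_
      rw [hsplit' (A i) ε s]; ring
    rw [← hE]
    ring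
  rw [← sub_nonneg, hSmul (fun x => m₁ x + m₂ x) (fun _ => 0), hSmul m₁ m₂,
    ← Finset.sum_sub_distrib]
  simp_rw [← Finset.sum_sub_distrib]
  rw [Finset.sum_comm]
  refine Finset.sum_nonneg fun s _ => ?_
  have key : ∀ ε : V → Bool,
      ((∏ x, sgn (ε x) ^ (m₁ x + m₂ x)) * ((∏ x, sgn (ε x) ^ (0:ℕ)) * (∏ x, sgn (s x) ^ (0:ℕ)))) *
          Real.exp (∑ i, (J i * (1 + ∏ x ∈ A i, sgn (s x))) * ∏ x ∈ A i, sgn (ε x))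
        - ((∏ x, sgn (ε x) ^ m₁ x) * ((∏ x, sgn (ε x) ^ m₂ x) * (∏ x, sgn (s x) ^ m₂ x))) *
          Real.exp (∑ i, (J i * (1 + ∏ x ∈ A i, sgn (s x))) * ∏ x ∈ A i, sgn (ε x))
      = (1 - ∏ x, sgn (s x) ^ m₂ x) *
          ((∏ x, sgn (ε x) ^ (m₁ x + m₂ x)) *
            Real.exp (∑ i, (J i * (1 + ∏ x ∈ A i, sgn (s x))) * ∏ x ∈ A i, sgn (ε x))) := by
    intro ε
    have h12 : (∏ x : V, sgn (ε x) ^ (m₁ x + m₂ x))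
        = (∏ x, sgn (ε x) ^ m₁ x) * ∏ x, sgn (ε x) ^ m₂ x := by
      rw [← Finset.prod_mul_distrib]
      exact Finset.prod_congr rfl fun x _ => pow_add _ _ _
    simp only [pow_zero, Finset.prod_const_one]
    rw [h12]; ring
  simp only [key]
  rw [← Finset.mul_sum]
  refine mul_nonneg ?_ ?_
  · have := prod_sgn_pow_le_one m₂ s; linarith
  · have hJ' : ∀ i, 0 ≤ J i * (1 + ∏ x ∈ A i, sgn (s x)) := by
      intro i
      refine mul_nonneg (hJ i) ?_
      rcases prod_sgn_eq (A i) s with h | h <;> rw [h] <;> norm_num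
    exact S_nonneg hJ' A (fun x => m₁ x + m₂ x)

end Gks




namespace IsingAux
open IsingDecoupling Gks

lemma not_mem_nbrs_self (x : ℤ × ℤ) : x ∉ nbrs x := by
  simp only [nbrs, Finset.mem_insert, Finset.mem_singleton, Prod.ext_iff]
  omega

lemma nbrs_symm {x y : ℤ × ℤ} : y ∈ nbrs x ↔ x ∈ nbrs y := by
  simp only [nbrs, Finset.mem_insert, Finset.mem_singleton, Prod.ext_iff]
  omega

variable (β : ℝ) (Γ : Finset (ℤ × ℤ))

abbrev Vt := {z // z ∈ Γ}

noncomputable def Jc : (Vt Γ × Vt Γ) ⊕ Vt Γ → ℝ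
  | .inl p => if (p.2 : ℤ × ℤ) ∈ nbrs p.1 then β / 2 else 0
  | .inr a => β * (((nbrs (a : ℤ × ℤ)).filter (fun y => y ∉ Γ)).card : ℝ)

def Ac : (Vt Γ × Vt Γ) ⊕ Vt Γ → Finset (Vt Γ)
  | .inl p => {p.1, p.2}
  | .inr a => {a}

lemma Jc_nonneg (hβ : 0 ≤ β) : ∀ i, 0 ≤ Jc β Γ i := by
  rintro (p | a)
  · dsimp [Jc]
    split
    · linarith
    · exact le_refl 0
  · exact mul_nonneg hβ (Nat.cast_nonneg _)

lemma spinAt_coe (ε : Vt Γ → Bool) (a : Vt Γ) : spinAt Γ ε ↑a = sgn (ε a) := by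
  simp only [spinAt, dif_pos a.2, sgn, Subtype.coe_eta]

lemma spinAt_eq_one {x : ℤ × ℤ} (h : x ∉ Γ) (ε : Vt Γ → Bool) : spinAt Γ ε x = 1 := by
  simp [spinAt, h]

lemma weight_eq (ε : Vt Γ → Bool) :
    weight β Γ ε = Real.exp (∑ i, Jc β Γ i * ∏ x ∈ Ac Γ i, sgn (ε x)) := by
  unfold weight
  congr 1
  rw [Fintype.sum_sum_type]
  have hinr : ∑ a : Vt Γ, Jc β Γ (.inr a) * ∏ x ∈ Ac Γ (.inr a), sgn (ε x)
      = β * ∑ x ∈ Γ, (((nbrs x).filter (fun y => y ∉ Γ)).card : ℝ) * spinAt Γ ε x := by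
    rw [Finset.mul_sum, Finset.univ_eq_attach, ← Finset.sum_attach Γ
      (fun x => β * ((((nbrs x).filter (fun y => y ∉ Γ)).card : ℝ) * spinAt Γ ε x))]
    refine Finset.sum_congr rfl fun a _ => ?_
    rw [spinAt_coe]
    simp only [Jc, Ac, Finset.prod_singleton]
    ring
  have hinl : ∑ p : Vt Γ × Vt Γ, Jc β Γ (.inl p) * ∏ x ∈ Ac Γ (.inl p), sgn (ε x)
      = β * ((∑ x ∈ Γ, ∑ y ∈ Γ.filter (fun y => y ∈ nbrs x),
          spinAt Γ ε x * spinAt Γ ε y) / 2) := by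
    rw [Fintype.sum_prod_type]
    have hrhs : β * ((∑ x ∈ Γ, ∑ y ∈ Γ.filter (fun y => y ∈ nbrs x),
          spinAt Γ ε x * spinAt Γ ε y) / 2)
        = ∑ x ∈ Γ, ∑ y ∈ Γ, (if y ∈ nbrs x then (β/2) * (spinAt Γ ε x * spinAt Γ ε y) else 0) := by
      rw [eq_comm]
      calc ∑ x ∈ Γ, ∑ y ∈ Γ, (if y ∈ nbrs x then (β/2) * (spinAt Γ ε x * spinAt Γ ε y) else 0)
          = ∑ x ∈ Γ, ∑ y ∈ Γ.filter (fun y => y ∈ nbrs x),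
              (β/2) * (spinAt Γ ε x * spinAt Γ ε y) :=
            Finset.sum_congr rfl fun x _ => (Finset.sum_filter _ _).symm
        _ = (β/2) * ∑ x ∈ Γ, ∑ y ∈ Γ.filter (fun y => y ∈ nbrs x),
              spinAt Γ ε x * spinAt Γ ε y := by
            rw [Finset.mul_sum]
            exact Finset.sum_congr rfl fun x _ => (Finset.mul_sum _ _ _).symm
        _ = _ := by ring
    rw [hrhs]
    rw [show (∑ x ∈ Γ, ∑ y ∈ Γ, (if y ∈ nbrs x then (β/2) * (spinAt Γ ε x * spinAt Γ ε y) else 0))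
        = ∑ a ∈ Γ.attach, ∑ b ∈ Γ.attach,
            (if (↑b : ℤ × ℤ) ∈ nbrs ↑a then (β/2) * (spinAt Γ ε ↑a * spinAt Γ ε ↑b) else 0) by
      rw [← Finset.sum_attach Γ (fun x => ∑ y ∈ Γ, (if y ∈ nbrs x then (β/2) * (spinAt Γ ε x * spinAt Γ ε y) else 0))]
      exact Finset.sum_congr rfl fun a _ => (Finset.sum_attach Γ _).symm]
    rw [Finset.univ_eq_attach]
    refine Finset.sum_congr rfl fun a _ => Finset.sum_congr rfl fun b _ => ?_
    simp only [Jc, Ac]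
    split
    · rename_i hnb
      have hab : a ≠ b := by
        rintro rfl
        exact not_mem_nbrs_self (↑a : ℤ × ℤ) hnb
      rw [Finset.prod_pair hab, spinAt_coe, spinAt_coe]
    · rw [zero_mul]
  rw [hinl, hinr]

end IsingAux

namespace Gks

variable {V : Type*} [Fintype V] [DecidableEq V] {ι : Type*} [Fintype ι] [DecidableEq ι]

theorem cond_compare {J : ι → ℝ} (hJ : ∀ i, 0 ≤ J i) (A : ι → Finset V) (m : V → ℕ)
    (W : Finset V) :
    S J A m * ∑ T ∈ W.powerset, S J A (fun v => if v ∈ T then 1 else 0)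
      ≤ (∑ T ∈ W.powerset, S J A (fun v => m v + if v ∈ T then 1 else 0))
          * S J A (fun _ => 0) := by
  rw [Finset.mul_sum, Finset.sum_mul]
  exact Finset.sum_le_sum fun T _ => S_mul_S_le hJ A m _

lemma prod_sgn_subset (T : Finset V) (ε : V → Bool) :
    ∏ y ∈ T, sgn (ε y) = ∏ v : V, sgn (ε v) ^ (if v ∈ T then 1 else 0) := by
  simp_rw [pow_boole]
  rw [Finset.prod_ite_mem, Finset.univ_inter]

/-- expansion of the plus-indicator product -/
lemma prod_one_add_sgn (W : Finset V) (ε : V → Bool) :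
    ∏ y ∈ W, (1 + sgn (ε y))
      = ∑ T ∈ W.powerset, ∏ v : V, sgn (ε v) ^ (if v ∈ T then 1 else 0) := by
  have : ∀ y ∈ W, (1 + sgn (ε y)) = sgn (ε y) + 1 := fun y _ => by ring
  rw [Finset.prod_congr rfl this, Finset.prod_add]
  refine Finset.sum_congr rfl fun T _ => ?_
  rw [Finset.prod_const_one, mul_one, prod_sgn_subset]

lemma sum_indic_weight (J : ι → ℝ) (A : ι → Finset V) (W : Finset V) :
    ∑ ε : V → Bool, (∏ y ∈ W, (1 + sgn (ε y)))
        * Real.exp (∑ i, J i * ∏ x ∈ A i, sgn (ε x))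
      = ∑ T ∈ W.powerset, S J A (fun v => if v ∈ T then 1 else 0) := by
  simp_rw [prod_one_add_sgn, Finset.sum_mul]
  rw [Finset.sum_comm]
  rfl

lemma sum_obs_indic_weight (J : ι → ℝ) (A : ι → Finset V) (m : V → ℕ) (W : Finset V) :
    ∑ ε : V → Bool, (∏ v : V, sgn (ε v) ^ m v) * (∏ y ∈ W, (1 + sgn (ε y)))
        * Real.exp (∑ i, J i * ∏ x ∈ A i, sgn (ε x))
      = ∑ T ∈ W.powerset, S J A (fun v => m v + if v ∈ T then 1 else 0) := by
  have hterm : ∀ (ε : V → Bool) (T : Finset V),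
      (∏ v : V, sgn (ε v) ^ m v) * (∏ v : V, sgn (ε v) ^ (if v ∈ T then 1 else 0))
        = ∏ v : V, sgn (ε v) ^ (m v + if v ∈ T then 1 else 0) := by
    intro ε T
    rw [← Finset.prod_mul_distrib]
    exact Finset.prod_congr rfl fun v _ => (pow_add _ _ _).symm
  simp_rw [prod_one_add_sgn, Finset.mul_sum, Finset.sum_mul]
  rw [Finset.sum_comm]
  refine Finset.sum_congr rfl fun T _ => Finset.sum_congr rfl fun ε _ => ?_
  rw [hterm]

end Gks

namespace IsingAux
open IsingDecoupling Gks

def mObs {n : ℕ} (x : Fin n → ℤ × ℤ) (Γ : Finset (ℤ × ℤ)) : Vt Γ → ℕ :=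
  fun v => if (↑v : ℤ × ℤ) ∈ Finset.univ.image x then 1 else 0

lemma prod_spin_eq (Γ : Finset (ℤ × ℤ)) {n : ℕ} (x : Fin n → ℤ × ℤ)
    (hx : Function.Injective x) (hxΓ : ∀ i, x i ∈ Γ) (ε : Vt Γ → Bool) :
    ∏ i, spinAt Γ ε (x i) = ∏ v : Vt Γ, sgn (ε v) ^ mObs x Γ v := by
  classical
  have h1 : ∏ i, spinAt Γ ε (x i) = ∏ i, sgn (ε ⟨x i, hxΓ i⟩) :=
    Finset.prod_congr rfl fun i _ => spinAt_coe Γ ε ⟨x i, hxΓ i⟩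
  have hinj : ∀ a ∈ Finset.univ, ∀ b ∈ Finset.univ,
      (⟨x a, hxΓ a⟩ : Vt Γ) = ⟨x b, hxΓ b⟩ → a = b := by
    intro a _ b _ h
    exact hx (congrArg Subtype.val h)
  have h2 : ∏ i, sgn (ε ⟨x i, hxΓ i⟩)
      = ∏ v ∈ Finset.univ.image (fun i => (⟨x i, hxΓ i⟩ : Vt Γ)), sgn (ε v) :=
    (Finset.prod_image (f := fun v : Vt Γ => sgn (ε v))
      (g := fun i => (⟨x i, hxΓ i⟩ : Vt Γ)) hinj).symm
  have h3 : Finset.univ.image (fun i => (⟨x i, hxΓ i⟩ : Vt Γ))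
      = Finset.univ.filter (fun v : Vt Γ => (↑v : ℤ × ℤ) ∈ Finset.univ.image x) := by
    ext v
    simp only [Finset.mem_image, Finset.mem_filter, Finset.mem_univ, true_and]
    constructor
    · rintro ⟨i, rfl⟩; exact ⟨i, rfl⟩
    · rintro ⟨i, hi⟩; exact ⟨i, Subtype.ext hi⟩
  rw [h1, h2, h3]
  unfold mObs
  simp_rw [pow_boole]
  rw [Finset.prod_filter]

lemma corr_eq (β : ℝ) (Γ : Finset (ℤ × ℤ)) {n : ℕ} (x : Fin n → ℤ × ℤ)
    (hx : Function.Injective x) (hxΓ : ∀ i, x i ∈ Γ) :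
    corr β Γ x = S (Jc β Γ) (Ac Γ) (mObs x Γ) / S (Jc β Γ) (Ac Γ) (fun _ => 0) := by
  unfold corr S
  congr 1
  · refine Finset.sum_congr rfl fun ε _ => ?_
    rw [weight_eq, prod_spin_eq Γ x hx hxΓ, mul_comm]
  · refine Finset.sum_congr rfl fun ε _ => ?_
    rw [weight_eq]
    simp

lemma corr_nonneg (β : ℝ) (hβ : 0 ≤ β) (Γ : Finset (ℤ × ℤ)) {n : ℕ} (x : Fin n → ℤ × ℤ)
    (hx : Function.Injective x) (hxΓ : ∀ i, x i ∈ Γ) : 0 ≤ corr β Γ x := by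
  rw [corr_eq β Γ x hx hxΓ]
  exact div_nonneg (S_nonneg (Jc_nonneg β Γ hβ) _ _) (S_zero_pos _ _).le

lemma weight_pos (β : ℝ) (Γ : Finset (ℤ × ℤ)) (ε : Vt Γ → Bool) : 0 < weight β Γ ε :=
  Real.exp_pos _

lemma Z_pos (β : ℝ) (Γ : Finset (ℤ × ℤ)) : 0 < ∑ ε : Vt Γ → Bool, weight β Γ ε :=
  Finset.sum_pos (fun ε _ => weight_pos β Γ ε) Finset.univ_nonempty

end IsingAux

namespace IsingAux
open IsingDecoupling Gks

lemma exponent_split (Λ : Finset (ℤ × ℤ)) {n : ℕ} (Λi : Fin n → Finset (ℤ × ℤ))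
    (hsub : ∀ i, Λi i ⊆ Λ)
    (hdisjP : ∀ i j, i ≠ j → Disjoint (Λi i) (Λi j))
    (hK : ∀ i, ∀ x ∈ Λi i, ∀ y ∈ nbrs x, y ∉ Λi i → ∀ j, y ∉ Λi j)
    (g : ℤ × ℤ → ℝ) (hg1 : ∀ z ∈ Λ, (∀ i, z ∉ Λi i) → g z = 1) :
    (∑ x ∈ Λ, ∑ y ∈ Λ.filter (fun y => y ∈ nbrs x), g x * g y) / 2
      + ∑ x ∈ Λ, (((nbrs x).filter (fun y => y ∉ Λ)).card : ℝ) * g x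
    = ((∑ x ∈ Λ \ Finset.univ.biUnion Λi,
          ((((Λ \ Finset.univ.biUnion Λi).filter (fun y => y ∈ nbrs x)).card : ℝ))) / 2
        + ∑ x ∈ Λ \ Finset.univ.biUnion Λi, (((nbrs x).filter (fun y => y ∉ Λ)).card : ℝ))
      + ∑ i, ((∑ x ∈ Λi i, ∑ y ∈ (Λi i).filter (fun y => y ∈ nbrs x), g x * g y) / 2
        + ∑ x ∈ Λi i, (((nbrs x).filter (fun y => y ∉ Λi i)).card : ℝ) * g x) := by
  classical
  set U : Finset (ℤ × ℤ) := Finset.univ.biUnion Λi with hU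
  set W' : Finset (ℤ × ℤ) := Λ \ U with hW'
  have hUsub : U ⊆ Λ := Finset.biUnion_subset.mpr fun i _ => hsub i
  have hUdisj : ((Finset.univ : Finset (Fin n)) : Set (Fin n)).PairwiseDisjoint Λi :=
    fun i _ j _ hij => hdisjP i j hij
  have hmemU : ∀ z : ℤ × ℤ, z ∈ U ↔ ∃ i, z ∈ Λi i := by
    intro z; simp [hU, Finset.mem_biUnion]
  have hsubU : ∀ i, Λi i ⊆ U := fun i z hz => (hmemU z).mpr ⟨i, hz⟩
  have hgW : ∀ z ∈ W', g z = 1 := by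
    intro z hz
    rw [hW', Finset.mem_sdiff] at hz
    exact hg1 z hz.1 (fun i hi => hz.2 ((hmemU z).mpr ⟨i, hi⟩))
  have hdisjUW : Disjoint U W' := hW' ▸ Finset.disjoint_sdiff
  -- (S1) partition of sums over Λ
  have hsplitΛ : ∀ F : ℤ × ℤ → ℝ,
      ∑ x ∈ Λ, F x = ∑ x ∈ W', F x + ∑ i, ∑ x ∈ Λi i, F x := by
    intro F
    rw [← Finset.sum_sdiff hUsub, ← hW']
    congr 1
    exact Finset.sum_biUnion hUdisj
  -- (S2) row splitting for x in a block
  have hrow : ∀ i, ∀ x ∈ Λi i,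
      ∑ y ∈ Λ.filter (fun y => y ∈ nbrs x), g x * g y
        = (∑ y ∈ (Λi i).filter (fun y => y ∈ nbrs x), g x * g y)
          + ((W'.filter (fun y => y ∈ nbrs x)).card : ℝ) * g x := by
    intro i x hx
    have hfil : Λ.filter (fun y => y ∈ nbrs x)
        = (Λi i).filter (fun y => y ∈ nbrs x) ∪ W'.filter (fun y => y ∈ nbrs x) := by
      ext y
      simp only [Finset.mem_filter, Finset.mem_union, hW', Finset.mem_sdiff]
      constructor
      · rintro ⟨hyΛ, hyn⟩
        by_cases hyi : y ∈ Λi i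
        · exact Or.inl ⟨hyi, hyn⟩
        · refine Or.inr ⟨⟨hyΛ, fun hyU => ?_⟩, hyn⟩
          obtain ⟨j, hj⟩ := (hmemU y).mp hyU
          exact hK i x hx y hyn hyi j hj
      · rintro (⟨h1, h2⟩ | ⟨⟨h1, _⟩, h2⟩)
        exacts [⟨hsub i h1, h2⟩, ⟨h1, h2⟩]
    have hdisjf : Disjoint ((Λi i).filter (fun y => y ∈ nbrs x))
        (W'.filter (fun y => y ∈ nbrs x)) :=
      Finset.disjoint_filter_filter (hdisjUW.mono_left (hsubU i))
    rw [hfil, Finset.sum_union hdisjf]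
    congr 1
    have hone : ∀ y ∈ W'.filter (fun y => y ∈ nbrs x), g x * g y = g x := by
      intro y hy
      rw [hgW y (Finset.mem_filter.mp hy).1, mul_one]
    rw [Finset.sum_congr rfl hone, Finset.sum_const, nsmul_eq_mul]
  -- (S3) field splitting for x in a block
  have hfieldcard : ∀ i, ∀ x ∈ Λi i,
      (((nbrs x).filter (fun y => y ∉ Λi i)).card : ℝ)
        = (((nbrs x).filter (fun y => y ∉ Λ)).card : ℝ)
          + ((W'.filter (fun y => y ∈ nbrs x)).card : ℝ) := by
    intro i x hx
    have hcc : (W'.filter (fun y => y ∈ nbrs x)).card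
        = ((nbrs x).filter (fun y => y ∈ W')).card := by
      rw [Finset.filter_mem_eq_inter, Finset.filter_mem_eq_inter, Finset.inter_comm]
    rw [hcc, ← Nat.cast_add]
    congr 1
    have hdisj2 : Disjoint ((nbrs x).filter (fun y => y ∉ Λ))
        ((nbrs x).filter (fun y => y ∈ W')) := by
      rw [Finset.disjoint_left]
      intro y hy1 hy2
      exact (Finset.mem_filter.mp hy1).2
        (Finset.mem_sdiff.mp (hW' ▸ (Finset.mem_filter.mp hy2).2)).1
    rw [← Finset.card_union_of_disjoint hdisj2]
    congr 1
    ext y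
    simp only [Finset.mem_filter, Finset.mem_union, hW', Finset.mem_sdiff]
    constructor
    · rintro ⟨hyn, hyi⟩
      by_cases hyΛ : y ∈ Λ
      · refine Or.inr ⟨hyn, hyΛ, fun hyU => ?_⟩
        obtain ⟨j, hj⟩ := (hmemU y).mp hyU
        exact hK i x hx y hyn hyi j hj
      · exact Or.inl ⟨hyn, hyΛ⟩
    · rintro (⟨hyn, hyΛ⟩ | ⟨hyn, hyΛ, hyU⟩)
      · exact ⟨hyn, fun hyi => hyΛ (hsub i hyi)⟩
      · exact ⟨hyn, fun hyi => hyU ((hmemU y).mpr ⟨i, hyi⟩)⟩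
  -- (S4) row for x in W'
  have hroWrow : ∀ x ∈ W',
      ∑ y ∈ Λ.filter (fun y => y ∈ nbrs x), g x * g y
        = (∑ i, ∑ y ∈ (Λi i).filter (fun y => y ∈ nbrs x), g y)
          + ((W'.filter (fun y => y ∈ nbrs x)).card : ℝ) := by
    intro x hx
    have h1 : ∀ y ∈ Λ.filter (fun y => y ∈ nbrs x), g x * g y = g y := by
      intro y _
      rw [hgW x hx, one_mul]
    rw [Finset.sum_congr rfl h1]
    have hfil : Λ.filter (fun y => y ∈ nbrs x)
        = U.filter (fun y => y ∈ nbrs x) ∪ W'.filter (fun y => y ∈ nbrs x) := by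
      ext y
      simp only [Finset.mem_filter, Finset.mem_union, hW', Finset.mem_sdiff]
      constructor
      · rintro ⟨h1', h2⟩
        by_cases hyU : y ∈ U
        exacts [Or.inl ⟨hyU, h2⟩, Or.inr ⟨⟨h1', hyU⟩, h2⟩]
      · rintro (⟨h1', h2⟩ | ⟨⟨h1', _⟩, h2⟩)
        exacts [⟨hUsub h1', h2⟩, ⟨h1', h2⟩]
    have hdisjf2 : Disjoint (U.filter (fun y => y ∈ nbrs x))
        (W'.filter (fun y => y ∈ nbrs x)) :=
      Finset.disjoint_filter_filter hdisjUW
    rw [hfil, Finset.sum_union hdisjf2]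
    congr 1
    · rw [hU, Finset.filter_biUnion]
      refine Finset.sum_biUnion ?_
      intro i _ j _ hij
      exact Finset.disjoint_filter_filter (hdisjP i j hij)
    · have hone : ∀ y ∈ W'.filter (fun y => y ∈ nbrs x), g y = 1 := by
        intro y hy
        exact hgW y (Finset.mem_filter.mp hy).1
      rw [Finset.sum_congr rfl hone, Finset.sum_const, nsmul_eq_mul, mul_one]
  -- (S5) swap sum over W' rows of a block
  have hswap : ∀ i : Fin n,
      ∑ x ∈ W', ∑ y ∈ (Λi i).filter (fun y => y ∈ nbrs x), g y
        = ∑ y ∈ Λi i, ((W'.filter (fun z => z ∈ nbrs y)).card : ℝ) * g y := by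
    intro i
    have h1 : ∀ x ∈ W', ∑ y ∈ (Λi i).filter (fun y => y ∈ nbrs x), g y
        = ∑ y ∈ Λi i, if y ∈ nbrs x then g y else 0 :=
      fun x _ => Finset.sum_filter _ _
    rw [Finset.sum_congr rfl h1, Finset.sum_comm]
    refine Finset.sum_congr rfl fun y _ => ?_
    have h2 : ∀ x ∈ W', (if y ∈ nbrs x then g y else 0) = (if x ∈ nbrs y then g y else 0) :=
      fun x _ => if_congr nbrs_symm rfl rfl
    rw [Finset.sum_congr rfl h2, ← Finset.sum_filter, Finset.sum_const, nsmul_eq_mul]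
  -- assembly
  rw [hsplitΛ (fun x => ∑ y ∈ Λ.filter (fun y => y ∈ nbrs x), g x * g y),
      hsplitΛ (fun x => (((nbrs x).filter (fun y => y ∉ Λ)).card : ℝ) * g x)]
  have e1 : ∑ x ∈ W', ∑ y ∈ Λ.filter (fun y => y ∈ nbrs x), g x * g y
      = (∑ i, ∑ y ∈ Λi i, ((W'.filter (fun z => z ∈ nbrs y)).card : ℝ) * g y)
        + ∑ x ∈ W', ((W'.filter (fun y => y ∈ nbrs x)).card : ℝ) := by
    rw [Finset.sum_congr rfl hroWrow, Finset.sum_add_distrib]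
    congr 1
    rw [Finset.sum_comm]
    exact Finset.sum_congr rfl fun i _ => hswap i
  have e2 : ∀ i, ∑ x ∈ Λi i, ∑ y ∈ Λ.filter (fun y => y ∈ nbrs x), g x * g y
      = (∑ x ∈ Λi i, ∑ y ∈ (Λi i).filter (fun y => y ∈ nbrs x), g x * g y)
        + ∑ x ∈ Λi i, ((W'.filter (fun y => y ∈ nbrs x)).card : ℝ) * g x := by
    intro i
    rw [← Finset.sum_add_distrib]
    exact Finset.sum_congr rfl fun x hx => hrow i x hx
  have e3 : ∑ x ∈ W', (((nbrs x).filter (fun y => y ∉ Λ)).card : ℝ) * g x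
      = ∑ x ∈ W', (((nbrs x).filter (fun y => y ∉ Λ)).card : ℝ) :=
    Finset.sum_congr rfl fun x hx => by rw [hgW x hx, mul_one]
  have e4 : ∀ i, ∑ x ∈ Λi i, (((nbrs x).filter (fun y => y ∉ Λi i)).card : ℝ) * g x
      = (∑ x ∈ Λi i, (((nbrs x).filter (fun y => y ∉ Λ)).card : ℝ) * g x)
        + ∑ x ∈ Λi i, ((W'.filter (fun y => y ∈ nbrs x)).card : ℝ) * g x := by
    intro i
    rw [← Finset.sum_add_distrib]
    refine Finset.sum_congr rfl fun x hx => ?_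
    rw [hfieldcard i x hx]
    ring
  rw [e1, e3, Finset.sum_congr rfl (fun i _ => e2 i)]
  conv_rhs => rw [Finset.sum_congr rfl (fun i (_ : i ∈ Finset.univ) => by rw [e4 i])]
  simp only [Finset.sum_add_distrib]
  have hhalf : ∑ i : Fin n,
      (∑ x ∈ Λi i, ∑ y ∈ (Λi i).filter (fun y => y ∈ nbrs x), g x * g y) / 2
      = (∑ i : Fin n, ∑ x ∈ Λi i, ∑ y ∈ (Λi i).filter (fun y => y ∈ nbrs x), g x * g y) / 2 :=
    (Finset.sum_div _ _ _).symm
  have hswsw : ∑ i : Fin n, ∑ y ∈ Λi i, ((W'.filter (fun z => z ∈ nbrs y)).card : ℝ) * g y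
      = ∑ i : Fin n, ∑ x ∈ Λi i, ((W'.filter (fun z => z ∈ nbrs x)).card : ℝ) * g x := rfl
  rw [hhalf] at *
  ring
end IsingAux

namespace IsingAux
open IsingDecoupling Gks

lemma plus_sector_factor (β : ℝ) (Λ : Finset (ℤ × ℤ)) {n : ℕ}
    (Λi : Fin n → Finset (ℤ × ℤ)) (hsub : ∀ i, Λi i ⊆ Λ)
    (huniq : ∀ (j k : Fin n) (z : ℤ × ℤ), z ∈ Λi j → z ∈ Λi k → j = k)
    (hK : ∀ i, ∀ x' ∈ Λi i, ∀ y ∈ nbrs x', y ∉ Λi i → ∀ j, y ∉ Λi j)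
    (F : ∀ i, ({z // z ∈ Λi i} → Bool) → ℝ) :
    ∑ ε ∈ Finset.univ.filter (fun ε : Vt Λ → Bool =>
        ∀ y ∈ Finset.univ.filter
          (fun v : Vt Λ => (↑v : ℤ × ℤ) ∈ Λ \ Finset.univ.biUnion Λi), ε y = true),
      (∏ i, F i (fun z => ε ⟨↑z, hsub i z.2⟩)) * weight β Λ ε
    = Real.exp (β * ((∑ x' ∈ Λ \ Finset.univ.biUnion Λi,
            (((Λ \ Finset.univ.biUnion Λi).filter (fun y => y ∈ nbrs x')).card : ℝ)) / 2
          + ∑ x' ∈ Λ \ Finset.univ.biUnion Λi,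
            (((nbrs x').filter (fun y => y ∉ Λ)).card : ℝ)))
        * ∏ i, ∑ δ : {z // z ∈ Λi i} → Bool, F i δ * weight β (Λi i) δ := by
  classical
  have hdisjP : ∀ i j, i ≠ j → Disjoint (Λi i) (Λi j) := by
    intro i j hij
    rw [Finset.disjoint_left]
    exact fun {z} hz1 hz2 => hij (huniq i j z hz1 hz2)
  have hmemU : ∀ z : ℤ × ℤ, z ∈ Finset.univ.biUnion Λi ↔ ∃ i, z ∈ Λi i := by
    intro z; simp [Finset.mem_biUnion]
  -- the configuration gluing map
  set Φ : (∀ i, {z // z ∈ Λi i} → Bool) → (Vt Λ → Bool) := fun δ v =>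
    if h : ∃ i, (↑v : ℤ × ℤ) ∈ Λi i then δ h.choose ⟨↑v, h.choose_spec⟩ else true with hΦdef
  have hΦmem : ∀ δ (i : Fin n) (z : ℤ × ℤ) (hz : z ∈ Λi i) (hzΛ : z ∈ Λ),
      Φ δ ⟨z, hzΛ⟩ = δ i ⟨z, hz⟩ := by
    intro δ i z hz hzΛ
    have hex : ∃ j, z ∈ Λi j := ⟨i, hz⟩
    show (if h : ∃ j, z ∈ Λi j then δ h.choose ⟨z, h.choose_spec⟩ else true) = δ i ⟨z, hz⟩
    rw [dif_pos hex]
    have hji : hex.choose = i := huniq _ _ z hex.choose_spec hz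
    subst hji
    rfl
  have hΦtrue : ∀ δ (v : Vt Λ), ¬(∃ i, (↑v : ℤ × ℤ) ∈ Λi i) → Φ δ v = true := by
    intro δ v h
    exact dif_neg h
  -- bijection between the plus sector and product configurations
  have hleft : ∀ ε : Vt Λ → Bool, (∀ y ∈ Finset.univ.filter
        (fun v : Vt Λ => (↑v : ℤ × ℤ) ∈ Λ \ Finset.univ.biUnion Λi), ε y = true) →
      Φ (fun i z => ε ⟨↑z, hsub i z.2⟩) = ε := by
    intro ε hε
    funext v
    by_cases h : ∃ i, (↑v : ℤ × ℤ) ∈ Λi i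
    · obtain ⟨i, hi⟩ := h
      exact hΦmem (fun i z => ε ⟨↑z, hsub i z.2⟩) i ↑v hi v.2
    · refine (hΦtrue (fun i z => ε ⟨↑z, hsub i z.2⟩) v h).trans ?_
      refine (hε v ?_).symm
      rw [Finset.mem_filter]
      exact ⟨Finset.mem_univ _, Finset.mem_sdiff.mpr ⟨v.2, fun hU => h ((hmemU _).mp hU)⟩⟩
  have hbij : ∀ H : (Vt Λ → Bool) → ℝ,
      ∑ ε ∈ Finset.univ.filter (fun ε : Vt Λ → Bool =>
          ∀ y ∈ Finset.univ.filter
            (fun v : Vt Λ => (↑v : ℤ × ℤ) ∈ Λ \ Finset.univ.biUnion Λi), ε y = true),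
        H ε
      = ∑ δ : (∀ i, {z // z ∈ Λi i} → Bool), H (Φ δ) := by
    intro H
    refine Finset.sum_nbij' (fun ε => fun i z => ε ⟨↑z, hsub i z.2⟩) Φ
      (fun ε _ => Finset.mem_univ _) ?_ ?_ ?_ ?_
    · -- Φ δ lies in the plus sector
      intro δ _
      rw [Finset.mem_filter]
      refine ⟨Finset.mem_univ _, fun y hy => ?_⟩
      rw [Finset.mem_filter] at hy
      refine hΦtrue δ y (fun hex => ?_)
      obtain ⟨i, hi⟩ := hex
      exact (Finset.mem_sdiff.mp hy.2).2 ((hmemU _).mpr ⟨i, hi⟩)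
    · -- left inverse
      intro ε hε
      rw [Finset.mem_filter] at hε
      exact hleft ε hε.2
    · -- right inverse
      intro δ _
      funext i z
      show Φ δ ⟨↑z, hsub i z.2⟩ = δ i z
      rw [hΦmem δ i ↑z z.2 (hsub i z.2)]
    · intro ε hε
      rw [Finset.mem_filter] at hε
      exact (congrArg H (hleft ε hε.2)).symm
  rw [hbij]
  -- factor the weight for glued configurations
  have hwfac : ∀ δ, weight β Λ (Φ δ)
      = Real.exp (β * ((∑ x' ∈ Λ \ Finset.univ.biUnion Λi,
            (((Λ \ Finset.univ.biUnion Λi).filter (fun y => y ∈ nbrs x')).card : ℝ)) / 2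
          + ∑ x' ∈ Λ \ Finset.univ.biUnion Λi,
            (((nbrs x').filter (fun y => y ∉ Λ)).card : ℝ)))
        * ∏ i, weight β (Λi i) (δ i) := by
    intro δ
    have hg1 : ∀ z ∈ Λ, (∀ i, z ∉ Λi i) → spinAt Λ (Φ δ) z = 1 := by
      intro z hzΛ hzn
      rw [spinAt, dif_pos hzΛ, hΦtrue δ ⟨z, hzΛ⟩ (fun hex => hzn hex.choose hex.choose_spec)]
      simp
    have hgi : ∀ i, ∀ z ∈ Λi i, spinAt (Λi i) (δ i) z = spinAt Λ (Φ δ) z := by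
      intro i z hz
      rw [spinAt, dif_pos hz, spinAt, dif_pos (hsub i hz), hΦmem δ i z hz (hsub i hz)]
    have hsplit := exponent_split Λ Λi hsub hdisjP hK (spinAt Λ (Φ δ)) hg1
    unfold weight
    rw [← Real.exp_sum, ← Real.exp_add]
    congr 1
    have hlhs : β * ((∑ x' ∈ Λ, ∑ y ∈ Λ.filter (fun y => y ∈ nbrs x'),
          spinAt Λ (Φ δ) x' * spinAt Λ (Φ δ) y) / 2)
        + β * ∑ x' ∈ Λ, (((nbrs x').filter (fun y => y ∉ Λ)).card : ℝ) * spinAt Λ (Φ δ) x'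
        = β * (((∑ x' ∈ Λ, ∑ y ∈ Λ.filter (fun y => y ∈ nbrs x'),
          spinAt Λ (Φ δ) x' * spinAt Λ (Φ δ) y)) / 2
          + ∑ x' ∈ Λ, (((nbrs x').filter (fun y => y ∉ Λ)).card : ℝ) * spinAt Λ (Φ δ) x') := by
      ring
    rw [hlhs, hsplit, mul_add, Finset.mul_sum]
    congr 1
    refine Finset.sum_congr rfl fun i _ => ?_
    have hpair : ∑ x' ∈ Λi i, ∑ y ∈ (Λi i).filter (fun y => y ∈ nbrs x'),
          spinAt (Λi i) (δ i) x' * spinAt (Λi i) (δ i) y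
        = ∑ x' ∈ Λi i, ∑ y ∈ (Λi i).filter (fun y => y ∈ nbrs x'),
          spinAt Λ (Φ δ) x' * spinAt Λ (Φ δ) y := by
      refine Finset.sum_congr rfl fun x' hx' => Finset.sum_congr rfl fun y hy => ?_
      rw [hgi i x' hx', hgi i y (Finset.mem_filter.mp hy).1]
    have hfield : ∑ x' ∈ Λi i, (((nbrs x').filter (fun y => y ∉ Λi i)).card : ℝ)
          * spinAt (Λi i) (δ i) x'
        = ∑ x' ∈ Λi i, (((nbrs x').filter (fun y => y ∉ Λi i)).card : ℝ)
          * spinAt Λ (Φ δ) x' := by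
      refine Finset.sum_congr rfl fun x' hx' => ?_
      rw [hgi i x' hx']
    rw [hpair, hfield]
    ring
  -- put everything together with Fubini
  have hterm : ∀ δ : (∀ i, {z // z ∈ Λi i} → Bool),
      (∏ i, F i (fun z => Φ δ ⟨↑z, hsub i z.2⟩)) * weight β Λ (Φ δ)
      = Real.exp (β * ((∑ x' ∈ Λ \ Finset.univ.biUnion Λi,
            (((Λ \ Finset.univ.biUnion Λi).filter (fun y => y ∈ nbrs x')).card : ℝ)) / 2
          + ∑ x' ∈ Λ \ Finset.univ.biUnion Λi,
            (((nbrs x').filter (fun y => y ∉ Λ)).card : ℝ)))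
        * ∏ i, (F i (δ i) * weight β (Λi i) (δ i)) := by
    intro δ
    have hrest : ∀ i, (fun z : {z // z ∈ Λi i} => Φ δ ⟨↑z, hsub i z.2⟩) = δ i := by
      intro i
      funext z
      rw [hΦmem δ i ↑z z.2 (hsub i z.2)]
    have hobs : ∏ i, F i (fun z => Φ δ ⟨↑z, hsub i z.2⟩) = ∏ i, F i (δ i) :=
      Finset.prod_congr rfl fun i _ => by rw [hrest i]
    rw [hobs, hwfac δ, Finset.prod_mul_distrib]
    ring
  rw [Finset.sum_congr rfl fun δ _ => hterm δ, ← Finset.mul_sum]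
  congr 1
  exact (Fintype.prod_sum (fun i δi => F i δi * weight β (Λi i) δi)).symm

end IsingAux


/-- **Decoupling inequality for the Ising model with plus boundary condition.**
Fix `β ≥ 0` and a finite `Λ ⊆ ℤ²`.  If `x₁, …, x_n` are distinct points with
`x_i ∈ Λᵢ ⊆ Λ` and `Λᵢ ∩ (Λⱼ ∪ ∂Λⱼ) = ∅` for `i ≠ j`, then
`0 ≤ E⁺_Λ[σ_{x₁} ⋯ σ_{x_n}] ≤ ∏ᵢ E⁺_{Λᵢ}[σ_{x_i}]`. -/
theorem ising_decoupling_inequality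
    (β : ℝ) (hβ : 0 ≤ β) (Λ : Finset (ℤ × ℤ)) (n : ℕ)
    (x : Fin n → ℤ × ℤ) (hx : Function.Injective x)
    (Λi : Fin n → Finset (ℤ × ℤ))
    (hmem : ∀ i, x i ∈ Λi i) (hsub : ∀ i, Λi i ⊆ Λ)
    (hdisj : ∀ i j, i ≠ j → ∀ z ∈ Λi i, z ∉ Λi j ∧ z ∉ extBd (Λi j)) :
    0 ≤ corr β Λ x ∧
      corr β Λ x ≤ ∏ i, corr β (Λi i) (fun _ : Fin 1 => x i) := by
  classical
  have hxΛ : ∀ i, x i ∈ Λ := fun i => hsub i (hmem i)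
  refine ⟨IsingAux.corr_nonneg β hβ Λ x hx hxΛ, ?_⟩
  have huniq : ∀ (j k : Fin n) (z : ℤ × ℤ), z ∈ Λi j → z ∈ Λi k → j = k := by
    intro j k z hj hk
    by_contra hjk
    exact (hdisj j k hjk z hj).1 hk
  have hKmain : ∀ i, ∀ x' ∈ Λi i, ∀ y ∈ nbrs x', y ∉ Λi i → ∀ j, y ∉ Λi j := by
    intro i x' hx' y hy hyi j hyj
    rcases eq_or_ne j i with rfl | hji
    · exact hyi hyj
    · have h1 := hdisj i j (Ne.symm hji) x' hx'
      exact h1.2 ⟨h1.1, ⟨y, hyj, hy⟩⟩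
  -- the sites of Λ forced to be plus
  set W : Finset (IsingAux.Vt Λ) := Finset.univ.filter
    (fun v : IsingAux.Vt Λ => (↑v : ℤ × ℤ) ∈ Λ \ Finset.univ.biUnion Λi) with hWdef
  -- conditioned unnormalized quantities
  set SPm : ℝ := ∑ ε : IsingAux.Vt Λ → Bool,
      ((∏ i, spinAt Λ ε (x i)) * (∏ y ∈ W, (1 + Gks.sgn (ε y)))) * weight β Λ ε with hSPm
  set SP : ℝ := ∑ ε : IsingAux.Vt Λ → Bool,
      (∏ y ∈ W, (1 + Gks.sgn (ε y))) * weight β Λ ε with hSPdef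
  have hZ0 : 0 < Gks.S (IsingAux.Jc β Λ) (IsingAux.Ac Λ) (fun _ => 0) :=
    Gks.S_zero_pos _ _
  have hSPpos : 0 < SP := by
    rw [hSPdef]
    refine Finset.sum_pos' (fun ε _ => mul_nonneg (Finset.prod_nonneg fun y _ => ?_)
      (IsingAux.weight_pos β Λ ε).le) ⟨(fun _ => true), Finset.mem_univ _, ?_⟩
    · have := Gks.neg_one_le_sgn (ε y)
      linarith
    · refine mul_pos (Finset.prod_pos fun y _ => ?_) (IsingAux.weight_pos β Λ _)
      norm_num [Gks.sgn]
  -- Step A : corr ≤ SPm / SP  (Griffiths II)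
  have stepA : corr β Λ x ≤ SPm / SP := by
    rw [IsingAux.corr_eq β Λ x hx hxΛ, div_le_div_iff₀ hZ0 hSPpos]
    have hSPm_eq : SPm = ∑ T ∈ W.powerset, Gks.S (IsingAux.Jc β Λ) (IsingAux.Ac Λ)
        (fun v => IsingAux.mObs x Λ v + if v ∈ T then 1 else 0) := by
      rw [hSPm, ← Gks.sum_obs_indic_weight]
      refine Finset.sum_congr rfl fun ε _ => ?_
      rw [IsingAux.weight_eq, IsingAux.prod_spin_eq Λ x hx hxΛ]
    have hSP_eq : SP = ∑ T ∈ W.powerset, Gks.S (IsingAux.Jc β Λ) (IsingAux.Ac Λ)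
        (fun v => if v ∈ T then 1 else 0) := by
      rw [hSPdef, ← Gks.sum_indic_weight]
      refine Finset.sum_congr rfl fun ε _ => ?_
      rw [IsingAux.weight_eq]
    rw [hSPm_eq, hSP_eq]
    exact Gks.cond_compare (IsingAux.Jc_nonneg β Λ hβ) _ _ W
  -- collapse of the plus indicator
  have collapse : ∀ G : (IsingAux.Vt Λ → Bool) → ℝ,
      ∑ ε : IsingAux.Vt Λ → Bool, (∏ y ∈ W, (1 + Gks.sgn (ε y))) * G ε
        = (2 : ℝ) ^ W.card * ∑ ε ∈ Finset.univ.filter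
            (fun ε : IsingAux.Vt Λ → Bool => ∀ y ∈ W, ε y = true), G ε := by
    intro G
    rw [← Finset.sum_filter_add_sum_filter_not Finset.univ
      (fun ε : IsingAux.Vt Λ → Bool => ∀ y ∈ W, ε y = true)]
    have h2 : ∑ ε ∈ Finset.univ.filter
        (fun ε : IsingAux.Vt Λ → Bool => ¬ ∀ y ∈ W, ε y = true),
        (∏ y ∈ W, (1 + Gks.sgn (ε y))) * G ε = 0 := by
      refine Finset.sum_eq_zero fun ε hε => ?_
      rw [Finset.mem_filter] at hε
      push_neg at hε
      obtain ⟨y, hyW, hy⟩ := hε.2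
      have hzero : (1 + Gks.sgn (ε y)) = 0 := by
        rw [Bool.eq_false_iff.mpr hy, Gks.sgn_false]
        ring
      rw [Finset.prod_eq_zero hyW hzero, zero_mul]
    rw [h2, add_zero, Finset.mul_sum]
    refine Finset.sum_congr rfl fun ε hε => ?_
    rw [Finset.mem_filter] at hε
    have h3 : ∀ y ∈ W, (1 + Gks.sgn (ε y)) = 2 := by
      intro y hy
      rw [hε.2 y hy, Gks.sgn_true]
      norm_num
    rw [Finset.prod_congr rfl h3, Finset.prod_const]
  -- observable restriction
  have hobs : ∀ (ε : IsingAux.Vt Λ → Bool) (k : Fin n),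
      spinAt Λ ε (x k) = spinAt (Λi k) (fun z => ε ⟨↑z, hsub k z.2⟩) (x k) := by
    intro ε k
    rw [spinAt, spinAt, dif_pos (hxΛ k), dif_pos (hmem k)]
  -- factorization of numerator and denominator
  have hSPm_fac : SPm = (2 : ℝ) ^ W.card *
      (Real.exp (β * ((∑ x' ∈ Λ \ Finset.univ.biUnion Λi,
            (((Λ \ Finset.univ.biUnion Λi).filter (fun y => y ∈ nbrs x')).card : ℝ)) / 2
          + ∑ x' ∈ Λ \ Finset.univ.biUnion Λi,
            (((nbrs x').filter (fun y => y ∉ Λ)).card : ℝ)))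
        * ∏ i, ∑ δ : {z // z ∈ Λi i} → Bool,
            spinAt (Λi i) δ (x i) * weight β (Λi i) δ) := by
    have h1 : SPm = ∑ ε : IsingAux.Vt Λ → Bool,
        (∏ y ∈ W, (1 + Gks.sgn (ε y))) * ((∏ i, spinAt Λ ε (x i)) * weight β Λ ε) := by
      rw [hSPm]
      refine Finset.sum_congr rfl fun ε _ => ?_
      ring
    rw [h1, collapse]
    congr 1
    have h2 := IsingAux.plus_sector_factor β Λ Λi hsub huniq hKmain
      (fun i δ => spinAt (Λi i) δ (x i))
    rw [← h2]
    refine Finset.sum_congr rfl fun ε _ => ?_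
    congr 1
    exact Finset.prod_congr rfl fun k _ => hobs ε k
  have hSP_fac : SP = (2 : ℝ) ^ W.card *
      (Real.exp (β * ((∑ x' ∈ Λ \ Finset.univ.biUnion Λi,
            (((Λ \ Finset.univ.biUnion Λi).filter (fun y => y ∈ nbrs x')).card : ℝ)) / 2
          + ∑ x' ∈ Λ \ Finset.univ.biUnion Λi,
            (((nbrs x').filter (fun y => y ∉ Λ)).card : ℝ)))
        * ∏ i, ∑ δ : {z // z ∈ Λi i} → Bool, weight β (Λi i) δ) := by
    rw [hSPdef, collapse]
    congr 1
    have h2 := IsingAux.plus_sector_factor β Λ Λi hsub huniq hKmain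
      (fun i (δ : {z // z ∈ Λi i} → Bool) => (1 : ℝ))
    simp only [Finset.prod_const_one, one_mul] at h2
    exact h2
  -- conclusion
  have stepB : SPm / SP = ∏ i, corr β (Λi i) (fun _ : Fin 1 => x i) := by
    rw [hSPm_fac, hSP_fac, mul_div_mul_left _ _ (by positivity : (2:ℝ) ^ W.card ≠ 0),
      mul_div_mul_left _ _ (Real.exp_ne_zero _), ← Finset.prod_div_distrib]
    refine Finset.prod_congr rfl fun i _ => ?_
    unfold corr
    congr 1
    refine Finset.sum_congr rfl fun δ _ => ?_
    rw [Fin.prod_univ_one, mul_comm]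
  rw [← stepB]
  exact stepA
end
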